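/- arXiv:1209.3602 — 8 statements merged into one kernel-verified Lean document; each statement's English description precedes it below -/
import Mathlib

section
/- Let Ω ⊆ ℝ^N be an (ε, r₀)-Reifenberg-flat domain, let x ∈ ∂Ω, and for each r ≤ r₀ let ν_r denote a unit normal vector to the hyperplane P(x,r) provided by the definition of Reifenberg-flatness. Then for every M ≥ 1 and every r ≤ r₀/M one has |⟨ν_r, ν_{Mr}⟩| ≥ 1 − (M+1)ε. -/
open Metric MeasureTheory Set Filter
open scoped ENNReal InnerProductSpace NNReal Topology

noncomputable section

/-- An `(ε, r₀)`-Reifenberg-flat domain in `ℝ^N`: a nonempty open set such that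
(i) at every boundary point and every scale `r ≤ r₀` the boundary is `ε r`-close in
Hausdorff distance to a hyperplane through the point, and (ii) at scale `r₀` the two
connected components of the complement of the `2 ε r₀`-neighborhood of the hyperplane
inside the ball lie in `Ω` and in `Ωᶜ` respectively. -/
def IsReifenbergFlat {N : ℕ} (ε r₀ : ℝ) (Ω : Set (EuclideanSpace ℝ (Fin N))) : Prop :=
  Ω.Nonempty ∧ IsOpen Ω ∧
    (∀ x ∈ frontier Ω, ∀ r : ℝ, 0 < r → r ≤ r₀ →
      ∃ ν : EuclideanSpace ℝ (Fin N), ‖ν‖ = 1 ∧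
        Metric.hausdorffDist (frontier Ω ∩ Metric.ball x r)
          ({y | ⟪ν, y - x⟫_ℝ = 0} ∩ Metric.ball x r) ≤ ε * r) ∧
    (∀ x ∈ frontier Ω,
      ∃ ν : EuclideanSpace ℝ (Fin N), ‖ν‖ = 1 ∧
        Metric.hausdorffDist (frontier Ω ∩ Metric.ball x r₀)
          ({y | ⟪ν, y - x⟫_ℝ = 0} ∩ Metric.ball x r₀) ≤ ε * r₀ ∧
        {y | 2 * ε * r₀ ≤ ⟪ν, y - x⟫_ℝ} ∩ Metric.ball x r₀ ⊆ Ω ∧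
        {y | ⟪ν, y - x⟫_ℝ ≤ -(2 * ε * r₀)} ∩ Metric.ball x r₀ ⊆ Ωᶜ)

private lemma aux_sqrt_bound (a d : ℝ) (ha : 0 ≤ a) (hd : 0 ≤ d) (h : 1 - a ^ 2 ≤ d ^ 2) :
    1 - d ≤ a := by
  rcases le_or_gt (1 - d) 0 with h0 | h0
  · linarith
  · nlinarith

/-- **Lemma (angle between approximating hyperplanes at different scales).**
If `Ω` is `(ε, r₀)`-Reifenberg-flat, `x ∈ ∂Ω`, and for each scale `0 < r ≤ r₀` the unit
vector `ν r` is a normal of a hyperplane through `x` realizing the Reifenberg condition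
at scale `r`, then for every `M ≥ 1` and `0 < r ≤ r₀ / M` one has
`|⟪ν r, ν (M r)⟫| ≥ 1 - (M + 1) ε`. -/
theorem angle_lemma {N : ℕ} {ε r₀ : ℝ} (hε : 0 < ε) (hε2 : ε < 1 / 2) (hr₀ : 0 < r₀)
    {Ω : Set (EuclideanSpace ℝ (Fin N))} (hΩ : IsReifenbergFlat ε r₀ Ω)
    {x : EuclideanSpace ℝ (Fin N)} (hx : x ∈ frontier Ω)
    (ν : ℝ → EuclideanSpace ℝ (Fin N))
    (hν : ∀ r : ℝ, 0 < r → r ≤ r₀ → ‖ν r‖ = 1 ∧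
      Metric.hausdorffDist (frontier Ω ∩ Metric.ball x r)
        ({y | ⟪ν r, y - x⟫_ℝ = 0} ∩ Metric.ball x r) ≤ ε * r)
    (M : ℝ) (hM : 1 ≤ M) (r : ℝ) (hr : 0 < r) (hrM : r ≤ r₀ / M) :
    1 - (M + 1) * ε ≤ |⟪ν r, ν (M * r)⟫_ℝ| := by
  have hM0 : (0:ℝ) < M := lt_of_lt_of_le one_pos hM
  have hrr₀ : r ≤ r₀ := hrM.trans (div_le_self hr₀.le hM)
  have hMr : 0 < M * r := by positivity
  have hMrr₀ : M * r ≤ r₀ := by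
    rw [mul_comm]; exact (le_div_iff₀ hM0).mp hrM
  obtain ⟨hν₁, h₁⟩ := hν r hr hrr₀
  obtain ⟨hν₂, h₂⟩ := hν (M * r) hMr hMrr₀
  set n₁ := ν r with hn₁
  set n₂ := ν (M * r) with hn₂
  set c : ℝ := ⟪n₁, n₂⟫_ℝ with hc
  -- membership of x in all four sets
  have hxS₁ : x ∈ frontier Ω ∩ Metric.ball x r := ⟨hx, mem_ball_self hr⟩
  have hxS₂ : x ∈ frontier Ω ∩ Metric.ball x (M * r) := ⟨hx, mem_ball_self hMr⟩
  have hxT₁ : x ∈ {y | ⟪n₁, y - x⟫_ℝ = 0} ∩ Metric.ball x r := by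
    refine ⟨?_, mem_ball_self hr⟩
    simp [Set.mem_setOf_eq]
  have hxT₂ : x ∈ {y | ⟪n₂, y - x⟫_ℝ = 0} ∩ Metric.ball x (M * r) := by
    refine ⟨?_, mem_ball_self hMr⟩
    simp [Set.mem_setOf_eq]
  have hb₁ : EMetric.hausdorffEdist (frontier Ω ∩ Metric.ball x r)
      ({y | ⟪n₁, y - x⟫_ℝ = 0} ∩ Metric.ball x r) ≠ ⊤ :=
    Metric.hausdorffEdist_ne_top_of_nonempty_of_bounded ⟨x, hxS₁⟩ ⟨x, hxT₁⟩
      (Metric.isBounded_ball.subset Set.inter_subset_right)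
      (Metric.isBounded_ball.subset Set.inter_subset_right)
  have hb₂ : EMetric.hausdorffEdist (frontier Ω ∩ Metric.ball x (M * r))
      ({y | ⟪n₂, y - x⟫_ℝ = 0} ∩ Metric.ball x (M * r)) ≠ ⊤ :=
    Metric.hausdorffEdist_ne_top_of_nonempty_of_bounded ⟨x, hxS₂⟩ ⟨x, hxT₂⟩
      (Metric.isBounded_ball.subset Set.inter_subset_right)
      (Metric.isBounded_ball.subset Set.inter_subset_right)
  -- main claim: points on P₁ ∩ B(x,r) are close to P₂
  have key : ∀ y : EuclideanSpace ℝ (Fin N), ⟪n₁, y - x⟫_ℝ = 0 → y ∈ Metric.ball x r →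
      |⟪n₂, y - x⟫_ℝ| ≤ (M + 1) * ε * r := by
    intro y hy hyb
    refine le_of_forall_pos_le_add ?_
    intro η hη
    have hy₁ : y ∈ {z | ⟪n₁, z - x⟫_ℝ = 0} ∩ Metric.ball x r := ⟨hy, hyb⟩
    have hb₁' : EMetric.hausdorffEdist ({z | ⟪n₁, z - x⟫_ℝ = 0} ∩ Metric.ball x r)
        (frontier Ω ∩ Metric.ball x r) ≠ ⊤ := by
      rw [EMetric.hausdorffEdist, Metric.hausdorffEDist_comm]; exact hb₁
    have hinf₁ : Metric.infDist y (frontier Ω ∩ Metric.ball x r) ≤ ε * r := by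
      have := Metric.infDist_le_hausdorffDist_of_mem hy₁ hb₁'
      rw [Metric.hausdorffDist_comm] at this
      exact this.trans h₁
    have hlt₁ : Metric.infDist y (frontier Ω ∩ Metric.ball x r) < ε * r + η / 2 :=
      lt_of_le_of_lt hinf₁ (by linarith)
    obtain ⟨z, hz, hdyz⟩ := (Metric.infDist_lt_iff ⟨x, hxS₁⟩).mp hlt₁
    have hzS₂ : z ∈ frontier Ω ∩ Metric.ball x (M * r) :=
      ⟨hz.1, Metric.ball_subset_ball (le_mul_of_one_le_left hr.le hM) hz.2⟩
    have hinf₂ : Metric.infDist z ({y | ⟪n₂, y - x⟫_ℝ = 0} ∩ Metric.ball x (M * r))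
        ≤ ε * (M * r) := Metric.infDist_le_hausdorffDist_of_mem hzS₂ hb₂ |>.trans h₂
    have hlt₂ : Metric.infDist z ({y | ⟪n₂, y - x⟫_ℝ = 0} ∩ Metric.ball x (M * r))
        < ε * (M * r) + η / 2 := lt_of_le_of_lt hinf₂ (by linarith)
    obtain ⟨p, hp, hdzp⟩ := (Metric.infDist_lt_iff ⟨x, hxT₂⟩).mp hlt₂
    have hpe : ⟪n₂, p - x⟫_ℝ = 0 := hp.1
    have hiner : ⟪n₂, y - p⟫_ℝ = ⟪n₂, y - x⟫_ℝ - ⟪n₂, p - x⟫_ℝ := by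
      rw [show y - p = (y - x) - (p - x) from by abel, inner_sub_right]
    rw [hpe, sub_zero] at hiner
    rw [← hiner]
    calc |⟪n₂, y - p⟫_ℝ| ≤ ‖n₂‖ * ‖y - p‖ := abs_real_inner_le_norm _ _
      _ = ‖y - p‖ := by rw [hν₂, one_mul]
      _ ≤ dist y z + dist z p := by
          rw [← dist_eq_norm]; exact dist_triangle y z p
      _ ≤ (M + 1) * ε * r + η := by nlinarith
  set w : EuclideanSpace ℝ (Fin N) := n₂ - c • n₁ with hw
  by_cases hw0 : w = 0
  · have : n₂ = c • n₁ := by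
      have := sub_eq_zero.mp hw0; linear_combination (norm := module) this
    have h1 : |c| = 1 := by
      have := congrArg norm this
      rw [hν₂, norm_smul, hν₁, mul_one, Real.norm_eq_abs] at this
      exact this.symm
    rw [h1]
    nlinarith
  · have hwn : 0 < ‖w‖ := norm_pos_iff.mpr hw0
    have hn₂n₁ : ⟪n₂, n₁⟫_ℝ = c := by rw [hc, real_inner_comm]
    have hself₁ : ⟪n₁, n₁⟫_ℝ = 1 := by
      rw [real_inner_self_eq_norm_sq, hν₁, one_pow]
    have hself₂ : ⟪n₂, n₂⟫_ℝ = 1 := by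
      rw [real_inner_self_eq_norm_sq, hν₂, one_pow]
    have hn₁w : ⟪n₁, w⟫_ℝ = 0 := by
      rw [hw, inner_sub_right, real_inner_smul_right, hself₁, hc]; ring
    have hn₂w : ⟪n₂, w⟫_ℝ = 1 - c ^ 2 := by
      rw [hw, inner_sub_right, real_inner_smul_right, hn₂n₁, hself₂]; ring
    have hww : ‖w‖ ^ 2 = 1 - c ^ 2 := by
      rw [hw, norm_sub_sq_real, real_inner_smul_right, hn₂n₁, norm_smul, hν₁, hν₂,
        Real.norm_eq_abs, mul_one, sq_abs]
      ring
    -- claim: t * ‖w‖ ≤ (M+1) ε r for all 0 < t < r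
    have claim : ∀ t : ℝ, 0 < t → t < r → t * ‖w‖ ≤ (M + 1) * ε * r := by
      intro t ht htr
      set y : EuclideanSpace ℝ (Fin N) := x + (t * ‖w‖⁻¹) • w with hy
      have hyx : y - x = (t * ‖w‖⁻¹) • w := by rw [hy]; abel
      have h1 : ⟪n₁, y - x⟫_ℝ = 0 := by
        rw [hyx, real_inner_smul_right, hn₁w, mul_zero]
      have h2 : y ∈ Metric.ball x r := by
        rw [Metric.mem_ball, dist_eq_norm, hyx, norm_smul, Real.norm_eq_abs,
          abs_of_pos (by positivity)]
        rw [mul_assoc, inv_mul_cancel₀ hwn.ne', mul_one]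
        exact htr
      have := key y h1 h2
      rw [hyx, real_inner_smul_right, hn₂w, ← hww] at this
      rw [abs_of_nonneg (by positivity)] at this
      calc t * ‖w‖ = t * ‖w‖⁻¹ * ‖w‖ ^ 2 := by
            field_simp
        _ ≤ (M + 1) * ε * r := this
    have hwle : ‖w‖ ≤ (M + 1) * ε := by
      by_contra hcon
      push_neg at hcon
      have hpos : 0 < (M + 1) * ε := by positivity
      set t : ℝ := ((M + 1) * ε * r / ‖w‖ + r) / 2 with ht
      have h1 : (M + 1) * ε * r / ‖w‖ < r := by
        rw [div_lt_iff₀ hwn]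
        nlinarith
      have ht0 : 0 < t := by
        have : 0 < (M + 1) * ε * r / ‖w‖ := by positivity
        rw [ht]; linarith
      have htr : t < r := by rw [ht]; linarith
      have := claim t ht0 htr
      have h2 : (M + 1) * ε * r / ‖w‖ < t := by rw [ht]; linarith
      rw [div_lt_iff₀ hwn] at h2
      linarith
    -- conclude
    have hsq : 1 - c ^ 2 ≤ ((M + 1) * ε) ^ 2 := by
      rw [← hww]
      exact pow_le_pow_left₀ (norm_nonneg w) hwle 2
    exact aux_sqrt_bound |c| ((M + 1) * ε) (abs_nonneg c) (by positivity)
      (by rw [sq_abs]; exact hsq)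
end
end

section
/- Let Ω ⊆ ℝ^N be an (ε, r₀)-Reifenberg-flat domain. Then for every x ∈ ∂Ω and every r ∈ (0, r₀], one of the connected components of B(x,r) ∩ {y : dist(y, P(x,r)) ≥ 2εr} is contained in Ω and the other is contained in ℝ^N∖Ω, where P(x,r) is the hyperplane provided by condition (i) of the definition of Reifenberg-flatness. -/
open Metric MeasureTheory Set Filter
open scoped ENNReal InnerProductSpace NNReal Topology

noncomputable section

namespace ReifenbergAux

variable {F : Type*} [NormedAddCommGroup F] [InnerProductSpace ℝ F]

/-- Basic facts about the point `x + t • ν`. -/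
lemma point_spec {x ν : F} (hν : ‖ν‖ = 1) (t : ℝ) :
    ⟪ν, (x + t • ν) - x⟫_ℝ = t ∧ dist (x + t • ν) x = |t| := by
  have hsub : (x + t • ν) - x = t • ν := by abel
  constructor
  · rw [hsub, real_inner_smul_right, real_inner_self_eq_norm_mul_norm, hν]; ring
  · rw [dist_eq_norm, hsub, norm_smul, hν, mul_one]; rfl

/-- Points of the frontier inside the ball lie in the slab of width `ε ρ` around the
approximating hyperplane. -/
lemma frontier_slab {Ω : Set F} {x ν : F}
    {ε ρ : ℝ} (hε : 0 < ε) (hρ : 0 < ρ) (hν : ‖ν‖ = 1) (hx : x ∈ frontier Ω)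
    (hH : Metric.hausdorffDist (frontier Ω ∩ Metric.ball x ρ)
      ({y | ⟪ν, y - x⟫_ℝ = 0} ∩ Metric.ball x ρ) ≤ ε * ρ) :
    ∀ z ∈ frontier Ω, z ∈ Metric.ball x ρ → |⟪ν, z - x⟫_ℝ| ≤ ε * ρ := by
  intro z hz hzb
  have hxP : x ∈ ({y | ⟪ν, y - x⟫_ℝ = 0} ∩ Metric.ball x ρ) :=
    Set.mem_inter (by simp) (mem_ball_self hρ)
  have hfin : EMetric.hausdorffEdist (frontier Ω ∩ Metric.ball x ρ)
      ({y | ⟪ν, y - x⟫_ℝ = 0} ∩ Metric.ball x ρ) ≠ ⊤ :=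
    Metric.hausdorffEdist_ne_top_of_nonempty_of_bounded
      ⟨x, Set.mem_inter hx (mem_ball_self hρ)⟩ ⟨x, hxP⟩
      (Metric.isBounded_ball.subset inter_subset_right)
      (Metric.isBounded_ball.subset inter_subset_right)
  have h1 : Metric.infDist z ({y | ⟪ν, y - x⟫_ℝ = 0} ∩ Metric.ball x ρ) ≤ ε * ρ :=
    le_trans (Metric.infDist_le_hausdorffDist_of_mem (Set.mem_inter hz hzb) hfin) hH
  have key : ∀ δ : ℝ, 0 < δ → |⟪ν, z - x⟫_ℝ| ≤ ε * ρ + δ := by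
    intro δ hδ
    have h2 : Metric.infDist z ({y | ⟪ν, y - x⟫_ℝ = 0} ∩ Metric.ball x ρ) < ε * ρ + δ :=
      lt_of_le_of_lt h1 (by linarith)
    obtain ⟨p, hp, hdp⟩ := (Metric.infDist_lt_iff ⟨x, hxP⟩).1 h2
    have hsplit : ⟪ν, z - x⟫_ℝ = ⟪ν, z - p⟫_ℝ + ⟪ν, p - x⟫_ℝ := by
      rw [← inner_add_right]
      congr 1
      abel
    have hp0 : ⟪ν, p - x⟫_ℝ = 0 := hp.1
    calc |⟪ν, z - x⟫_ℝ| = |⟪ν, z - p⟫_ℝ| := by rw [hsplit, hp0, add_zero]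
      _ ≤ ‖ν‖ * ‖z - p‖ := abs_real_inner_le_norm ν (z - p)
      _ = dist z p := by rw [hν, one_mul, dist_eq_norm]
      _ ≤ ε * ρ + δ := le_of_lt hdp
  exact le_of_forall_pos_le_add key

/-- Each half-ball region (beyond distance `ε ρ` from the plane) is convex, misses the
frontier, hence lies entirely in `Ω` or entirely outside the closure of `Ω`. -/
lemma classifyA {Ω : Set F} (hΩopen : IsOpen Ω)
    {x ν : F} {ε ρ : ℝ}
    (hslab : ∀ z ∈ frontier Ω, z ∈ Metric.ball x ρ → |⟪ν, z - x⟫_ℝ| ≤ ε * ρ) :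
    ({y | ε * ρ < ⟪ν, y - x⟫_ℝ} ∩ Metric.ball x ρ ⊆ Ω ∨
      {y | ε * ρ < ⟪ν, y - x⟫_ℝ} ∩ Metric.ball x ρ ⊆ (closure Ω)ᶜ) ∧
    ({y | ⟪ν, y - x⟫_ℝ < -(ε * ρ)} ∩ Metric.ball x ρ ⊆ Ω ∨
      {y | ⟪ν, y - x⟫_ℝ < -(ε * ρ)} ∩ Metric.ball x ρ ⊆ (closure Ω)ᶜ) := by
  have hlin : IsLinearMap ℝ (fun y : F => ⟪ν, y⟫_ℝ) :=
    ⟨fun a b => inner_add_right ν a b, fun c y => by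
      rw [real_inner_smul_right, smul_eq_mul]⟩
  have key : ∀ A : Set F, Convex ℝ A →
      (∀ y ∈ A, y ∉ frontier Ω) → (A ⊆ Ω ∨ A ⊆ (closure Ω)ᶜ) := by
    intro A hconv hdisj
    refine IsPreconnected.subset_or_subset hΩopen isClosed_closure.isOpen_compl
      (disjoint_compl_right.mono_left subset_closure) ?_ hconv.isPreconnected
    intro y hy
    by_cases hyc : y ∈ closure Ω
    · left
      by_contra hyn
      have hint : y ∉ interior Ω := by rwa [hΩopen.interior_eq]
      exact hdisj y hy ⟨hyc, hint⟩
    · exact Or.inr hyc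
  constructor
  · refine key _ ?_ ?_
    · refine Convex.inter ?_ (convex_ball x ρ)
      have hset : {y : F | ε * ρ < ⟪ν, y - x⟫_ℝ}
          = {y | ε * ρ + ⟪ν, x⟫_ℝ < ⟪ν, y⟫_ℝ} := by
        ext y
        rw [Set.mem_setOf_eq, Set.mem_setOf_eq, inner_sub_right, lt_sub_iff_add_lt]
      rw [hset]
      exact convex_halfSpace_gt hlin _
    · intro y hy hyf
      exact absurd (hslab y hyf hy.2) (not_le.2 (lt_of_lt_of_le hy.1 (le_abs_self _)))
  · refine key _ ?_ ?_
    · refine Convex.inter ?_ (convex_ball x ρ)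
      have hset : {y : F | ⟪ν, y - x⟫_ℝ < -(ε * ρ)}
          = {y | ⟪ν, y⟫_ℝ < ⟪ν, x⟫_ℝ - ε * ρ} := by
        ext y
        rw [Set.mem_setOf_eq, Set.mem_setOf_eq, inner_sub_right]
        constructor <;> intro h <;> linarith
      rw [hset]
      exact convex_halfSpace_lt hlin _
    · intro y hy hyf
      have h1 : |⟪ν, y - x⟫_ℝ| ≤ ε * ρ := hslab y hyf hy.2
      have h2 : ⟪ν, y - x⟫_ℝ < -(ε * ρ) := hy.1
      have h3 := neg_abs_le (⟪ν, y - x⟫_ℝ)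
      linarith

set_option maxHeartbeats 1000000 in
/-- Core quantitative contradiction: if both `ε r`-caps at scale `r` lie in `S` but the
negative `ε s`-cap at a slightly larger scale `s` misses `S`, we get a contradiction,
assuming the inner product `⟪ν, νs⟫` is nonnegative. -/
lemma core' {ε r s : ℝ} {x ν νs : F} {S : Set F}
    (hε : 0 < ε) (hε2 : ε < 1 / 2) (hr : 0 < r) (hrs : r < s) (hsr : s ≤ 21 / 20 * r)
    (hν : ‖ν‖ = 1) (hνs : ‖νs‖ = 1) (hh0 : 0 ≤ ⟪ν, νs⟫_ℝ)
    (P : ∀ y ∈ Metric.ball x r, ε * r < |⟪ν, y - x⟫_ℝ| → y ∈ S)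
    (Q : ∀ y ∈ Metric.ball x s, ⟪νs, y - x⟫_ℝ < -(ε * s) → y ∉ S) : False := by
  set h : ℝ := ⟪ν, νs⟫_ℝ with hh_def
  have hs0 : 0 < s := lt_trans hr hrs
  have hεs0 : 0 < ε * s := mul_pos hε hs0
  have hinner_self : ⟪ν, ν⟫_ℝ = 1 := by
    rw [real_inner_self_eq_norm_mul_norm, hν]; ring
  have hinner_selfs : ⟪νs, νs⟫_ℝ = 1 := by
    rw [real_inner_self_eq_norm_mul_norm, hνs]; ring
  have hcomm : ⟪νs, ν⟫_ℝ = h := real_inner_comm ν νs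
  have habs : h ≤ 1 := by
    have h1 := abs_real_inner_le_norm ν νs
    rw [hν, hνs, mul_one] at h1
    exact le_trans (le_abs_self _) h1
  -- Step (a): h * r ≤ ε * s
  have hhr : h * r ≤ ε * s := by
    by_contra hc
    push_neg at hc
    have hhpos : 0 < h := by nlinarith
    have h1 : ε * s / h < r := (div_lt_iff₀ hhpos).2 (by nlinarith)
    set t : ℝ := (ε * s / h + r) / 2 with ht_def
    have ht1 : ε * s / h < t := by rw [ht_def]; linarith
    have ht2 : t < r := by rw [ht_def]; linarith
    have hεsh : ε * s ≤ ε * s / h := by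
      rw [le_div_iff₀ hhpos]; nlinarith
    have htpos : 0 < t := by nlinarith
    obtain ⟨hip, hdp⟩ := point_spec (x := x) hν (-t)
    have hpball : x + (-t) • ν ∈ Metric.ball x r := by
      rw [Metric.mem_ball, hdp, abs_neg, abs_of_pos htpos]; exact ht2
    have hPmem : x + (-t) • ν ∈ S := by
      refine P _ hpball ?_
      rw [hip, abs_neg, abs_of_pos htpos]
      nlinarith
    have hips : ⟪νs, (x + (-t) • ν) - x⟫_ℝ = -t * h := by
      have hsub : (x + (-t) • ν) - x = (-t) • ν := by abel
      rw [hsub, real_inner_smul_right, hcomm]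
    refine Q _ (Metric.ball_subset_ball (le_of_lt hrs) hpball) ?_ hPmem
    rw [hips]
    have h2 : ε * s < t * h := (div_lt_iff₀ hhpos).1 ht1
    linarith
  -- consequences
  have hhb : h ≤ 21 / 40 := by nlinarith
  set u := νs - h • ν with hu_def
  have huν : ⟪ν, u⟫_ℝ = 0 := by
    rw [hu_def, inner_sub_right, real_inner_smul_right, hinner_self]; ring
  have huνs : ⟪νs, u⟫_ℝ = 1 - h * h := by
    rw [hu_def, inner_sub_right, real_inner_smul_right, hcomm, hinner_selfs]
  have hu2 : ‖u‖ ^ 2 = 1 - h * h := by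
    rw [← real_inner_self_eq_norm_sq]
    nth_rewrite 1 [hu_def]
    rw [inner_sub_left, real_inner_smul_left, huν, huνs]
    ring
  have hu2pos : 0 < 1 - h * h := by nlinarith
  have hupos : 0 < ‖u‖ := by
    rcases lt_or_eq_of_le (norm_nonneg u) with h' | h'
    · exact h'
    · exfalso
      rw [← h'] at hu2
      simp only [ne_eq, OfNat.ofNat_ne_zero, not_false_eq_true, zero_pow] at hu2
      nlinarith
  have hune : ‖u‖ ≠ 0 := ne_of_gt hupos
  set a : ℝ := 11 / 10 * (ε * r) with ha_def
  set b : ℝ := 4 / 5 * r with hb_def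
  have hapos : 0 < a := by rw [ha_def]; positivity
  have hbpos : 0 < b := by rw [hb_def]; positivity
  set v := (-a) • ν + (-(b * ‖u‖⁻¹)) • u with hv_def
  have hvν : ⟪ν, v⟫_ℝ = -a := by
    rw [hv_def, inner_add_right, real_inner_smul_right, real_inner_smul_right,
      hinner_self, huν]
    ring
  have hinvu : ‖u‖⁻¹ * (1 - h * h) = ‖u‖ := by
    rw [← hu2, pow_two]
    field_simp
  have hvνs : ⟪νs, v⟫_ℝ = -(a * h) - b * ‖u‖ := by
    rw [hv_def, inner_add_right, real_inner_smul_right, real_inner_smul_right,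
      hcomm, huνs]
    linear_combination (-b) * hinvu
  have hnv : ‖v‖ ^ 2 = a ^ 2 + b ^ 2 := by
    have hbu' : b * ‖u‖⁻¹ * ‖u‖ = b := by field_simp
    rw [hv_def, norm_add_sq_real, real_inner_smul_left, real_inner_smul_right, huν,
      norm_smul, norm_smul, hν, mul_one, Real.norm_eq_abs, Real.norm_eq_abs,
      abs_neg, abs_neg, abs_of_pos hapos,
      abs_of_pos (by positivity : (0:ℝ) < b * ‖u‖⁻¹), hbu']
    ring
  have hab : a ^ 2 + b ^ 2 < r ^ 2 := by
    have hεr : ε * r < 1 / 2 * r := by nlinarith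
    rw [ha_def, hb_def]
    nlinarith [sq_nonneg (ε * r), mul_pos hε hr]
  have hvnorm : ‖v‖ < r := by
    refine lt_of_pow_lt_pow_left₀ 2 (le_of_lt hr) ?_
    rw [hnv]; exact hab
  have hyx : (x + v) - x = v := by abel
  have hyball : x + v ∈ Metric.ball x r := by
    rw [Metric.mem_ball, dist_eq_norm, hyx]; exact hvnorm
  have hyS : x + v ∈ S := by
    refine P _ hyball ?_
    rw [hyx, hvν, abs_neg, abs_of_pos hapos]
    rw [ha_def]
    nlinarith
  have hbu : ε * s < b * ‖u‖ := by
    have hq : ε * s < 21 / 40 * r := by nlinarith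
    have hsq : (h * r) ^ 2 ≤ (ε * s) ^ 2 := by
      nlinarith [mul_nonneg hh0 (le_of_lt hr)]
    have h2 : (ε * s) ^ 2 < (b * ‖u‖) ^ 2 := by
      have hexp : (b * ‖u‖) ^ 2 = b ^ 2 * (1 - h * h) := by
        rw [mul_pow, hu2]
      rw [hexp, hb_def]
      nlinarith [sq_nonneg r, sq_nonneg (h * r)]
    exact lt_of_pow_lt_pow_left₀ 2 (by positivity) h2
  refine Q _ (Metric.ball_subset_ball (le_of_lt hrs) hyball) ?_ hyS
  rw [hyx, hvνs]
  nlinarith [mul_nonneg (le_of_lt hapos) hh0]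

/-- Core contradiction, without the sign assumption. -/
lemma core {ε r s : ℝ} {x ν νs : F} {S : Set F}
    (hε : 0 < ε) (hε2 : ε < 1 / 2) (hr : 0 < r) (hrs : r < s) (hsr : s ≤ 21 / 20 * r)
    (hν : ‖ν‖ = 1) (hνs : ‖νs‖ = 1)
    (P : ∀ y ∈ Metric.ball x r, ε * r < |⟪ν, y - x⟫_ℝ| → y ∈ S)
    (Q : ∀ y ∈ Metric.ball x s, ⟪νs, y - x⟫_ℝ < -(ε * s) → y ∉ S) : False := by
  rcases le_or_gt 0 ⟪ν, νs⟫_ℝ with h0 | h0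
  · exact core' hε hε2 hr hrs hsr hν hνs h0 P Q
  · refine core' (ν := -ν) hε hε2 hr hrs hsr (by rw [norm_neg]; exact hν) hνs ?_ ?_ Q
    · rw [inner_neg_left]; linarith
    · intro y hy hlt
      refine P y hy ?_
      rwa [inner_neg_left, abs_neg] at hlt


/-- The strengthened separation property at scale `ρ`. -/
def GoodAt (ε : ℝ) (Ω : Set (EuclideanSpace ℝ (Fin N)))
    (x : EuclideanSpace ℝ (Fin N)) (ρ : ℝ) : Prop :=
  ∃ ν : EuclideanSpace ℝ (Fin N), ‖ν‖ = 1 ∧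
    Metric.hausdorffDist (frontier Ω ∩ Metric.ball x ρ)
      ({y | ⟪ν, y - x⟫_ℝ = 0} ∩ Metric.ball x ρ) ≤ ε * ρ ∧
    {y | ε * ρ < ⟪ν, y - x⟫_ℝ} ∩ Metric.ball x ρ ⊆ Ω ∧
    {y | ⟪ν, y - x⟫_ℝ < -(ε * ρ)} ∩ Metric.ball x ρ ⊆ Ωᶜ

/-- Base case: the given separation at scale `r₀` upgrades to the strengthened form. -/
lemma good_base {ε r₀ : ℝ} (hε : 0 < ε) (hε2 : ε < 1 / 2) (hr₀ : 0 < r₀)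
    {Ω : Set (EuclideanSpace ℝ (Fin N))} (hΩopen : IsOpen Ω)
    {x : EuclideanSpace ℝ (Fin N)} (hx : x ∈ frontier Ω)
    (hsep : ∃ ν : EuclideanSpace ℝ (Fin N), ‖ν‖ = 1 ∧
      Metric.hausdorffDist (frontier Ω ∩ Metric.ball x r₀)
        ({y | ⟪ν, y - x⟫_ℝ = 0} ∩ Metric.ball x r₀) ≤ ε * r₀ ∧
      {y | 2 * ε * r₀ ≤ ⟪ν, y - x⟫_ℝ} ∩ Metric.ball x r₀ ⊆ Ω ∧
      {y | ⟪ν, y - x⟫_ℝ ≤ -(2 * ε * r₀)} ∩ Metric.ball x r₀ ⊆ Ωᶜ) :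
    GoodAt ε Ω x r₀ := by
  obtain ⟨ν, hν, hH, hCp, hCm⟩ := hsep
  have hslab := frontier_slab hε hr₀ hν hx hH
  obtain ⟨hclsp, hclsm⟩ := classifyA hΩopen hslab
  set t : ℝ := (1 + 2 * ε) / 2 * r₀ with ht_def
  have ht0 : 0 < t := by rw [ht_def]; positivity
  have htr : t < r₀ := by rw [ht_def]; nlinarith
  have htε : ε * r₀ < t := by rw [ht_def]; nlinarith
  have ht2ε : 2 * ε * r₀ ≤ t := by rw [ht_def]; nlinarith
  obtain ⟨hip, hdp⟩ := point_spec (x := x) hν t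
  obtain ⟨hiq, hdq⟩ := point_spec (x := x) hν (-t)
  have hpball : x + t • ν ∈ Metric.ball x r₀ := by
    rw [mem_ball, hdp, abs_of_pos ht0]; exact htr
  have hqball : x + (-t) • ν ∈ Metric.ball x r₀ := by
    rw [mem_ball, hdq, abs_neg, abs_of_pos ht0]; exact htr
  have hpΩ : x + t • ν ∈ Ω := hCp ⟨by rw [mem_setOf_eq, hip]; exact ht2ε, hpball⟩
  have hqΩc : x + (-t) • ν ∈ Ωᶜ := hCm ⟨by rw [mem_setOf_eq, hiq]; linarith, hqball⟩
  have hAp : {y | ε * r₀ < ⟪ν, y - x⟫_ℝ} ∩ Metric.ball x r₀ ⊆ Ω := by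
    rcases hclsp with h' | h'
    · exact h'
    · exfalso
      have hmem : x + t • ν ∈ {y | ε * r₀ < ⟪ν, y - x⟫_ℝ} ∩ Metric.ball x r₀ :=
        ⟨by rw [mem_setOf_eq, hip]; exact htε, hpball⟩
      exact h' hmem (subset_closure hpΩ)
  have hAm : {y | ⟪ν, y - x⟫_ℝ < -(ε * r₀)} ∩ Metric.ball x r₀ ⊆ Ωᶜ := by
    rcases hclsm with h' | h'
    · exfalso
      have hmem : x + (-t) • ν ∈ {y | ⟪ν, y - x⟫_ℝ < -(ε * r₀)} ∩ Metric.ball x r₀ :=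
        ⟨by rw [mem_setOf_eq, hiq]; linarith, hqball⟩
      exact hqΩc (h' hmem)
    · exact h'.trans (compl_subset_compl.2 subset_closure)
  exact ⟨ν, hν, hH, hAp, hAm⟩

/-- Inductive step: the strengthened separation descends from scale `s` to a slightly
smaller scale `r`. -/
lemma good_step {ε r₀ : ℝ} (hε : 0 < ε) (hε2 : ε < 1 / 2)
    {Ω : Set (EuclideanSpace ℝ (Fin N))} (hΩopen : IsOpen Ω)
    (hflat : ∀ x ∈ frontier Ω, ∀ r : ℝ, 0 < r → r ≤ r₀ →
      ∃ ν : EuclideanSpace ℝ (Fin N), ‖ν‖ = 1 ∧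
        Metric.hausdorffDist (frontier Ω ∩ Metric.ball x r)
          ({y | ⟪ν, y - x⟫_ℝ = 0} ∩ Metric.ball x r) ≤ ε * r)
    {x : EuclideanSpace ℝ (Fin N)} (hx : x ∈ frontier Ω)
    {r s : ℝ} (hr : 0 < r) (hrs : r < s) (hsr : s ≤ 21 / 20 * r) (hsr₀ : s ≤ r₀)
    (hgs : GoodAt ε Ω x s) : GoodAt ε Ω x r := by
  obtain ⟨νs, hνs, _, hSp, hSm⟩ := hgs
  obtain ⟨ν, hν, hH⟩ := hflat x hx r hr (le_trans (le_of_lt hrs) hsr₀)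
  have hslab := frontier_slab hε hr hν hx hH
  obtain ⟨hclsp, hclsm⟩ := classifyA hΩopen hslab
  have hextc : (closure Ω)ᶜ ⊆ Ωᶜ := compl_subset_compl.2 subset_closure
  rcases hclsp with hpInΩ | hpc <;> rcases hclsm with hmInΩ | hmc
  · -- both caps in Ω : contradiction
    exfalso
    refine core (x := x) (S := Ω) hε hε2 hr hrs hsr hν hνs ?_ ?_
    · intro y hyb hy
      rcases lt_abs.1 hy with h' | h'
      · exact hpInΩ ⟨h', hyb⟩
      · exact hmInΩ ⟨show ⟪ν, y - x⟫_ℝ < -(ε * r) by linarith, hyb⟩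
    · intro y hyb hlt hyΩ
      exact hSm ⟨hlt, hyb⟩ hyΩ
  · -- good case with ν
    exact ⟨ν, hν, hH, hpInΩ, hmc.trans hextc⟩
  · -- good case with -ν
    refine ⟨-ν, by rw [norm_neg]; exact hν, ?_, ?_, ?_⟩
    · have hset : {y : EuclideanSpace ℝ (Fin N) | ⟪-ν, y - x⟫_ℝ = 0}
          = {y | ⟪ν, y - x⟫_ℝ = 0} := by
        ext y; rw [mem_setOf_eq, mem_setOf_eq, inner_neg_left, neg_eq_zero]
      rw [hset]; exact hH
    · have hset : {y : EuclideanSpace ℝ (Fin N) | ε * r < ⟪-ν, y - x⟫_ℝ}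
          = {y | ⟪ν, y - x⟫_ℝ < -(ε * r)} := by
        ext y
        rw [mem_setOf_eq, mem_setOf_eq, inner_neg_left]
        constructor <;> intro h' <;> linarith
      rw [hset]; exact hmInΩ
    · have hset : {y : EuclideanSpace ℝ (Fin N) | ⟪-ν, y - x⟫_ℝ < -(ε * r)}
          = {y | ε * r < ⟪ν, y - x⟫_ℝ} := by
        ext y
        rw [mem_setOf_eq, mem_setOf_eq, inner_neg_left]
        constructor <;> intro h' <;> linarith
      rw [hset]; exact hpc.trans hextc
  · -- both caps outside : contradiction
    exfalso
    refine core (x := x) (νs := -νs) (S := (closure Ω)ᶜ) hε hε2 hr hrs hsr hν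
      (by rw [norm_neg]; exact hνs) ?_ ?_
    · intro y hyb hy
      rcases lt_abs.1 hy with h' | h'
      · exact hpc ⟨h', hyb⟩
      · exact hmc ⟨show ⟪ν, y - x⟫_ℝ < -(ε * r) by linarith, hyb⟩
    · intro y hyb hlt hyc
      rw [inner_neg_left] at hlt
      have hyΩ : y ∈ Ω := hSp ⟨show ε * s < ⟪νs, y - x⟫_ℝ by linarith, hyb⟩
      exact hyc (subset_closure hyΩ)

end ReifenbergAux

/-- **Lemma (separation property at all scales).**
If `Ω` is `(ε, r₀)`-Reifenberg-flat, then for every `x ∈ ∂Ω` and every `r ∈ (0, r₀]`,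
there is a hyperplane through `x` realizing the Reifenberg condition (i) at scale `r`
such that, of the two connected components of
`B(x,r) ∩ {y : dist(y, P(x,r)) ≥ 2 ε r}`, one is contained in `Ω` and the other in `Ωᶜ`. -/
theorem separation_at_all_scales {N : ℕ} {ε r₀ : ℝ}
    (hε : 0 < ε) (hε2 : ε < 1 / 2) (hr₀ : 0 < r₀)
    {Ω : Set (EuclideanSpace ℝ (Fin N))} (hΩ : IsReifenbergFlat ε r₀ Ω) :
    ∀ x ∈ frontier Ω, ∀ r : ℝ, 0 < r → r ≤ r₀ →
      ∃ ν : EuclideanSpace ℝ (Fin N), ‖ν‖ = 1 ∧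
        Metric.hausdorffDist (frontier Ω ∩ Metric.ball x r)
          ({y | ⟪ν, y - x⟫_ℝ = 0} ∩ Metric.ball x r) ≤ ε * r ∧
        {y | 2 * ε * r ≤ ⟪ν, y - x⟫_ℝ} ∩ Metric.ball x r ⊆ Ω ∧
        {y | ⟪ν, y - x⟫_ℝ ≤ -(2 * ε * r)} ∩ Metric.ball x r ⊆ Ωᶜ := by
  obtain ⟨hne, hΩopen, hflat, hsep⟩ := hΩ
  intro x hx r hrpos hrle
  -- strengthened separation at all scales of the form covered by the induction
  have hgood : ∀ n : ℕ, ∀ ρ : ℝ, 0 < ρ → ρ ≤ r₀ → r₀ * (20 / 21) ^ n ≤ ρ →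
      ReifenbergAux.GoodAt ε Ω x ρ := by
    intro n
    induction n with
    | zero =>
      intro ρ hρ hρle hρge
      simp only [pow_zero, mul_one] at hρge
      have : ρ = r₀ := le_antisymm hρle hρge
      subst this
      exact ReifenbergAux.good_base hε hε2 hρ hΩopen hx (hsep x hx)
    | succ n ih =>
      intro ρ hρ hρle hρge
      by_cases hcase : r₀ * (20 / 21) ^ n ≤ ρ
      · exact ih ρ hρ hρle hcase
      · push_neg at hcase
        have hpow : (0:ℝ) < (20 / 21 : ℝ) ^ n := by positivity
        have hρlt : ρ < r₀ := by
          have h1 : (20 / 21 : ℝ) ^ n ≤ 1 := pow_le_one₀ (by norm_num) (by norm_num)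
          nlinarith
        set s : ℝ := min (21 / 20 * ρ) r₀ with hs_def
        have hs1 : s ≤ 21 / 20 * ρ := min_le_left _ _
        have hs2 : s ≤ r₀ := min_le_right _ _
        have hρs : ρ < s := lt_min (by nlinarith) hρlt
        have hslow : r₀ * (20 / 21) ^ n ≤ s := by
          refine le_min ?_ ?_
          · have : r₀ * (20 / 21) ^ (n + 1) ≤ ρ := hρge
            rw [pow_succ] at this
            nlinarith
          · have h1 : (20 / 21 : ℝ) ^ n ≤ 1 := pow_le_one₀ (by norm_num) (by norm_num)
            nlinarith
        have hgs := ih s (lt_trans hρ hρs) hs2 hslow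
        exact ReifenbergAux.good_step hε hε2 hΩopen hflat hx hρ hρs hs1 hs2 hgs
  -- choose n with r₀ * (20/21)^n ≤ r
  obtain ⟨n, hn⟩ := exists_pow_lt_of_lt_one (x := r / r₀) (by positivity)
    (by norm_num : (20 / 21 : ℝ) < 1)
  have hrn : r₀ * (20 / 21) ^ n ≤ r := by
    have h1 : r₀ * (20 / 21) ^ n < r₀ * (r / r₀) := by
      exact mul_lt_mul_of_pos_left hn hr₀
    rw [mul_div_cancel₀ _ (ne_of_gt hr₀)] at h1
    exact le_of_lt h1
  obtain ⟨ν, hν, hH, hAp, hAm⟩ := hgood n r hrpos hrle hrn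
  refine ⟨ν, hν, hH, ?_, ?_⟩
  · intro y hy
    refine hAp ⟨?_, hy.2⟩
    have := hy.1
    rw [mem_setOf_eq] at this ⊢
    nlinarith
  · intro y hy
    refine hAm ⟨?_, hy.2⟩
    have := hy.1
    rw [mem_setOf_eq] at this ⊢
    nlinarith
end
end

section
/- If Ω ⊆ ℝ^N is an (ε, r₀)-Reifenberg-flat domain for some r₀ > 0 and some ε with 0 < ε < 1/2, then rad(Ω) ≥ r₀/4; that is, Ω contains an open ball of radius r₀/4. -/
open Metric MeasureTheory Set Filter
open scoped ENNReal InnerProductSpace NNReal Topology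

noncomputable section

/-- The outer radius `Rad(Ω) = inf_{x ∈ Ω} sup_{y ∈ Ω} d(x,y)` (extended-real valued). -/
def outerRad {N : ℕ} (Ω : Set (EuclideanSpace ℝ (Fin N))) : ℝ≥0∞ :=
  ⨅ x ∈ Ω, ⨆ y ∈ Ω, edist x y

/-- The inner radius `rad(Ω) = sup_{x ∈ Ω} sup {r > 0 : B(x,r) ⊆ Ω}` (extended-real valued). -/
def innerRad {N : ℕ} (Ω : Set (EuclideanSpace ℝ (Fin N))) : ℝ≥0∞ :=
  ⨆ x ∈ Ω, sSup {r : ℝ≥0∞ | 0 < r ∧ EMetric.ball x r ⊆ Ω}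

lemma cross_frontier {X : Type*} [TopologicalSpace X] {s t : Set X}
    (hs : IsPreconnected s) (h1 : (s ∩ t).Nonempty) (h2 : (s \ t).Nonempty) :
    (s ∩ frontier t).Nonempty := by
  by_contra hemp
  rw [Set.not_nonempty_iff_eq_empty] at hemp
  have hsub : s ⊆ interior t ∪ (closure t)ᶜ := by
    intro x hx
    by_cases hc : x ∈ closure t
    · by_cases hi : x ∈ interior t
      · exact Or.inl hi
      · exact absurd (Set.eq_empty_iff_forall_notMem.1 hemp x ⟨hx, hc, hi⟩) (by simp)
    · exact Or.inr hc
  obtain ⟨z, hz⟩ := hs (interior t) (closure t)ᶜ isOpen_interior isClosed_closure.isOpen_compl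
    hsub
    (by obtain ⟨x, hxs, hxt⟩ := h1
        exact ⟨x, hxs, (hsub hxs).resolve_right (fun h => h (subset_closure hxt))⟩)
    (by obtain ⟨x, hxs, hxt⟩ := h2
        exact ⟨x, hxs, (hsub hxs).resolve_left (fun h => hxt (interior_subset h))⟩)
  exact (disjoint_compl_right.mono_left interior_subset_closure).ne_of_mem hz.2.1 hz.2.2 rfl

lemma ball_le_innerRad {N : ℕ} {Ω : Set (EuclideanSpace ℝ (Fin N))}
    {x : EuclideanSpace ℝ (Fin N)} {r : ℝ} (hr : 0 < r) (h : Metric.ball x r ⊆ Ω) :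
    ENNReal.ofReal r ≤ innerRad Ω := by
  have hx : x ∈ Ω := h (Metric.mem_ball_self hr)
  have h1 : ENNReal.ofReal r ≤ sSup {s : ℝ≥0∞ | 0 < s ∧ EMetric.ball x s ⊆ Ω} :=
    le_sSup ⟨ENNReal.ofReal_pos.2 hr, by show Metric.eball x _ ⊆ Ω; rw [Metric.emetric_ball]; exact h⟩
  exact h1.trans (le_iSup₂ (f := fun y (_ : y ∈ Ω) =>
    sSup {s : ℝ≥0∞ | 0 < s ∧ EMetric.ball y s ⊆ Ω}) x hx)

/-- **Lemma (Reifenberg-flat domains contain a ball of radius `r₀ / 4`).**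
If `Ω` is an `(ε, r₀)`-Reifenberg-flat domain with `0 < ε < 1/2` and `r₀ > 0`, then
`rad(Ω) ≥ r₀ / 4`; indeed `Ω` contains an open ball of radius `r₀ / 4`. -/
theorem innerRad_ge_of_reifenberg {N : ℕ} {ε r₀ : ℝ}
    (hε : 0 < ε) (hε2 : ε < 1 / 2) (hr₀ : 0 < r₀)
    {Ω : Set (EuclideanSpace ℝ (Fin N))} (hΩ : IsReifenbergFlat ε r₀ Ω) :
    ENNReal.ofReal (r₀ / 4) ≤ innerRad Ω ∧
    ∃ x : EuclideanSpace ℝ (Fin N), Metric.ball x (r₀ / 4) ⊆ Ω := by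
  obtain ⟨hne, hopen, _, hflat⟩ := hΩ
  have hr4 : (0:ℝ) < r₀ / 4 := by linarith
  suffices h : ∃ x : EuclideanSpace ℝ (Fin N), Metric.ball x (r₀ / 4) ⊆ Ω by
    obtain ⟨x, hx⟩ := h
    exact ⟨ball_le_innerRad hr4 hx, x, hx⟩
  by_cases hfr : frontier Ω = ∅
  · -- Ω clopen, hence univ
    have hΩuniv : Ω = univ :=
      (isClopen_iff_frontier_eq_empty.2 hfr).eq_univ hne
    obtain ⟨x, _⟩ := hne
    exact ⟨x, by rw [hΩuniv]; exact subset_univ _⟩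
  · obtain ⟨x, hx⟩ := Set.nonempty_iff_ne_empty.2 hfr
    obtain ⟨ν, hν, hH, hcap, -⟩ := hflat x hx
    set z : EuclideanSpace ℝ (Fin N) := x + (3 * r₀ / 4) • ν with hz
    refine ⟨z, fun y hy => ?_⟩
    by_contra hyΩ
    -- a reference point in the cap, hence in Ω
    set p : EuclideanSpace ℝ (Fin N) := x + ((1/2 + ε) * r₀) • ν with hp
    have hνν : ⟪ν, ν⟫_ℝ = 1 := by
      rw [real_inner_self_eq_norm_sq, hν]; norm_num
    have hpx : ⟪ν, p - x⟫_ℝ = (1/2 + ε) * r₀ := by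
      rw [hp]; simp [inner_smul_right, hνν, hν]
    have hpball : p ∈ Metric.ball x r₀ := by
      rw [Metric.mem_ball, dist_eq_norm, hp]
      simp only [add_sub_cancel_left, norm_smul, hν, mul_one]
      rw [Real.norm_eq_abs, abs_of_pos (by nlinarith)]
      nlinarith
    have hpΩ : p ∈ Ω := hcap ⟨by rw [Set.mem_setOf_eq, hpx]; nlinarith, hpball⟩
    -- inner product bound for y
    have hyz : ‖y - z‖ < r₀ / 4 := by rwa [← dist_eq_norm, ← Metric.mem_ball]
    have hyx : ⟪ν, y - x⟫_ℝ > r₀ / 2 := by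
      have h1 : y - x = (y - z) + (3 * r₀ / 4) • ν := by rw [hz]; abel
      have h2 : ⟪ν, y - z⟫_ℝ > -(r₀/4) := by
        have h3 := abs_real_inner_le_norm ν (y - z)
        rw [hν, one_mul] at h3
        have h4 := (abs_le.1 h3).1
        linarith
      rw [h1, inner_add_right, inner_smul_right, hνν]
      linarith
    have hyball : y ∈ Metric.ball x r₀ := by
      rw [Metric.mem_ball, dist_eq_norm]
      have : y - x = (y - z) + (3 * r₀ / 4) • ν := by rw [hz]; abel
      rw [this]
      calc ‖(y - z) + (3 * r₀ / 4) • ν‖ ≤ ‖y - z‖ + ‖(3 * r₀ / 4) • ν‖ := norm_add_le _ _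
        _ < r₀ / 4 + 3 * r₀ / 4 := by
            rw [norm_smul, hν, mul_one, Real.norm_eq_abs, abs_of_pos (by linarith)]
            linarith
        _ = r₀ := by ring
    -- get a frontier point on the segment [y, p]
    obtain ⟨w, hwseg, hwfr⟩ := cross_frontier (convex_segment y p).isPreconnected
      ⟨p, right_mem_segment ℝ y p, hpΩ⟩ ⟨y, left_mem_segment ℝ y p, hyΩ⟩
    obtain ⟨a, b, ha, hb, hab, hw⟩ := hwseg
    have hwball : w ∈ Metric.ball x r₀ := by
      rw [← hw]; exact (convex_ball x r₀) hyball hpball ha hb hab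
    have hwx : ⟪ν, w - x⟫_ℝ > ε * r₀ := by
      have h1 : w - x = a • (y - x) + b • (p - x) := by
        rw [← hw]; linear_combination (norm := module) hab • x
      rw [h1, inner_add_right, inner_smul_right, inner_smul_right, hpx]
      have hεr : ε * r₀ < r₀ / 2 := by nlinarith
      have t1 : a * (r₀ / 2) ≤ a * ⟪ν, y - x⟫_ℝ := mul_le_mul_of_nonneg_left hyx.le ha
      have t2 : b * (r₀ / 2) ≤ b * ((1/2 + ε) * r₀) := mul_le_mul_of_nonneg_left (by nlinarith) hb
      have hsum : a * (r₀ / 2) + b * (r₀ / 2) = r₀ / 2 := by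
        rw [← add_mul, hab, one_mul]
      linarith
    -- contradiction via Hausdorff distance
    set P : Set (EuclideanSpace ℝ (Fin N)) := {q | ⟪ν, q - x⟫_ℝ = 0} ∩ Metric.ball x r₀
    have hPne : P.Nonempty := ⟨x, Set.mem_inter (by simp) (Metric.mem_ball_self hr₀)⟩
    have hFne : (frontier Ω ∩ Metric.ball x r₀).Nonempty :=
      ⟨x, Set.mem_inter hx (Metric.mem_ball_self hr₀)⟩
    have hEdist : EMetric.hausdorffEdist (frontier Ω ∩ Metric.ball x r₀) P ≠ ⊤ :=
      Metric.hausdorffEdist_ne_top_of_nonempty_of_bounded hFne hPne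
        ((Metric.isBounded_ball).subset inter_subset_right)
        ((Metric.isBounded_ball).subset inter_subset_right)
    have hinf : Metric.infDist w P ≤ ε * r₀ :=
      le_trans (Metric.infDist_le_hausdorffDist_of_mem (Set.mem_inter hwfr hwball) hEdist) hH
    have hlt : Metric.infDist w P < ⟪ν, w - x⟫_ℝ := lt_of_le_of_lt hinf hwx
    obtain ⟨q, hqP, hq⟩ := (Metric.infDist_lt_iff hPne).1 hlt
    have hq2 : ⟪ν, w - x⟫_ℝ ≤ dist w q := by
      have h0 : ⟪ν, q - x⟫_ℝ = 0 := hqP.1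
      have h1 : ⟪ν, w - q⟫_ℝ = ⟪ν, w - x⟫_ℝ := by
        have : w - q = (w - x) - (q - x) := by abel
        rw [this, inner_sub_right, h0, sub_zero]
      calc ⟪ν, w - x⟫_ℝ = ⟪ν, w - q⟫_ℝ := h1.symm
        _ ≤ |⟪ν, w - q⟫_ℝ| := le_abs_self _
        _ ≤ ‖ν‖ * ‖w - q‖ := abs_real_inner_le_norm _ _
        _ = dist w q := by rw [hν, one_mul, dist_eq_norm]
    linarith
end
end

section
/- Let Ω ⊆ ℝ^N be a bounded (ε, r₀)-Reifenberg-flat domain with ε ≤ 20^{−N}. Then Ω has only finitely many connected components, and their number n satisfies n ≤ (20^N/ω_N)·|Ω|/r₀^N, where |Ω| is the Lebesgue measure of Ω and ω_N the Lebesgue measure of the unit ball in ℝ^N. -/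
open Metric MeasureTheory Set Filter
open scoped ENNReal InnerProductSpace NNReal Topology

noncomputable section

namespace ReifenbergAux

variable {N : ℕ}

local notation "E" => EuclideanSpace ℝ (Fin N)

/-- The single-scale improvement step: from a point of `Ω` at small distance `d` from the
complement, produce a point in the same connected component at distance at least
`min (r₀/20) (5/4 * d)` from the complement. -/
lemma step {ε r₀ : ℝ} (hε : 0 < ε) (hε20 : ε ≤ 1 / 20) (hr₀ : 0 < r₀)
    {Ω : Set E} (ho : IsOpen Ω)
    (hflat : ∀ x ∈ frontier Ω, ∀ r : ℝ, 0 < r → r ≤ r₀ →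
      ∃ ν : E, ‖ν‖ = 1 ∧
        Metric.hausdorffDist (frontier Ω ∩ Metric.ball x r)
          ({y | ⟪ν, y - x⟫_ℝ = 0} ∩ Metric.ball x r) ≤ ε * r)
    {y : E} (hy : y ∈ Ω) (hne : Ωᶜ.Nonempty)
    (hdlt : infDist y Ωᶜ < r₀ / 20) :
    ∃ y', y' ∈ connectedComponentIn Ω y ∧
      min (r₀ / 20) (5 / 4 * infDist y Ωᶜ) ≤ infDist y' Ωᶜ := by
  have hclosed : IsClosed Ωᶜ := ho.isClosed_compl
  set d : ℝ := infDist y Ωᶜ with hd_def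
  have hd0 : 0 < d := by
    rw [hd_def]
    exact (hclosed.notMem_iff_infDist_pos hne).1 (by simpa using hy)
  -- nearest point z of the complement
  obtain ⟨z, hzc, hdz⟩ := hclosed.exists_infDist_eq_dist hne y
  rw [← hd_def] at hdz
  have hyz : ‖y - z‖ = d := by rw [hdz, dist_eq_norm]
  -- z is on the frontier of Ω
  have hzcl : z ∈ closure Ω := by
    rw [Metric.mem_closure_iff]
    intro δ hδ
    set t : ℝ := min (δ / (2 * d)) (1 / 2) with ht_def
    have ht0 : 0 < t := lt_min (by positivity) (by norm_num)
    have ht1 : t ≤ 1 / 2 := min_le_right _ _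
    refine ⟨z + t • (y - z), ?_, ?_⟩
    · by_contra hw
      have hw' : z + t • (y - z) ∈ Ωᶜ := hw
      have : d ≤ dist y (z + t • (y - z)) := infDist_le_dist_of_mem hw'
      have heq : y - (z + t • (y - z)) = (1 - t) • (y - z) := by
        rw [sub_smul, one_smul]; abel
      rw [dist_eq_norm, heq, norm_smul, hyz] at this
      have h1t : ‖(1 : ℝ) - t‖ = 1 - t := by
        rw [Real.norm_eq_abs, abs_of_pos (by linarith)]
      rw [h1t] at this
      nlinarith
    · rw [dist_eq_norm]
      have : ‖z - (z + t • (y - z))‖ = t * d := by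
        have : z - (z + t • (y - z)) = (-t) • (y - z) := by
          rw [neg_smul]; abel
        rw [this, norm_smul, hyz, Real.norm_eq_abs, abs_neg, abs_of_pos ht0]
      rw [this]
      have htd : t * d ≤ δ / 2 := by
        have : t ≤ δ / (2 * d) := min_le_left _ _
        calc t * d ≤ δ / (2 * d) * d := by nlinarith
          _ = δ / 2 := by field_simp
      linarith
  have hzf : z ∈ frontier Ω := by
    rw [frontier, ho.interior_eq]
    exact ⟨hzcl, hzc⟩
  -- choice of the scale r
  obtain ⟨r, hr0, hrle, hεr, h2d, hmin⟩ :
      ∃ r : ℝ, 0 < r ∧ r ≤ r₀ ∧ ε * r < d / 2 ∧ 2 * d < r ∧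
        min (r₀ / 20) (5 / 4 * d) ≤ r / 4 := by
    by_cases hcase : 2 * ε * r₀ < d
    · exact ⟨r₀, hr₀, le_refl _, by linarith, by linarith, by
        calc min (r₀ / 20) (5 / 4 * d) ≤ r₀ / 20 := min_le_left _ _
          _ ≤ r₀ / 4 := by linarith⟩
    · push_neg at hcase
      refine ⟨d / (4 * ε), by positivity, ?_, ?_, ?_, ?_⟩
      · calc d / (4 * ε) ≤ 2 * ε * r₀ / (4 * ε) := by
              apply div_le_div_of_nonneg_right hcase (by positivity) |>.trans_eq rfl
          _ = r₀ / 2 := by field_simp; ring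
          _ ≤ r₀ := by linarith
      · rw [mul_div_assoc']
        rw [div_lt_div_iff₀ (by positivity) (by norm_num)]
        nlinarith
      · rw [lt_div_iff₀ (by positivity)]
        nlinarith
      · have : 5 / 4 * d ≤ d / (4 * ε) / 4 := by
          rw [le_div_iff₀ (by norm_num), div_mul_eq_mul_div, le_div_iff₀ (by positivity)]
          nlinarith
        exact (min_le_right _ _).trans this
  have hεr20 : ε * r ≤ r / 20 := by
    have h := mul_le_mul_of_nonneg_right hε20 hr0.le
    linarith
  -- flatness at scale r
  obtain ⟨ν, hν, hH⟩ := hflat z hzf r hr0 hrle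
  set P : Set E := {w | ⟪ν, w - z⟫_ℝ = 0} with hP_def
  have hzP : z ∈ P ∩ ball z r := ⟨by simp [hP_def], mem_ball_self hr0⟩
  have hzF : z ∈ frontier Ω ∩ ball z r := ⟨hzf, mem_ball_self hr0⟩
  have hfin : EMetric.hausdorffEdist (frontier Ω ∩ ball z r) (P ∩ ball z r) ≠ ⊤ :=
    hausdorffEdist_ne_top_of_nonempty_of_bounded ⟨z, hzF⟩ ⟨z, hzP⟩
      (isBounded_ball.subset inter_subset_right)
      (isBounded_ball.subset inter_subset_right)
  -- frontier points in the ball are close to the hyperplane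
  have hA : ∀ w ∈ frontier Ω ∩ ball z r, |⟪ν, w - z⟫_ℝ| ≤ ε * r := by
    intro w hw
    have h1 : infDist w (P ∩ ball z r) ≤ ε * r :=
      (infDist_le_hausdorffDist_of_mem hw hfin).trans hH
    refine le_trans ?_ h1
    by_contra hcon
    push_neg at hcon
    rw [infDist_lt_iff ⟨z, hzP⟩] at hcon
    obtain ⟨p, hp, hdp⟩ := hcon
    have hp0 : ⟪ν, p - z⟫_ℝ = 0 := hp.1
    have hb : |⟪ν, w - p⟫_ℝ| ≤ dist w p := by
      calc |⟪ν, w - p⟫_ℝ| ≤ ‖ν‖ * ‖w - p‖ := abs_real_inner_le_norm _ _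
        _ = dist w p := by rw [hν, one_mul, dist_eq_norm]
    have heq : ⟪ν, w - p⟫_ℝ = ⟪ν, w - z⟫_ℝ := by
      have : w - p = (w - z) - (p - z) := by abel
      rw [this, inner_sub_right, hp0, sub_zero]
    rw [heq] at hb
    linarith
  -- lower bound on the inner product at y
  have hνν : ⟪ν, ν⟫_ℝ = 1 := by
    have := real_inner_self_eq_norm_mul_norm ν
    rw [hν] at this; simpa using this
  set s : ℝ := ⟪ν, y - z⟫_ℝ with hs_def
  have hs_le : |s| ≤ d := by
    calc |s| ≤ ‖ν‖ * ‖y - z‖ := abs_real_inner_le_norm _ _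
      _ = d := by rw [hν, one_mul, hyz]
  have hs_big : ε * r < |s| := by
    set p : E := y - s • ν with hp_def
    have hpP : p ∈ P := by
      simp only [hP_def, mem_setOf_eq, hp_def]
      have : y - s • ν - z = (y - z) - s • ν := by abel
      rw [this, inner_sub_right, real_inner_smul_right, hνν, ← hs_def]
      ring
    have hpb : p ∈ ball z r := by
      rw [mem_ball, dist_eq_norm]
      have : p - z = (y - z) - s • ν := by rw [hp_def]; abel
      calc ‖p - z‖ = ‖(y - z) - s • ν‖ := by rw [this]
        _ ≤ ‖y - z‖ + ‖s • ν‖ := norm_sub_le _ _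
        _ = d + |s| := by rw [hyz, norm_smul, hν, mul_one, Real.norm_eq_abs]
        _ ≤ 2 * d := by linarith
        _ < r := h2d
    set η : ℝ := (d - 2 * (ε * r)) / 2 with hη_def
    have hη : 0 < η := by rw [hη_def]; linarith
    have hH' : hausdorffDist (P ∩ ball z r) (frontier Ω ∩ ball z r) < ε * r + η := by
      rw [hausdorffDist_comm]
      linarith
    have hfin' : EMetric.hausdorffEdist (P ∩ ball z r) (frontier Ω ∩ ball z r) ≠ ⊤ := by
      unfold EMetric.hausdorffEdist at hfin ⊢; rwa [Metric.hausdorffEDist_comm] at hfin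
    obtain ⟨w, hwF, hpw⟩ := exists_dist_lt_of_hausdorffDist_lt
      (s := P ∩ ball z r) (t := frontier Ω ∩ ball z r) ⟨hpP, hpb⟩ hH' hfin'
    have hwc : w ∈ Ωᶜ := by
      intro hwΩ
      have := hwF.1
      rw [frontier, ho.interior_eq] at this
      exact this.2 hwΩ
    have hdw : d ≤ dist y w := infDist_le_dist_of_mem hwc
    have hyp : dist y p = |s| := by
      rw [dist_eq_norm, hp_def]
      have : y - (y - s • ν) = s • ν := by abel
      rw [this, norm_smul, hν, mul_one, Real.norm_eq_abs]
    have : d ≤ |s| + (ε * r + η) := by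
      calc d ≤ dist y w := hdw
        _ ≤ dist y p + dist p w := dist_triangle _ _ _
        _ ≤ |s| + (ε * r + η) := by rw [hyp]; linarith
    rw [hη_def] at this
    linarith
  -- orientation
  obtain ⟨σ, hσ1, hσσ, hσy, hσA⟩ :
      ∃ σ : E, ‖σ‖ = 1 ∧ ⟪σ, σ⟫_ℝ = 1 ∧ ε * r < ⟪σ, y - z⟫_ℝ ∧
        ∀ w ∈ frontier Ω ∩ ball z r, |⟪σ, w - z⟫_ℝ| ≤ ε * r := by
    rcases le_or_gt 0 s with hs | hs
    · exact ⟨ν, hν, hνν, by rwa [abs_of_nonneg hs] at hs_big, hA⟩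
    · refine ⟨-ν, by rwa [norm_neg], by rw [inner_neg_neg]; exact hνν, ?_, ?_⟩
      · have : ⟪-ν, y - z⟫_ℝ = -s := by rw [inner_neg_left, hs_def]
        rw [this]
        rwa [abs_of_neg hs] at hs_big
      · intro w hw
        have : ⟪-ν, w - z⟫_ℝ = -⟪ν, w - z⟫_ℝ := by rw [inner_neg_left]
        rw [this, abs_neg]
        exact hA w hw
  -- the half-ball S on the good side
  set S : Set E := {w | ε * r < ⟪σ, w - z⟫_ℝ} ∩ ball z r with hS_def
  have hSconv : Convex ℝ S := by
    have hlin : IsLinearMap ℝ (fun w : E => ⟪σ, w⟫_ℝ) :=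
      ⟨fun u v => inner_add_right _ _ _, fun c u => real_inner_smul_right _ _ _⟩
    have : S = {w : E | ε * r + ⟪σ, z⟫_ℝ < ⟪σ, w⟫_ℝ} ∩ ball z r := by
      rw [hS_def]
      ext w
      simp only [mem_inter_iff, mem_setOf_eq, inner_sub_right]
      constructor
      · rintro ⟨h1, h2⟩; exact ⟨by linarith, h2⟩
      · rintro ⟨h1, h2⟩; exact ⟨by linarith, h2⟩
    rw [this]
    exact (convex_halfSpace_gt hlin _).inter (convex_ball _ _)
  have hyS : y ∈ S := ⟨hσy, by rw [mem_ball, ← hdz]; linarith⟩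
  have hSfr : ∀ w ∈ S, w ∉ frontier Ω := by
    intro w hw hwf
    have h1 := hσA w ⟨hwf, hw.2⟩
    have h2 : ε * r < ⟪σ, w - z⟫_ℝ := hw.1
    have h3 := le_abs_self ⟪σ, w - z⟫_ℝ
    linarith
  have hSΩ : S ⊆ Ω := by
    apply hSconv.isPreconnected.subset_left_of_subset_union ho isOpen_interior
      (disjoint_compl_right.mono_right interior_subset) ?_ ⟨y, hyS, hy⟩
    intro w hw
    by_cases hwΩ : w ∈ Ω
    · exact Or.inl hwΩ
    · right
      by_cases hwcl : w ∈ closure Ω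
      · exact absurd ⟨hwcl, by rwa [ho.interior_eq]⟩ (hSfr w hw)
      · rw [interior_compl]
        exact hwcl
  have hScomp : S ⊆ connectedComponentIn Ω y :=
    hSconv.isPreconnected.subset_connectedComponentIn hyS hSΩ
  -- the good point c
  set c : E := z + (r / 2) • σ with hc_def
  have hcz : c - z = (r / 2) • σ := by rw [hc_def]; abel
  have hcS : c ∈ S := by
    constructor
    · show ε * r < ⟪σ, c - z⟫_ℝ
      rw [hcz, real_inner_smul_right, hσσ, mul_one]
      linarith
    · rw [mem_ball, dist_eq_norm, hcz, norm_smul, hσ1, mul_one, Real.norm_eq_abs,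
        abs_of_pos (by linarith)]
      linarith
  have hinf : r / 4 ≤ infDist c Ωᶜ := by
    by_contra hcon
    push_neg at hcon
    rw [infDist_lt_iff hne] at hcon
    obtain ⟨w, hw, hcw⟩ := hcon
    apply hw
    apply hSΩ
    constructor
    · show ε * r < ⟪σ, w - z⟫_ℝ
      have hwz : w - z = (w - c) + (c - z) := by abel
      rw [hwz, inner_add_right, hcz, real_inner_smul_right, hσσ, mul_one]
      have hb : |⟪σ, w - c⟫_ℝ| ≤ ‖w - c‖ := by
        calc |⟪σ, w - c⟫_ℝ| ≤ ‖σ‖ * ‖w - c‖ := abs_real_inner_le_norm _ _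
          _ = ‖w - c‖ := by rw [hσ1, one_mul]
      have hwc : ‖w - c‖ < r / 4 := by rwa [dist_comm, dist_eq_norm] at hcw
      linarith [neg_abs_le ⟪σ, w - c⟫_ℝ]
    · rw [mem_ball, dist_eq_norm]
      have hwz : w - z = (w - c) + (c - z) := by abel
      rw [hwz]
      calc ‖(w - c) + (c - z)‖ ≤ ‖w - c‖ + ‖c - z‖ := norm_add_le _ _
        _ < r / 4 + r / 2 := by
            have h1 : ‖w - c‖ < r / 4 := by rwa [dist_comm, dist_eq_norm] at hcw
            have h2 : ‖c - z‖ = r / 2 := by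
              rw [hcz, norm_smul, hσ1, mul_one, Real.norm_eq_abs, abs_of_pos (by linarith)]
            linarith
        _ < r := by linarith
  exact ⟨c, hScomp hcS, hmin.trans hinf⟩

/-- Every point of a Reifenberg-flat domain lies in a connected component containing a ball
of radius `r₀ / 20`. -/
lemma exists_ball {ε r₀ : ℝ} (hε : 0 < ε) (hε20 : ε ≤ 1 / 20) (hr₀ : 0 < r₀)
    {Ω : Set E} (ho : IsOpen Ω)
    (hflat : ∀ x ∈ frontier Ω, ∀ r : ℝ, 0 < r → r ≤ r₀ →
      ∃ ν : E, ‖ν‖ = 1 ∧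
        Metric.hausdorffDist (frontier Ω ∩ Metric.ball x r)
          ({y | ⟪ν, y - x⟫_ℝ = 0} ∩ Metric.ball x r) ≤ ε * r)
    {x : E} (hx : x ∈ Ω) :
    ∃ c : E, ball c (r₀ / 20) ⊆ connectedComponentIn Ω x := by
  rcases eq_empty_or_nonempty Ωᶜ with hemp | hne
  · -- Ω = univ
    have hΩu : Ω = univ := by
      rw [← compl_empty_iff, hemp]
    refine ⟨x, ?_⟩
    have : IsPreconnected (ball x (r₀ / 20)) := (convex_ball x _).isPreconnected
    refine this.subset_connectedComponentIn (mem_ball_self (by linarith)) ?_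
    rw [hΩu]
    exact subset_univ _
  · have hclosed : IsClosed Ωᶜ := ho.isClosed_compl
    -- iterate the step lemma
    have key : ∀ k : ℕ, ∃ y, y ∈ connectedComponentIn Ω x ∧
        min (r₀ / 20) ((5 / 4) ^ k * infDist x Ωᶜ) ≤ infDist y Ωᶜ := by
      intro k
      induction k with
      | zero =>
          exact ⟨x, mem_connectedComponentIn hx, by
            simpa using min_le_right (r₀ / 20) (infDist x Ωᶜ)⟩
      | succ k ih =>
          obtain ⟨y, hyU, hyd⟩ := ih
          have hyΩ : y ∈ Ω := connectedComponentIn_subset Ω x hyU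
          rcases le_or_gt (r₀ / 20) (infDist y Ωᶜ) with hge | hlt
          · exact ⟨y, hyU, (min_le_left _ _).trans hge⟩
          · have hd_lower : (5 / 4) ^ k * infDist x Ωᶜ ≤ infDist y Ωᶜ := by
              rcases min_cases (r₀ / 20) ((5 / 4) ^ k * infDist x Ωᶜ) with ⟨heq, hle⟩ | ⟨heq, hle⟩
              · rw [heq] at hyd; linarith
              · rwa [heq] at hyd
            obtain ⟨y', hy'U, hy'd⟩ := step hε hε20 hr₀ ho hflat hyΩ hne hlt
            refine ⟨y', ?_, ?_⟩
            · rw [connectedComponentIn_eq hyU]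
              exact hy'U
            · refine le_trans ?_ hy'd
              apply min_le_min (le_refl _)
              calc (5 / 4) ^ (k + 1) * infDist x Ωᶜ = 5 / 4 * ((5 / 4) ^ k * infDist x Ωᶜ) := by
                    ring
                _ ≤ 5 / 4 * infDist y Ωᶜ := by nlinarith
    -- choose k large enough
    have hd0 : 0 < infDist x Ωᶜ :=
      (hclosed.notMem_iff_infDist_pos hne).1 (by simpa using hx)
    obtain ⟨k, hk⟩ := pow_unbounded_of_one_lt ((r₀ / 20) / infDist x Ωᶜ) (by norm_num : (1:ℝ) < 5 / 4)
    have hk' : r₀ / 20 ≤ (5 / 4) ^ k * infDist x Ωᶜ := by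
      rw [div_lt_iff₀ hd0] at hk
      linarith
    obtain ⟨y, hyU, hyd⟩ := key k
    have hy20 : r₀ / 20 ≤ infDist y Ωᶜ := by
      rw [min_eq_left hk'] at hyd
      exact hyd
    refine ⟨y, ?_⟩
    have hball : ball y (r₀ / 20) ⊆ Ω := by
      intro w hw
      by_contra hwc
      have : infDist y Ωᶜ ≤ dist y w := infDist_le_dist_of_mem hwc
      rw [dist_comm] at this
      rw [mem_ball] at hw
      linarith [hy20]
    have hpre : IsPreconnected (ball y (r₀ / 20)) := (convex_ball y _).isPreconnected
    have := hpre.subset_connectedComponentIn (mem_ball_self (by linarith)) hball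
    rwa [← connectedComponentIn_eq hyU] at this

end ReifenbergAux

/-- **Proposition (finitely many connected components, with a quantitative bound).**
Let `Ω ⊆ ℝ^N` be a bounded `(ε, r₀)`-Reifenberg-flat domain with `ε ≤ 20^{-N}`. Then
the family of connected components of `Ω` is finite and its cardinality `n` satisfies
`n ≤ (20^N / ω_N) * |Ω| / r₀^N`, where `ω_N` is the volume of the unit ball. -/
theorem finitely_many_components {N : ℕ} {ε r₀ : ℝ}
    (hε : 0 < ε) (hε2 : ε < 1 / 2) (hε' : ε ≤ 1 / 20 ^ N) (hr₀ : 0 < r₀)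
    {Ω : Set (EuclideanSpace ℝ (Fin N))} (hΩ : IsReifenbergFlat ε r₀ Ω)
    (hbdd : Bornology.IsBounded Ω) :
    Set.Finite {U : Set (EuclideanSpace ℝ (Fin N)) | ∃ x ∈ Ω, U = connectedComponentIn Ω x} ∧
    (Set.ncard {U : Set (EuclideanSpace ℝ (Fin N)) | ∃ x ∈ Ω, U = connectedComponentIn Ω x} : ℝ) ≤
      (20 : ℝ) ^ N / (volume (Metric.ball (0 : EuclideanSpace ℝ (Fin N)) 1)).toReal *
        ((volume Ω).toReal / r₀ ^ N) := by
  obtain ⟨hΩne, ho, hflat, hsep⟩ := hΩ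
  set 𝒞 : Set (Set (EuclideanSpace ℝ (Fin N))) :=
    {U | ∃ x ∈ Ω, U = connectedComponentIn Ω x} with h𝒞_def
  -- ε ≤ 1/20 in the relevant case
  -- each component contains a ball of radius r₀/20
  have hball : ∀ U ∈ 𝒞, ∃ c, ball c (r₀ / 20) ⊆ U := by
    intro U hU
    obtain ⟨x, hx, rfl⟩ := hU
    rcases eq_empty_or_nonempty Ωᶜ with hemp | hne
    · refine ⟨x, ?_⟩
      have hΩu : Ω = univ := by rw [← compl_empty_iff, hemp]
      exact ((convex_ball x _).isPreconnected).subset_connectedComponentIn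
        (mem_ball_self (by linarith)) (by rw [hΩu]; exact subset_univ _)
    · -- N ≥ 1 here, hence ε ≤ 1/20
      have hN : 1 ≤ N := by
        by_contra hN
        push_neg at hN
        interval_cases N
        obtain ⟨p, hp⟩ := hΩne
        obtain ⟨q, hq⟩ := hne
        exact hq (by rwa [Subsingleton.elim q p])
      have hε20 : ε ≤ 1 / 20 := by
        refine hε'.trans ?_
        have h1 : (20 : ℝ) ≤ 20 ^ N := by
          calc (20 : ℝ) = 20 ^ 1 := (pow_one _).symm
            _ ≤ 20 ^ N := pow_le_pow_right₀ (by norm_num) hN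
        rw [div_le_div_iff₀ (by positivity) (by norm_num)]
        linarith
      exact ReifenbergAux.exists_ball hε hε20 hr₀ ho hflat hx
  -- basic measure quantities
  set ω : ℝ≥0∞ := volume (Metric.ball (0 : EuclideanSpace ℝ (Fin N)) 1) with hω_def
  set v : ℝ≥0∞ := volume (Metric.ball (0 : EuclideanSpace ℝ (Fin N)) (r₀ / 20)) with hv_def
  have hr20 : (0:ℝ) < r₀ / 20 := by linarith
  have hv_eq : v = ENNReal.ofReal ((r₀ / 20) ^ N) * ω := by
    rw [hv_def, hω_def, Measure.addHaar_ball_of_pos _ _ hr20, finrank_euclideanSpace_fin]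
  have hv_pos : 0 < v := by
    rw [hv_def]; exact measure_ball_pos _ _ hr20
  have hv_top : v < ⊤ := by rw [hv_def]; exact measure_ball_lt_top
  have hω_pos : 0 < ω := by rw [hω_def]; exact measure_ball_pos _ _ one_pos
  have hω_top : ω < ⊤ := by rw [hω_def]; exact measure_ball_lt_top
  have hμΩ_top : volume Ω < ⊤ := hbdd.measure_lt_top
  -- each component has measure at least v
  have hmeas : ∀ U ∈ 𝒞, v ≤ volume U := by
    intro U hU
    obtain ⟨c, hc⟩ := hball U hU
    calc v = volume (ball c (r₀ / 20)) := by
          rw [hv_def, Measure.addHaar_ball_center volume c]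
      _ ≤ volume U := measure_mono hc
  have hopen : ∀ U ∈ 𝒞, IsOpen U := by
    rintro U ⟨x, hx, rfl⟩
    exact ho.connectedComponentIn
  have hsub : ∀ U ∈ 𝒞, U ⊆ Ω := by
    rintro U ⟨x, hx, rfl⟩
    exact connectedComponentIn_subset Ω x
  have hdisj : 𝒞.PairwiseDisjoint id := by
    rintro U ⟨x, hx, rfl⟩ V ⟨x', hx', rfl⟩ hUV
    rw [Function.onFun, disjoint_left]
    intro w hwU hwV
    exact hUV (by rw [connectedComponentIn_eq hwU, connectedComponentIn_eq hwV])
  -- finite subsets bound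
  have hcard : ∀ t : Finset (Set (EuclideanSpace ℝ (Fin N))), ↑t ⊆ 𝒞 →
      (t.card : ℝ≥0∞) * v ≤ volume Ω := by
    intro t ht
    have h1 : (t.card : ℝ≥0∞) * v = ∑ _U ∈ t, v := by
      rw [Finset.sum_const, nsmul_eq_mul]
    rw [h1]
    calc ∑ U ∈ t, v ≤ ∑ U ∈ t, volume U :=
          Finset.sum_le_sum fun U hU => hmeas U (ht hU)
      _ = volume (⋃ U ∈ t, U) :=
          (measure_biUnion_finset (hdisj.subset ht)
            (fun U hU => (hopen U (ht hU)).measurableSet)).symm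
      _ ≤ volume Ω := by
          apply measure_mono
          intro w hw
          simp only [mem_iUnion] at hw
          obtain ⟨U, hU, hwU⟩ := hw
          exact hsub U (ht hU) hwU
  -- finiteness
  have hfin : 𝒞.Finite := by
    by_contra hinf
    have hinf' : 𝒞.Infinite := hinf
    obtain ⟨n, hn⟩ := ENNReal.exists_nat_gt (ENNReal.div_lt_top hμΩ_top.ne hv_pos.ne').ne
    have hlt : volume Ω < (n : ℝ≥0∞) * v := by
      rw [ENNReal.div_lt_iff (Or.inl hv_pos.ne') (Or.inl hv_top.ne)] at hn
      exact hn
    obtain ⟨t, htsub, htcard⟩ := hinf'.exists_subset_card_eq n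
    have := hcard t htsub
    rw [htcard] at this
    exact absurd this (not_le.mpr hlt)
  refine ⟨hfin, ?_⟩
  -- cardinality bound
  have hn : (𝒞.ncard : ℝ≥0∞) * v ≤ volume Ω := by
    have h := hcard hfin.toFinset (by simp)
    rwa [Set.ncard_eq_toFinset_card 𝒞 hfin]

  -- pass to real numbers
  have hnv_top : (𝒞.ncard : ℝ≥0∞) * v ≠ ⊤ := by
    exact ENNReal.mul_ne_top (ENNReal.natCast_ne_top _) hv_top.ne
  have hreal : (𝒞.ncard : ℝ) * ((r₀ / 20) ^ N * ω.toReal) ≤ (volume Ω).toReal := by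
    have h1 := ENNReal.toReal_mono hμΩ_top.ne hn
    rw [ENNReal.toReal_mul, hv_eq, ENNReal.toReal_mul, ENNReal.toReal_ofReal (by positivity),
      ENNReal.toReal_natCast] at h1
    exact h1
  have hωR : 0 < ω.toReal := ENNReal.toReal_pos hω_pos.ne' hω_top.ne
  have hfact : (20 : ℝ) ^ N / ω.toReal * ((volume Ω).toReal / r₀ ^ N) =
      (volume Ω).toReal / ((r₀ / 20) ^ N * ω.toReal) := by
    rw [div_pow]
    field_simp
  rw [hfact, le_div_iff₀ (by positivity)]
  exact hreal

end
end

section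
/- Let Ω ⊆ ℝ^N be a bounded (ε, r₀)-Reifenberg-flat domain with ε ≤ 20^{−N}, and let U_i and U_j be two distinct connected components of Ω. Then for every z ∈ ∂U_i one has d(z, U_j) > r₀/70. -/
open Metric MeasureTheory Set Filter
open scoped ENNReal InnerProductSpace NNReal Topology

noncomputable section
set_option maxHeartbeats 1000000
set_option linter.unusedVariables false

variable {N : ℕ}

local notation "E" => EuclideanSpace ℝ (Fin N)

lemma my_le_infDist {s : Set E} {x : E} {c : ℝ} (hs : s.Nonempty)
    (h : ∀ y ∈ s, c ≤ dist x y) : c ≤ Metric.infDist x s := by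
  by_contra h'
  push_neg at h'
  obtain ⟨y, hy, hlt⟩ := (Metric.infDist_lt_iff hs).1 h'
  exact absurd (h y hy) (not_le.2 hlt)

lemma my_connected_subset {Ω S : Set E} (hΩo : IsOpen Ω) (hS : IsPreconnected S)
    (hdisj : ∀ p ∈ S, p ∉ frontier Ω) {w : E} (hmem : w ∈ S) (hw : w ∈ Ω) : S ⊆ Ω := by
  refine hS.subset_left_of_subset_union hΩo (isClosed_closure (s := Ω)).isOpen_compl
    (disjoint_compl_right.mono_left subset_closure) (fun p hp => ?_) ⟨w, hmem, hw⟩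
  by_cases hc : p ∈ closure Ω
  · left
    have := hdisj p hp
    rw [frontier_eq_closure_inter_closure] at this
    by_contra hpΩ
    exact this ⟨hc, subset_closure (hpΩ : p ∈ Ωᶜ)⟩
  · exact Or.inr hc

lemma my_same_comp {Ω S : Set E} (hS : IsPreconnected S) (hSub : S ⊆ Ω) {a b : E}
    (ha : a ∈ S) (hb : b ∈ S) :
    connectedComponentIn Ω a = connectedComponentIn Ω b :=
  connectedComponentIn_eq (hS.subset_connectedComponentIn ha hSub hb)

lemma inner_le_dist_plane {ν x a p : E} (hν : ‖ν‖ = 1) (hp : ⟪ν, p - x⟫_ℝ = 0) :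
    |⟪ν, a - x⟫_ℝ| ≤ dist a p := by
  have : ⟪ν, a - x⟫_ℝ = ⟪ν, a - p⟫_ℝ + ⟪ν, p - x⟫_ℝ := by
    rw [← inner_add_right, sub_add_sub_cancel]
  rw [this, hp, add_zero, dist_eq_norm]
  calc |⟪ν, a - p⟫_ℝ| ≤ ‖ν‖ * ‖a - p‖ := abs_real_inner_le_norm _ _
  _ = ‖a - p‖ := by rw [hν, one_mul]


-- x on the plane and in the ball
lemma x_mem_plane_ball {ν x : E} {r : ℝ} (hr : 0 < r) :
    x ∈ {y : E | ⟪ν, y - x⟫_ℝ = 0} ∩ Metric.ball x r :=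
  ⟨by simp, Metric.mem_ball_self hr⟩

lemma flat_edist_ne_top {F : Set E} {ν x : E} {r : ℝ} (hr : 0 < r) (hx : x ∈ F) :
    EMetric.hausdorffEdist (F ∩ Metric.ball x r) ({y : E | ⟪ν, y - x⟫_ℝ = 0} ∩ Metric.ball x r) ≠ ⊤ :=
  Metric.hausdorffEdist_ne_top_of_nonempty_of_bounded
    ⟨x, hx, Metric.mem_ball_self hr⟩ ⟨x, x_mem_plane_ball hr⟩
    (Metric.isBounded_ball.subset inter_subset_right)
    (Metric.isBounded_ball.subset inter_subset_right)

/-- Boundary points in the ball are close to the plane. -/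
lemma bdry_near_plane {F : Set E} {ν x y : E} {r δ : ℝ} (hr : 0 < r) (hν : ‖ν‖ = 1)
    (hx : x ∈ F)
    (hH : Metric.hausdorffDist (F ∩ Metric.ball x r) ({y : E | ⟪ν, y - x⟫_ℝ = 0} ∩ Metric.ball x r) ≤ δ)
    (hy : y ∈ F) (hyb : y ∈ Metric.ball x r) : |⟪ν, y - x⟫_ℝ| ≤ δ := by
  have h1 : |⟪ν, y - x⟫_ℝ| ≤ Metric.infDist y ({y : E | ⟪ν, y - x⟫_ℝ = 0} ∩ Metric.ball x r) := by
    refine my_le_infDist ⟨x, x_mem_plane_ball hr⟩ (fun p hp => ?_)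
    exact inner_le_dist_plane hν hp.1
  have h2 := Metric.infDist_le_hausdorffDist_of_mem (x := y)
    (t := {y : E | ⟪ν, y - x⟫_ℝ = 0} ∩ Metric.ball x r)
    (s := F ∩ Metric.ball x r) ⟨hy, hyb⟩ (flat_edist_ne_top hr hx)
  linarith

/-- A point whose projection is in the ball is at distance at most `|⟪ν, w-x⟫| + δ` from `F`. -/
lemma infDist_le_inner_add {F : Set E} {ν x w : E} {r δ : ℝ} (hr : 0 < r) (hν : ‖ν‖ = 1)
    (hx : x ∈ F)
    (hH : Metric.hausdorffDist (F ∩ Metric.ball x r) ({y : E | ⟪ν, y - x⟫_ℝ = 0} ∩ Metric.ball x r) ≤ δ)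
    (hwx : dist w x < r) : Metric.infDist w F ≤ |⟪ν, w - x⟫_ℝ| + δ := by
  set t : ℝ := ⟪ν, w - x⟫_ℝ with ht
  set q : E := w - t • ν with hq
  have hqx : q - x = (w - x) - t • ν := by rw [hq]; abel
  have hqP : ⟪ν, q - x⟫_ℝ = 0 := by
    rw [hqx, inner_sub_right, real_inner_smul_right, real_inner_self_eq_norm_sq, hν]
    simp [ht]
  have hwb : ‖w - x‖ < r := by rwa [dist_eq_norm] at hwx
  have hn2 : ‖q - x‖ ^ 2 = ‖w - x‖ ^ 2 - t ^ 2 := by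
    rw [hqx, norm_sub_sq_real, real_inner_smul_right, real_inner_comm, ← ht, norm_smul, hν]
    simp [Real.norm_eq_abs, sq_abs]
    ring
  have hqball : q ∈ Metric.ball x r := by
    rw [Metric.mem_ball, dist_eq_norm]
    nlinarith [norm_nonneg (q - x), norm_nonneg (w - x), sq_nonneg t]
  have hdq : dist w q = |t| := by
    rw [dist_eq_norm, hq]
    simp [norm_smul, hν]
  have h3 : Metric.infDist q F ≤ δ := by
    calc Metric.infDist q F ≤ Metric.infDist q (F ∩ Metric.ball x r) :=
          Metric.infDist_le_infDist_of_subset inter_subset_left ⟨x, hx, Metric.mem_ball_self hr⟩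
    _ ≤ Metric.hausdorffDist ({y : E | ⟪ν, y - x⟫_ℝ = 0} ∩ Metric.ball x r) (F ∩ Metric.ball x r) :=
          Metric.infDist_le_hausdorffDist_of_mem ⟨hqP, hqball⟩
            (by rw [EMetric.hausdorffEdist_comm]; exact flat_edist_ne_top hr hx)
    _ ≤ δ := by rw [Metric.hausdorffDist_comm]; exact hH
  calc Metric.infDist w F ≤ Metric.infDist q F + dist w q := Metric.infDist_le_infDist_add_dist
  _ ≤ δ + |t| := by rw [hdq]; linarith
  _ = |t| + δ := by ring

lemma climb {ε r₀ : ℝ} {Ω : Set E} (hΩ : IsReifenbergFlat ε r₀ Ω) (hε : 0 < ε)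
    (hε20 : ε ≤ 1/20) (hr₀ : 0 < r₀) {w : E} (hw : w ∈ Ω) (hfr : (frontier Ω).Nonempty)
    (hd3 : Metric.infDist w (frontier Ω) < 3*ε*r₀) :
    ∃ w' ∈ Ω, connectedComponentIn Ω w' = connectedComponentIn Ω w ∧
      dist w' w ≤ 2 * Metric.infDist w (frontier Ω) ∧
      9/5 * Metric.infDist w (frontier Ω) ≤ Metric.infDist w' (frontier Ω) := by
  obtain ⟨-, hΩo, hflat, -⟩ := hΩ
  set d := Metric.infDist w (frontier Ω) with hdd
  have hwF : w ∉ frontier Ω := fun h => ((hΩo.frontier_eq ▸ h).2 hw)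
  have hd0 : 0 < d := (IsClosed.notMem_iff_infDist_pos isClosed_frontier hfr).mp hwF
  have hr6 : 6*d ≤ r₀ := by nlinarith
  have h6d : 0 < 6*d := by linarith
  obtain ⟨x, hxF, hxd⟩ := isClosed_frontier.exists_infDist_eq_dist hfr w
  have hdwx : dist w x = d := hxd.symm
  obtain ⟨ν₀, hν₀, hH₀⟩ := hflat x hxF (6*d) h6d hr6
  -- lower bound on |⟪ν₀, w - x⟫|
  have habs : (1 - 6*ε)*d ≤ |⟪ν₀, w - x⟫_ℝ| := by
    have := infDist_le_inner_add (F := frontier Ω) h6d hν₀ hxF hH₀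
      (by rw [hdwx]; linarith : dist w x < 6*d)
    rw [← hdd] at this
    nlinarith
  -- choose sign
  obtain ⟨ν, hν, hH, ht⟩ : ∃ ν : E, ‖ν‖ = 1 ∧
      Metric.hausdorffDist (frontier Ω ∩ Metric.ball x (6*d))
        ({y : E | ⟪ν, y - x⟫_ℝ = 0} ∩ Metric.ball x (6*d)) ≤ ε * (6*d) ∧
      (1 - 6*ε)*d ≤ ⟪ν, w - x⟫_ℝ := by
    rcases le_or_gt 0 ⟪ν₀, w - x⟫_ℝ with h0 | h0
    · exact ⟨ν₀, hν₀, hH₀, by rwa [abs_of_nonneg h0] at habs⟩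
    · refine ⟨-ν₀, by rwa [norm_neg], ?_, ?_⟩
      · have : {y : E | ⟪-ν₀, y - x⟫_ℝ = 0} = {y : E | ⟪ν₀, y - x⟫_ℝ = 0} := by
          ext p; simp [inner_neg_left, neg_eq_zero]
        rwa [this]
      · rw [inner_neg_left]
        rwa [abs_of_neg h0] at habs
  set t : ℝ := ⟪ν, w - x⟫_ℝ with htt
  -- distance of points on the ray to the boundary
  have hptw : ∀ τ : ℝ, 1 ≤ τ → τ ≤ 3 → ∀ y ∈ frontier Ω,
      min ((τ*(1-6*ε) - 6*ε)*d) (3*d) ≤ dist (x + τ • (w - x)) y := by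
    intro τ hτ1 hτ3 y hy
    set p : E := x + τ • (w - x) with hp
    have hpx : p - x = τ • (w - x) := by rw [hp]; abel
    have hipx : ⟪ν, p - x⟫_ℝ = τ * t := by rw [hpx, real_inner_smul_right]
    have hdpx : dist p x = τ * d := by
      rw [dist_eq_norm, hpx, norm_smul, Real.norm_eq_abs, abs_of_nonneg (by linarith),
        ← hdwx, dist_eq_norm]
    rcases lt_or_ge (dist y x) (6*d) with hcase | hcase
    · -- near boundary point: close to the plane
      have hs : |⟪ν, y - x⟫_ℝ| ≤ ε * (6*d) :=
        bdry_near_plane h6d hν hxF hH hy (Metric.mem_ball.mpr hcase)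
      have hipy : ⟪ν, p - y⟫_ℝ = τ * t - ⟪ν, y - x⟫_ℝ := by
        have : p - y = (p - x) - (y - x) := by abel
        rw [this, inner_sub_right, hipx]
      have h1 : |⟪ν, p - y⟫_ℝ| ≤ dist p y := by
        rw [dist_eq_norm]
        calc |⟪ν, p - y⟫_ℝ| ≤ ‖ν‖ * ‖p - y‖ := abs_real_inner_le_norm _ _
        _ = ‖p - y‖ := by rw [hν, one_mul]
      have h2 : τ * t - ⟪ν, y - x⟫_ℝ ≤ |⟪ν, p - y⟫_ℝ| := by
        rw [hipy]; exact le_abs_self _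
      have h3 : (τ*(1-6*ε) - 6*ε)*d ≤ τ * t - ⟪ν, y - x⟫_ℝ := by
        have := abs_le.mp hs
        nlinarith [ht]
      refine le_trans (min_le_left _ _) (by linarith)
    · -- far boundary point
      refine le_trans (min_le_right _ _) ?_
      have htr := dist_triangle y p x
      rw [dist_comm y p, hdpx] at htr
      nlinarith
  -- the segment from w to w' avoids the boundary
  set w' : E := x + (3:ℝ) • (w - x) with hw'
  have hposmin : ∀ τ : ℝ, 1 ≤ τ → τ ≤ 3 →
      (0:ℝ) < min ((τ*(1-6*ε) - 6*ε)*d) (3*d) := by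
    intro τ h1 h3
    have h4 : (2:ℝ)/5 ≤ τ*(1-6*ε) - 6*ε := by nlinarith
    refine lt_min (by nlinarith) (by linarith)
  have hsegmem : ∀ p ∈ segment ℝ w w', ∃ τ : ℝ, 1 ≤ τ ∧ τ ≤ 3 ∧ p = x + τ • (w - x) := by
    intro p hp
    rw [segment_eq_image'] at hp
    obtain ⟨θ, hθ, rfl⟩ := hp
    refine ⟨1 + 2*θ, by linarith [hθ.1], by linarith [hθ.2], ?_⟩
    rw [hw']; module
  have hsegF : ∀ p ∈ segment ℝ w w', p ∉ frontier Ω := by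
    intro p hp hpF
    obtain ⟨τ, h1, h3, rfl⟩ := hsegmem p hp
    have := hptw τ h1 h3 _ hpF
    rw [dist_self] at this
    exact absurd this (not_le.2 (hposmin τ h1 h3))
  have hsegΩ : segment ℝ w w' ⊆ Ω :=
    my_connected_subset hΩo (convex_segment w w').isPreconnected hsegF
      (left_mem_segment ℝ w w') hw
  have hw'Ω : w' ∈ Ω := hsegΩ (right_mem_segment ℝ w w')
  refine ⟨w', hw'Ω, ?_, ?_, ?_⟩
  · exact my_same_comp (convex_segment w w').isPreconnected hsegΩ
      (right_mem_segment ℝ w w') (left_mem_segment ℝ w w')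
  · have hww2 : w' - w = (2:ℝ) • (w - x) := by rw [hw']; module
    rw [dist_eq_norm, hww2, norm_smul, Real.norm_eq_abs]
    rw [show ‖w - x‖ = d by rw [← hdwx, dist_eq_norm]]
    rw [abs_of_nonneg (by norm_num : (0:ℝ) ≤ 2)]
  · have h33 : (1:ℝ) ≤ 3 := by norm_num
    have hb := my_le_infDist hfr (fun y hy => hptw 3 h33 le_rfl y hy)
    have hmin : 9/5 * d ≤ min ((3*(1-6*ε) - 6*ε)*d) (3*d) := by
      refine le_min (by nlinarith) (by nlinarith)
    rw [hw']
    linarith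

lemma stop_lemma {ε r₀ : ℝ} {Ω : Set E} (hε : 0 < ε) (hε20 : ε ≤ 1/20) (hr₀ : 0 < r₀)
    {z : E} (hz : z ∈ frontier Ω) {ν : E} (hν : ‖ν‖ = 1)
    (hH : Metric.hausdorffDist (frontier Ω ∩ Metric.ball z r₀)
      ({y : E | ⟪ν, y - z⟫_ℝ = 0} ∩ Metric.ball z r₀) ≤ ε * r₀)
    (hup : {y : E | 2 * ε * r₀ ≤ ⟪ν, y - z⟫_ℝ} ∩ Metric.ball z r₀ ⊆ Ω)
    (hlo : {y : E | ⟪ν, y - z⟫_ℝ ≤ -(2 * ε * r₀)} ∩ Metric.ball z r₀ ⊆ Ωᶜ)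
    {w : E} (hw : w ∈ Ω) (hwz : dist w z < r₀)
    (hd : 3*ε*r₀ ≤ Metric.infDist w (frontier Ω)) :
    connectedComponentIn Ω w = connectedComponentIn Ω (z + (r₀/2) • ν) := by
  have h1 : Metric.infDist w (frontier Ω) ≤ |⟪ν, w - z⟫_ℝ| + ε * r₀ :=
    infDist_le_inner_add hr₀ hν hz hH hwz
  have habs : 2*ε*r₀ ≤ |⟪ν, w - z⟫_ℝ| := by linarith
  have hsign : 2*ε*r₀ ≤ ⟪ν, w - z⟫_ℝ := by
    rcases abs_cases ⟪ν, w - z⟫_ℝ with ⟨he, -⟩ | ⟨he, -⟩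
    · linarith
    · exfalso
      have hwlo : w ∈ {y : E | ⟪ν, y - z⟫_ℝ ≤ -(2 * ε * r₀)} ∩ Metric.ball z r₀ :=
        ⟨by simp only [Set.mem_setOf_eq]; linarith, Metric.mem_ball.mpr hwz⟩
      exact (hlo hwlo) hw
  set S : Set E := {y : E | 2 * ε * r₀ ≤ ⟪ν, y - z⟫_ℝ} ∩ Metric.ball z r₀ with hS
  have hconv : Convex ℝ S := by
    have heq : {y : E | 2 * ε * r₀ ≤ ⟪ν, y - z⟫_ℝ} =
        {y : E | 2 * ε * r₀ + ⟪ν, z⟫_ℝ ≤ ⟪ν, y⟫_ℝ} := by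
      ext p
      simp only [Set.mem_setOf_eq, inner_sub_right]
      constructor <;> intro h <;> linarith
    rw [hS, heq]
    exact (convex_halfSpace_ge ⟨fun a b => inner_add_right _ _ _,
      fun c a => real_inner_smul_right _ _ _⟩ _).inter (convex_ball z r₀)
  have hp₀ : z + (r₀/2) • ν ∈ S := by
    constructor
    · simp only [Set.mem_setOf_eq, add_sub_cancel_left, real_inner_smul_right,
        real_inner_self_eq_norm_sq, hν]
      nlinarith
    · rw [Metric.mem_ball, dist_eq_norm, add_sub_cancel_left, norm_smul, Real.norm_eq_abs,
        hν, mul_one, abs_of_pos (by linarith)]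
      linarith
  have hwS : w ∈ S := ⟨hsign, Metric.mem_ball.mpr hwz⟩
  exact my_same_comp hconv.isPreconnected hup hwS hp₀

lemma main_induction {ε r₀ : ℝ} {Ω : Set E} (hΩ : IsReifenbergFlat ε r₀ Ω) (hε : 0 < ε)
    (hε20 : ε ≤ 1/20) (hr₀ : 0 < r₀) {z : E} (hz : z ∈ frontier Ω) {ν : E} (hν : ‖ν‖ = 1)
    (hH : Metric.hausdorffDist (frontier Ω ∩ Metric.ball z r₀)
      ({y : E | ⟪ν, y - z⟫_ℝ = 0} ∩ Metric.ball z r₀) ≤ ε * r₀)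
    (hup : {y : E | 2 * ε * r₀ ≤ ⟪ν, y - z⟫_ℝ} ∩ Metric.ball z r₀ ⊆ Ω)
    (hlo : {y : E | ⟪ν, y - z⟫_ℝ ≤ -(2 * ε * r₀)} ∩ Metric.ball z r₀ ⊆ Ωᶜ) :
    ∀ n : ℕ, ∀ w ∈ Ω, 3*ε*r₀ ≤ (9/5)^n * Metric.infDist w (frontier Ω) →
      dist w z ≤ r₀/50 + 5/2 * min (Metric.infDist w (frontier Ω)) (3*ε*r₀) →
      connectedComponentIn Ω w = connectedComponentIn Ω (z + (r₀/2) • ν) := by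
  intro n
  induction n with
  | zero =>
    intro w hw hlev hdist
    rw [pow_zero, one_mul] at hlev
    rw [min_eq_right hlev] at hdist
    exact stop_lemma hε hε20 hr₀ hz hν hH hup hlo hw (by nlinarith) hlev
  | succ n ih =>
    intro w hw hlev hdist
    set d := Metric.infDist w (frontier Ω) with hdd
    rcases le_or_gt (3*ε*r₀) d with hge | hlt
    · rw [min_eq_right hge] at hdist
      exact stop_lemma hε hε20 hr₀ hz hν hH hup hlo hw (by nlinarith) hge
    · rw [min_eq_left hlt.le] at hdist
      obtain ⟨w', hw'Ω, hcc, hdist', hgrow⟩ := climb hΩ hε hε20 hr₀ hw ⟨z, hz⟩ hlt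
      set d' := Metric.infDist w' (frontier Ω) with hdd'
      have hd0 : 0 < d := by
        by_contra h
        push_neg at h
        have : (9/5:ℝ)^(n+1) * d ≤ 0 :=
          mul_nonpos_of_nonneg_of_nonpos (by positivity) h
        nlinarith
      have hwz' : dist w' z ≤ dist w z + 2*d := by
        calc dist w' z ≤ dist w' w + dist w z := dist_triangle w' w z
        _ ≤ 2*d + dist w z := by linarith
        _ = dist w z + 2*d := by ring
      rcases le_or_gt (3*ε*r₀) d' with hge' | hlt'
      · rw [← hcc]
        refine stop_lemma hε hε20 hr₀ hz hν hH hup hlo hw'Ω ?_ hge'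
        nlinarith
      · rw [← hcc]
        refine ih w' hw'Ω ?_ ?_
        · calc (3:ℝ)*ε*r₀ ≤ (9/5)^(n+1) * d := hlev
          _ = (9/5)^n * (9/5 * d) := by ring
          _ ≤ (9/5)^n * d' := by
              refine mul_le_mul_of_nonneg_left hgrow (by positivity)
        · rw [min_eq_left hlt'.le]
          have : dist w' z ≤ r₀/50 + 5/2*d + 2*d := by linarith
          nlinarith

/-- **Proposition (separation of distinct connected components).**
Let `Ω ⊆ ℝ^N` be a bounded `(ε, r₀)`-Reifenberg-flat domain with `ε ≤ 20^{-N}` and let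
`U_i`, `U_j` be two distinct connected components of `Ω`. Then for every `z ∈ ∂U_i` one
has `d(z, U_j) > r₀ / 70`. -/
theorem components_are_separated {N : ℕ} {ε r₀ : ℝ}
    (hε : 0 < ε) (hε2 : ε < 1 / 2) (hε' : ε ≤ 1 / 20 ^ N) (hr₀ : 0 < r₀)
    {Ω : Set (EuclideanSpace ℝ (Fin N))} (hΩ : IsReifenbergFlat ε r₀ Ω)
    (hbdd : Bornology.IsBounded Ω)
    {x y : EuclideanSpace ℝ (Fin N)} (hx : x ∈ Ω) (hy : y ∈ Ω)
    (hne : connectedComponentIn Ω x ≠ connectedComponentIn Ω y) :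
    ∀ z ∈ frontier (connectedComponentIn Ω x),
      r₀ / 70 < Metric.infDist z (connectedComponentIn Ω y) := by
  intro z hzf
  by_contra hcon
  push_neg at hcon
  rcases Nat.eq_zero_or_pos N with hN | hN
  · subst hN
    haveI : Subsingleton (EuclideanSpace ℝ (Fin 0)) :=
      ⟨fun a b => PiLp.ext fun i => i.elim0⟩
    exact hne (by rw [Subsingleton.elim x y])
  have hε20 : ε ≤ 1/20 := by
    have h20 : (20:ℝ) ≤ 20 ^ N := le_self_pow₀ (by norm_num) (Nat.pos_iff_ne_zero.mp hN)
    calc ε ≤ 1 / 20 ^ N := hε'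
    _ ≤ 1 / 20 := by
        apply one_div_le_one_div_of_le (by norm_num) h20
  obtain ⟨hΩne, hΩo, hflat, hsep⟩ := hΩ
  -- z is a boundary point of Ω
  have hzc : z ∈ closure (connectedComponentIn Ω x) := hzf.1
  have hznotin : z ∉ connectedComponentIn Ω x := by
    rw [(hΩo.connectedComponentIn).frontier_eq] at hzf
    exact hzf.2
  have hzΩ' : z ∉ Ω := by
    intro hzΩ
    obtain ⟨p, hpCCz, hpUi⟩ := _root_.mem_closure_iff.1 hzc _
      (hΩo.connectedComponentIn (x := z)) (mem_connectedComponentIn hzΩ)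
    have e1 : connectedComponentIn Ω x = connectedComponentIn Ω p :=
      connectedComponentIn_eq hpUi
    have e2 : connectedComponentIn Ω z = connectedComponentIn Ω p :=
      connectedComponentIn_eq hpCCz
    exact hznotin (by rw [e1, ← e2]; exact mem_connectedComponentIn hzΩ)
  have hzF : z ∈ frontier Ω := by
    rw [hΩo.frontier_eq]
    exact ⟨closure_mono (connectedComponentIn_subset Ω x) hzc, hzΩ'⟩
  -- the Reifenberg data at z
  obtain ⟨ν, hν, hH, hup, hlo⟩ := hsep z hzF
  have hΩ' : IsReifenbergFlat ε r₀ Ω := ⟨hΩne, hΩo, hflat, hsep⟩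
  -- the key connection lemma
  have key : ∀ w ∈ Ω, dist w z < r₀/60 →
      connectedComponentIn Ω w = connectedComponentIn Ω (z + (r₀/2) • ν) := by
    intro w hw hwz
    have hwF : w ∉ frontier Ω := fun h => ((hΩo.frontier_eq ▸ h).2 hw)
    have hd0 : 0 < Metric.infDist w (frontier Ω) :=
      (IsClosed.notMem_iff_infDist_pos isClosed_frontier ⟨z, hzF⟩).mp hwF
    obtain ⟨n, hn⟩ := pow_unbounded_of_one_lt
      ((3*ε*r₀) / Metric.infDist w (frontier Ω)) (by norm_num : (1:ℝ) < 9/5)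
    refine main_induction hΩ' hε hε20 hr₀ hzF hν hH hup hlo n w hw ?_ ?_
    · rw [div_lt_iff₀ hd0] at hn
      linarith
    · have h1 : Metric.infDist w (frontier Ω) ≤ dist w z :=
        Metric.infDist_le_dist_of_mem hzF
      have h2 : (0:ℝ) ≤ min (Metric.infDist w (frontier Ω)) (3*ε*r₀) :=
        le_min hd0.le (by positivity)
      linarith
  -- find nearby points of both components
  have hUjne : (connectedComponentIn Ω y).Nonempty := ⟨y, mem_connectedComponentIn hy⟩
  have hlt : Metric.infDist z (connectedComponentIn Ω y) < r₀/60 :=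
    lt_of_le_of_lt hcon (by linarith)
  obtain ⟨wj, hwjUj, hwj⟩ := (Metric.infDist_lt_iff hUjne).1 hlt
  obtain ⟨wi, hwiB, hwiUi⟩ := _root_.mem_closure_iff.1 hzc _
    (Metric.isOpen_ball (x := z) (ε := r₀/60)) (Metric.mem_ball_self (by linarith))
  have ei : connectedComponentIn Ω x = connectedComponentIn Ω (z + (r₀/2) • ν) := by
    rw [connectedComponentIn_eq hwiUi]
    exact key wi (connectedComponentIn_subset Ω x hwiUi) (Metric.mem_ball.1 hwiB)
  have ej : connectedComponentIn Ω y = connectedComponentIn Ω (z + (r₀/2) • ν) := by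
    rw [connectedComponentIn_eq hwjUj]
    exact key wj (connectedComponentIn_subset Ω y hwjUj)
      (by rw [dist_comm]; exact hwj)
  exact hne (ei.trans ej.symm)
end
end

section
/- Let Ω ⊆ ℝ^N be a bounded (ε, r₀)-Reifenberg-flat domain with ε ≤ 20^{−N}. Then every connected component U of Ω satisfies |U| ≥ ω_N (r₀/20)^N, where |U| is the Lebesgue measure of U and ω_N the Lebesgue measure of the unit ball in ℝ^N. -/
open Metric MeasureTheory Set Filter
open scoped ENNReal InnerProductSpace NNReal Topology

noncomputable section

lemma aux_subset_of_disjoint_frontier {E : Type*} [MetricSpace E]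
    {Ω s : Set E} (hΩ : IsOpen Ω) (hs : IsPreconnected s)
    (hdisj : ∀ y ∈ s, y ∉ frontier Ω) (hmeet : (s ∩ Ω).Nonempty) : s ⊆ Ω := by
  have hsub : s ⊆ Ω ∪ (closure Ω)ᶜ := by
    intro y hy
    by_cases h : y ∈ closure Ω
    · left
      have := hdisj y hy
      rw [frontier, hΩ.interior_eq] at this
      simp only [mem_diff, h, true_and, not_not] at this
      exact this
    · exact Or.inr h
  have hdisj2 : Disjoint Ω (closure Ω)ᶜ :=
    Set.disjoint_compl_right_iff_subset.mpr subset_closure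
  exact hs.subset_left_of_subset_union hΩ (isClosed_closure.isOpen_compl) hdisj2 hsub hmeet

lemma aux_step {N : ℕ} {ε r₀ : ℝ} (hε20 : ε ≤ 1 / 20) (hr₀ : 0 < r₀)
    {Ω : Set (EuclideanSpace ℝ (Fin N))} (hopen : IsOpen Ω)
    (hflat : ∀ x ∈ frontier Ω, ∀ r : ℝ, 0 < r → r ≤ r₀ →
      ∃ ν : EuclideanSpace ℝ (Fin N), ‖ν‖ = 1 ∧
        Metric.hausdorffDist (frontier Ω ∩ Metric.ball x r)
          ({y | ⟪ν, y - x⟫_ℝ = 0} ∩ Metric.ball x r) ≤ ε * r)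
    (hcne : Ωᶜ.Nonempty)
    {x : EuclideanSpace ℝ (Fin N)} (hx : x ∈ Ω)
    (hdr : 10 * infDist x Ωᶜ ≤ r₀) :
    ∃ c ∈ connectedComponentIn Ω x, 2 * infDist x Ωᶜ ≤ infDist c Ωᶜ := by
  set d := infDist x Ωᶜ with hd_def
  have hccl : IsClosed Ωᶜ := hopen.isClosed_compl
  have hd0 : 0 < d := (hccl.notMem_iff_infDist_pos hcne).mp (by simpa using hx)
  -- points strictly within distance d of x are in Ω
  have hball_sub : ∀ w, dist w x < d → w ∈ Ω := by
    intro w hw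
    by_contra hwc
    have h0 : infDist w Ωᶜ = 0 := infDist_zero_of_mem (by simpa using hwc)
    have := infDist_le_infDist_add_dist (x := x) (y := w) (s := Ωᶜ)
    rw [h0, zero_add, dist_comm] at this
    exact absurd (lt_of_le_of_lt this hw) (lt_irrefl _)
  -- nearest point of the complement
  obtain ⟨z, hzc, hzd⟩ := hccl.exists_infDist_eq_dist hcne x
  rw [← hd_def] at hzd
  have hdxz : dist x z = d := hzd.symm
  -- z is a frontier point
  have hzfr : z ∈ frontier Ω := by
    rw [frontier, hopen.interior_eq]
    refine ⟨?_, hzc⟩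
    rw [Metric.mem_closure_iff]
    intro δ hδ0
    set t : ℝ := 1 - min δ d / (2 * d) with ht_def
    set p := x + t • (z - x) with hp_def
    have hmin0 : 0 < min δ d := lt_min hδ0 hd0
    have ht1 : t < 1 := by
      have : 0 < min δ d / (2 * d) := by positivity
      simp only [ht_def]; linarith
    have ht0 : 0 ≤ t := by
      have : min δ d / (2 * d) ≤ d / (2 * d) := by
        apply div_le_div_of_nonneg_right (min_le_right _ _) <;> positivity
      have h2 : d / (2 * d) = 1 / 2 := by field_simp
      simp only [ht_def]; rw [h2] at this; linarith
    have hpz : dist p z = (1 - t) * d := by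
      have : p - z = (1 - t) • (x - z) := by simp only [hp_def]; module
      rw [dist_eq_norm, this, norm_smul, Real.norm_eq_abs, abs_of_nonneg (by linarith),
        ← dist_eq_norm, hdxz]
    have hpx : dist p x = t * d := by
      have : p - x = (-t) • (x - z) := by simp only [hp_def]; module
      rw [dist_eq_norm, this, norm_smul, Real.norm_eq_abs, abs_neg, abs_of_nonneg ht0,
        ← dist_eq_norm, hdxz]
    refine ⟨p, hball_sub p (by rw [hpx]; nlinarith), ?_⟩
    rw [dist_comm, hpz]
    have h1t : 1 - t = min δ d / (2 * d) := by simp [ht_def]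
    rw [h1t]
    calc min δ d / (2 * d) * d = min δ d / 2 := by field_simp
    _ < δ := by have := min_le_left δ d; linarith
  -- flatness at z at scale r = 10 d
  set r : ℝ := 10 * d with hr_def
  have hr0 : 0 < r := by positivity
  obtain ⟨ν, hν1, hHD⟩ := hflat z hzfr r hr0 hdr
  -- every frontier point in B(z, r) is within ε r of the hyperplane
  have hstrip : ∀ w ∈ frontier Ω, dist w z < r → |⟪ν, w - z⟫_ℝ| ≤ ε * r := by
    intro w hwfr hwball
    set B := {y : EuclideanSpace ℝ (Fin N) | ⟪ν, y - z⟫_ℝ = 0} ∩ ball z r with hB_def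
    have hBne : B.Nonempty := ⟨z, by simp, mem_ball_self hr0⟩
    have hAne : (frontier Ω ∩ ball z r).Nonempty := ⟨z, hzfr, mem_ball_self hr0⟩
    have hfin : EMetric.hausdorffEdist (frontier Ω ∩ ball z r) B ≠ ⊤ :=
      hausdorffEdist_ne_top_of_nonempty_of_bounded hAne hBne
        (isBounded_ball.subset inter_subset_right) (isBounded_ball.subset inter_subset_right)
    have hmem : w ∈ frontier Ω ∩ ball z r := ⟨hwfr, mem_ball.mpr hwball⟩
    have h1 : infDist w B ≤ ε * r :=
      le_trans (infDist_le_hausdorffDist_of_mem hmem hfin) hHD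
    by_contra hcon
    push_neg at hcon
    obtain ⟨p, hpB, hpd⟩ := (infDist_lt_iff hBne).mp (lt_of_le_of_lt h1 hcon)
    have hsplit : ⟪ν, w - z⟫_ℝ = ⟪ν, w - p⟫_ℝ + ⟪ν, p - z⟫_ℝ := by
      rw [← inner_add_right]; congr 1; abel
    have hp0 : ⟪ν, p - z⟫_ℝ = 0 := hpB.1
    have : |⟪ν, w - z⟫_ℝ| < |⟪ν, w - z⟫_ℝ| := by
      calc |⟪ν, w - z⟫_ℝ| = |⟪ν, w - p⟫_ℝ| := by rw [hsplit, hp0, add_zero]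
        _ ≤ ‖ν‖ * ‖w - p‖ := abs_real_inner_le_norm ν (w - p)
        _ = dist w p := by rw [hν1, one_mul, dist_eq_norm]
        _ < |⟪ν, w - z⟫_ℝ| := hpd
    exact absurd this (lt_irrefl _)
  -- orient the normal towards x
  set u : EuclideanSpace ℝ (Fin N) := if 0 ≤ ⟪ν, x - z⟫_ℝ then ν else -ν with hu_def
  have hu1 : ‖u‖ = 1 := by simp only [hu_def]; split_ifs <;> simp [hν1]
  have huu : ⟪u, u⟫_ℝ = 1 := by
    rw [real_inner_self_eq_norm_mul_norm, hu1]; norm_num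
  have hule : ∀ w, ⟪u, w⟫_ℝ ≤ |⟪ν, w⟫_ℝ| := by
    intro w; simp only [hu_def]; split_ifs
    · exact le_abs_self _
    · rw [inner_neg_left]; exact neg_le_abs _
  have hux : 0 ≤ ⟪u, x - z⟫_ℝ := by
    simp only [hu_def]; split_ifs with h
    · exact h
    · rw [inner_neg_left]; linarith [le_of_not_ge h]
  have hεr : ε * r ≤ d / 2 := by
    rw [hr_def]; nlinarith
  -- the half-ball region
  set H := {y : EuclideanSpace ℝ (Fin N) | (4/5) * d ≤ ⟪u, y - z⟫_ℝ} ∩ ball z r with hH_def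
  have hHconv : Convex ℝ H := by
    apply Convex.inter _ (convex_ball z r)
    have : {y : EuclideanSpace ℝ (Fin N) | (4/5) * d ≤ ⟪u, y - z⟫_ℝ} =
        {y : EuclideanSpace ℝ (Fin N) | (4/5) * d + ⟪u, z⟫_ℝ ≤ ⟪u, y⟫_ℝ} := by
      ext y; simp only [mem_setOf_eq, inner_sub_right]; constructor <;> intro <;> linarith
    rw [this]
    exact convex_halfSpace_ge ⟨fun a b => inner_add_right _ _ _,
      fun c a => real_inner_smul_right _ _ _⟩ _
  have hHfr : ∀ w ∈ H, w ∉ frontier Ω := by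
    rintro w ⟨hw1, hw2⟩ hwfr
    have h1 := hstrip w hwfr hw2
    have h2 := hule (w - z)
    simp only [mem_setOf_eq] at hw1
    linarith
  -- the shifted point x'
  set x' := x + ((9/10) * d) • u with hx'_def
  have hx'x : dist x' x = (9/10) * d := by
    have : x' - x = ((9/10) * d) • u := by simp only [hx'_def]; module
    rw [dist_eq_norm, this, norm_smul, Real.norm_eq_abs, hu1, mul_one,
      abs_of_nonneg (by linarith)]
  have hx'Ω : x' ∈ Ω := hball_sub x' (by rw [hx'x]; linarith)
  have hx'in : ⟪u, x' - z⟫_ℝ = ⟪u, x - z⟫_ℝ + (9/10) * d := by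
    have : x' - z = (x - z) + ((9/10) * d) • u := by simp only [hx'_def]; module
    rw [this, inner_add_right, real_inner_smul_right, huu, mul_one]
  have hx'H : x' ∈ H := by
    constructor
    · simp only [mem_setOf_eq, hx'in]; linarith
    · rw [mem_ball]
      calc dist x' z ≤ dist x' x + dist x z := dist_triangle _ _ _
        _ = (9/10) * d + d := by rw [hx'x, hdxz]
        _ < r := by rw [hr_def]; linarith
  have hHΩ : H ⊆ Ω :=
    aux_subset_of_disjoint_frontier hopen hHconv.isPreconnected hHfr ⟨x', hx'H, hx'Ω⟩
  -- the deep point c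
  set c := z + (5 * d) • u with hc_def
  have hcz : ∀ w : EuclideanSpace ℝ (Fin N),
      ⟪u, w - z⟫_ℝ = ⟪u, w - c⟫_ℝ + 5 * d := by
    intro w
    have : w - z = (w - c) + (5 * d) • u := by simp only [hc_def]; module
    rw [this, inner_add_right, real_inner_smul_right, huu, mul_one]
  have hdcz : dist c z = 5 * d := by
    have : c - z = (5 * d) • u := by simp only [hc_def]; module
    rw [dist_eq_norm, this, norm_smul, Real.norm_eq_abs, hu1, mul_one,
      abs_of_nonneg (by linarith)]
  have hcH : c ∈ H := by
    constructor
    · have h5 : ⟪u, c - z⟫_ℝ = 5 * d := by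
        rw [hcz c, sub_self, inner_zero_right, zero_add]
      simp only [mem_setOf_eq, h5]; linarith
    · rw [mem_ball, hdcz, hr_def]; linarith
  have hballc : ∀ w, dist w c < 4 * d → w ∈ H := by
    intro w hw
    constructor
    · have h2 : |⟪u, w - c⟫_ℝ| ≤ dist w c := by
        have := abs_real_inner_le_norm u (w - c)
        rwa [hu1, one_mul, ← dist_eq_norm] at this
      have h3 := neg_abs_le ⟪u, w - c⟫_ℝ
      simp only [mem_setOf_eq, hcz w]
      linarith
    · rw [mem_ball]
      calc dist w z ≤ dist w c + dist c z := dist_triangle _ _ _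
        _ < 4 * d + 5 * d := by rw [hdcz]; linarith
        _ < r := by rw [hr_def]; linarith
  have hcinf : 2 * d ≤ infDist c Ωᶜ := by
    by_contra hcon
    push_neg at hcon
    obtain ⟨y, hyC, hyd⟩ := (infDist_lt_iff hcne).mp hcon
    have hyΩ : y ∈ Ω := hHΩ (hballc y (by rw [dist_comm]; linarith))
    exact (mem_compl_iff _ _).mp hyC hyΩ
  have hx'comp : x' ∈ connectedComponentIn Ω x :=
    (convex_ball x d).isPreconnected.subset_connectedComponentIn (mem_ball_self hd0)
      (fun w hw => hball_sub w hw) (mem_ball.mpr (by rw [hx'x]; linarith))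
  have hccomp : c ∈ connectedComponentIn Ω x' :=
    hHconv.isPreconnected.subset_connectedComponentIn hx'H hHΩ hcH
  refine ⟨c, ?_, hcinf⟩
  rw [connectedComponentIn_eq hx'comp]
  exact hccomp

lemma aux_reach {N : ℕ} {ε r₀ : ℝ} (hε20 : ε ≤ 1 / 20) (hr₀ : 0 < r₀)
    {Ω : Set (EuclideanSpace ℝ (Fin N))} (hopen : IsOpen Ω)
    (hflat : ∀ x ∈ frontier Ω, ∀ r : ℝ, 0 < r → r ≤ r₀ →
      ∃ ν : EuclideanSpace ℝ (Fin N), ‖ν‖ = 1 ∧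
        Metric.hausdorffDist (frontier Ω ∩ Metric.ball x r)
          ({y | ⟪ν, y - x⟫_ℝ = 0} ∩ Metric.ball x r) ≤ ε * r)
    (hcne : Ωᶜ.Nonempty) :
    ∀ n : ℕ, ∀ x ∈ Ω, r₀ / 20 ≤ 2 ^ n * infDist x Ωᶜ →
      ∃ c ∈ connectedComponentIn Ω x, r₀ / 20 ≤ infDist c Ωᶜ := by
  intro n
  induction n with
  | zero =>
    intro x hx hb
    exact ⟨x, mem_connectedComponentIn hx, by simpa using hb⟩
  | succ n ih =>
    intro x hx hb
    by_cases h : r₀ / 20 ≤ infDist x Ωᶜ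
    · exact ⟨x, mem_connectedComponentIn hx, h⟩
    · push_neg at h
      have hdr : 10 * infDist x Ωᶜ ≤ r₀ := by linarith
      obtain ⟨c, hcmem, hcinf⟩ := aux_step hε20 hr₀ hopen hflat hcne hx hdr
      have hcΩ : c ∈ Ω := connectedComponentIn_subset Ω x hcmem
      have hb' : r₀ / 20 ≤ 2 ^ n * infDist c Ωᶜ := by
        have h2 : 2 ^ n * (2 * infDist x Ωᶜ) ≤ 2 ^ n * infDist c Ωᶜ := by
          apply mul_le_mul_of_nonneg_left hcinf (by positivity)
        calc r₀ / 20 ≤ 2 ^ (n + 1) * infDist x Ωᶜ := hb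
          _ = 2 ^ n * (2 * infDist x Ωᶜ) := by ring
          _ ≤ 2 ^ n * infDist c Ωᶜ := h2
      obtain ⟨c', hc'mem, hc'inf⟩ := ih c hcΩ hb'
      refine ⟨c', ?_, hc'inf⟩
      rwa [connectedComponentIn_eq hcmem]

theorem component_volume_lower_bound' {N : ℕ} {ε r₀ : ℝ}
    (hε : 0 < ε) (hε2 : ε < 1 / 2) (hε' : ε ≤ 1 / 20 ^ N) (hr₀ : 0 < r₀)
    {Ω : Set (EuclideanSpace ℝ (Fin N))}
    (hne : Ω.Nonempty) (hopen : IsOpen Ω)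
    (hflat : ∀ x ∈ frontier Ω, ∀ r : ℝ, 0 < r → r ≤ r₀ →
      ∃ ν : EuclideanSpace ℝ (Fin N), ‖ν‖ = 1 ∧
        Metric.hausdorffDist (frontier Ω ∩ Metric.ball x r)
          ({y | ⟪ν, y - x⟫_ℝ = 0} ∩ Metric.ball x r) ≤ ε * r)
    (hbdd : Bornology.IsBounded Ω) :
    ∀ x ∈ Ω,
      volume (Metric.ball (0 : EuclideanSpace ℝ (Fin N)) 1) *
          ENNReal.ofReal ((r₀ / 20) ^ N) ≤
        volume (connectedComponentIn Ω x) := by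
  intro x hx
  rcases Nat.eq_zero_or_pos N with hN | hN
  · -- trivial zero-dimensional case
    subst hN
    have hsub : ball (0 : EuclideanSpace ℝ (Fin 0)) 1 ⊆ connectedComponentIn Ω x := by
      intro y _
      have : y = x := Subsingleton.elim y x
      rw [this]
      exact mem_connectedComponentIn hx
    calc volume (ball (0 : EuclideanSpace ℝ (Fin 0)) 1) * ENNReal.ofReal ((r₀ / 20) ^ 0)
        = volume (ball (0 : EuclideanSpace ℝ (Fin 0)) 1) := by
          rw [pow_zero, ENNReal.ofReal_one, mul_one]
      _ ≤ volume (connectedComponentIn Ω x) := measure_mono hsub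
  · haveI : Nonempty (Fin N) := ⟨⟨0, hN⟩⟩
    haveI : Nontrivial (EuclideanSpace ℝ (Fin N)) := inferInstance
    have hε20 : ε ≤ 1 / 20 := by
      refine le_trans hε' ?_
      have h20 : (20 : ℝ) ≤ 20 ^ N := by
        calc (20 : ℝ) = 20 ^ 1 := (pow_one _).symm
          _ ≤ 20 ^ N := pow_le_pow_right₀ (by norm_num) hN
      exact one_div_le_one_div_of_le (by norm_num) h20
    have hcne : Ωᶜ.Nonempty := by
      by_contra h
      rw [Set.not_nonempty_iff_eq_empty, Set.compl_empty_iff] at h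
      obtain ⟨R, hR⟩ := hbdd.subset_closedBall 0
      obtain ⟨y, hy⟩ := NormedSpace.exists_lt_norm ℝ (EuclideanSpace ℝ (Fin N)) R
      have : y ∈ closedBall (0 : EuclideanSpace ℝ (Fin N)) R := hR (h ▸ mem_univ y)
      rw [mem_closedBall, dist_zero_right] at this
      linarith
    have hd0 : 0 < infDist x Ωᶜ :=
      (hopen.isClosed_compl.notMem_iff_infDist_pos hcne).mp (by simpa using hx)
    obtain ⟨n, hn⟩ : ∃ n : ℕ, r₀ / 20 ≤ 2 ^ n * infDist x Ωᶜ := by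
      obtain ⟨n, hn⟩ := pow_unbounded_of_one_lt (r₀ / 20 / infDist x Ωᶜ)
        (by norm_num : (1 : ℝ) < 2)
      exact ⟨n, le_of_lt (by rwa [div_lt_iff₀ hd0] at hn)⟩
    obtain ⟨c, hcmem, hcinf⟩ := aux_reach hε20 hr₀ hopen hflat hcne n x hx hn
    have hballΩ : ball c (r₀ / 20) ⊆ Ω := by
      intro w hw
      by_contra hwc
      have h0 : infDist w Ωᶜ = 0 := infDist_zero_of_mem (by simpa using hwc)
      have h1 := infDist_le_infDist_add_dist (x := c) (y := w) (s := Ωᶜ)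
      rw [h0, zero_add] at h1
      rw [mem_ball, dist_comm] at hw
      linarith
    have hballcomp : ball c (r₀ / 20) ⊆ connectedComponentIn Ω x := by
      rw [connectedComponentIn_eq hcmem]
      exact (convex_ball c (r₀ / 20)).isPreconnected.subset_connectedComponentIn
        (mem_ball_self (by linarith)) hballΩ
    calc volume (ball (0 : EuclideanSpace ℝ (Fin N)) 1) * ENNReal.ofReal ((r₀ / 20) ^ N)
        = volume (ball c (r₀ / 20)) := by
          rw [Measure.addHaar_ball volume c (by positivity : (0:ℝ) ≤ r₀ / 20),
            finrank_euclideanSpace_fin, mul_comm]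
      _ ≤ volume (connectedComponentIn Ω x) := measure_mono hballcomp

/-- **Proposition (volume lower bound for connected components).**
Let `Ω ⊆ ℝ^N` be a bounded `(ε, r₀)`-Reifenberg-flat domain with `ε ≤ 20^{-N}`. Then
every connected component `U` of `Ω` satisfies `|U| ≥ ω_N (r₀/20)^N`, where `ω_N` is
the volume of the unit ball of `ℝ^N`. -/
theorem component_volume_lower_bound {N : ℕ} {ε r₀ : ℝ}
    (hε : 0 < ε) (hε2 : ε < 1 / 2) (hε' : ε ≤ 1 / 20 ^ N) (hr₀ : 0 < r₀)
    {Ω : Set (EuclideanSpace ℝ (Fin N))} (hΩ : IsReifenbergFlat ε r₀ Ω)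
    (hbdd : Bornology.IsBounded Ω) :
    ∀ x ∈ Ω,
      volume (Metric.ball (0 : EuclideanSpace ℝ (Fin N)) 1) *
          ENNReal.ofReal ((r₀ / 20) ^ N) ≤
        volume (connectedComponentIn Ω x) := by
  obtain ⟨hne, hopen, hflat, -⟩ := hΩ
  exact component_volume_lower_bound' hε hε2 hε' hr₀ hne hopen hflat hbdd
end
end

section
/- Let X and Y be two (ε, r₀)-Reifenberg-flat domains in ℝ^N satisfying d_H(∂X, ∂Y) ≤ 2r₀. Then d_H(∂X, ∂Y) ≤ (4/(1−2ε)) · min{d_H(X, Y), d_H(ℝ^N∖X, ℝ^N∖Y)}. -/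
open Metric MeasureTheory Set Filter
open scoped ENNReal InnerProductSpace NNReal Topology

noncomputable section

namespace ReifenbergAux

variable {N : ℕ}

local notation "E" => EuclideanSpace ℝ (Fin N)

private lemma inner_isLinear (ν : E) : IsLinearMap ℝ (fun y : E => ⟪ν, y⟫_ℝ) :=
  ⟨fun u v => inner_add_right ν u v, fun c u => real_inner_smul_right ν u c⟩

private lemma cap_convex (ν w : E) (c σ : ℝ) :
    Convex ℝ ({y : E | c < ⟪ν, y - w⟫_ℝ} ∩ Metric.ball w σ) := by
  have h1 : {y : E | c < ⟪ν, y - w⟫_ℝ}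
      = {y : E | c + ⟪ν, w⟫_ℝ < ⟪ν, y⟫_ℝ} := by
    ext y
    simp only [Set.mem_setOf_eq, inner_sub_right]
    constructor <;> intro h <;> linarith
  rw [h1]
  exact (convex_halfSpace_gt (inner_isLinear ν) _).inter (convex_ball w σ)

private lemma subset_open_of_preconnected {X s : Set E}
    (hX : IsOpen X) (hs : IsPreconnected s) (hsF : ∀ y ∈ s, y ∉ frontier X)
    {z : E} (hz : z ∈ s) (hzX : z ∈ X) : s ⊆ X := by
  have hcov : s ⊆ X ∪ (closure X)ᶜ := by
    intro y hy
    by_contra hy'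
    simp only [Set.mem_union, Set.mem_compl_iff, not_or, not_not] at hy'
    exact hsF y hy (by rw [hX.frontier_eq]; exact ⟨hy'.2, hy'.1⟩)
  rcases hs.subset_or_subset hX isClosed_closure.isOpen_compl
      (disjoint_compl_right.mono_left subset_closure) hcov with h | h
  · exact h
  · exact absurd (h hz) (by simp [subset_closure hzX])

private lemma subset_compl_of_preconnected {X s : Set E}
    (hX : IsOpen X) (hs : IsPreconnected s) (hsF : ∀ y ∈ s, y ∉ frontier X)
    {z : E} (hz : z ∈ s) (hzX : z ∉ X) : s ⊆ Xᶜ := by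
  have hcov : s ⊆ X ∪ (closure X)ᶜ := by
    intro y hy
    by_contra hy'
    simp only [Set.mem_union, Set.mem_compl_iff, not_or, not_not] at hy'
    exact hsF y hy (by rw [hX.frontier_eq]; exact ⟨hy'.2, hy'.1⟩)
  rcases hs.subset_or_subset hX isClosed_closure.isOpen_compl
      (disjoint_compl_right.mono_left subset_closure) hcov with h | h
  · exact absurd (h hz) hzX
  · exact fun y hy hyX => (h hy) (subset_closure hyX)

private lemma exists_frontier_segment {X : Set E}
    (hX : IsOpen X) {z p : E} (hz : z ∈ X) (hp : p ∉ X) :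
    ∃ q ∈ segment ℝ z p, q ∈ frontier X := by
  by_contra h
  push_neg at h
  have hsub := subset_open_of_preconnected hX (convex_segment z p).isPreconnected h
    (left_mem_segment ℝ z p) hz
  exact hp (hsub (right_mem_segment ℝ z p))

private lemma dist_left_of_mem_segment {z p q : E}
    (h : q ∈ segment ℝ z p) : dist z q ≤ dist z p := by
  obtain ⟨a, b, ha, hb, hab, rfl⟩ := h
  have hb1 : a = 1 - b := by linarith
  subst hb1
  have hv : z - ((1 - b) • z + b • p) = b • (z - p) := by
    rw [smul_sub, sub_smul, one_smul]; abel
  rw [dist_eq_norm, dist_eq_norm, hv, norm_smul, Real.norm_eq_abs, abs_of_nonneg hb]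
  nlinarith [norm_nonneg (z - p)]

private lemma dist_ge_of_clearance_out {X : Set E}
    (hX : IsOpen X) {z : E} (hz : z ∉ X) {ρ : ℝ}
    (hq : ∀ q ∈ frontier X, ρ ≤ dist z q) : ∀ p ∈ X, ρ ≤ dist z p := by
  intro p hp
  obtain ⟨q, hqs, hqF⟩ := exists_frontier_segment hX hp hz
  have hq' : q ∈ segment ℝ z p := by rw [segment_symm]; exact hqs
  exact le_trans (hq q hqF) (dist_left_of_mem_segment hq')

private lemma dist_ge_of_clearance_in {X : Set E}
    (hX : IsOpen X) {z : E} (hz : z ∈ X) {ρ : ℝ}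
    (hq : ∀ q ∈ frontier X, ρ ≤ dist z q) : ∀ p, p ∉ X → ρ ≤ dist z p := by
  intro p hp
  obtain ⟨q, hqs, hqF⟩ := exists_frontier_segment hX hz hp
  exact le_trans (hq q hqF) (dist_left_of_mem_segment hqs)

/-- slab bound from the one-scale Hausdorff condition. -/
private lemma slab_of_hd {F : Set E} {w ν : E} {ε σ : ℝ}
    (hν : ‖ν‖ = 1) (hσ : 0 < σ) (hw : w ∈ F)
    (hhd : Metric.hausdorffDist (F ∩ Metric.ball w σ)
      ({y | ⟪ν, y - w⟫_ℝ = 0} ∩ Metric.ball w σ) ≤ ε * σ) :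
    ∀ a ∈ F ∩ Metric.ball w σ, |⟪ν, a - w⟫_ℝ| ≤ ε * σ := by
  intro a ha
  have hwmem : w ∈ {y : E | ⟪ν, y - w⟫_ℝ = 0} ∩ Metric.ball w σ := by
    constructor
    · simp
    · simpa using hσ
  have hne_t : ({y : E | ⟪ν, y - w⟫_ℝ = 0} ∩ Metric.ball w σ).Nonempty := ⟨w, hwmem⟩
  have hne_s : (F ∩ Metric.ball w σ).Nonempty := ⟨w, ⟨hw, by simpa using hσ⟩⟩
  have hfin : EMetric.hausdorffEdist (F ∩ Metric.ball w σ)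
      ({y | ⟪ν, y - w⟫_ℝ = 0} ∩ Metric.ball w σ) ≠ ⊤ :=
    Metric.hausdorffEdist_ne_top_of_nonempty_of_bounded hne_s hne_t
      (Metric.isBounded_ball.subset Set.inter_subset_right)
      (Metric.isBounded_ball.subset Set.inter_subset_right)
  have hinf : Metric.infDist a ({y | ⟪ν, y - w⟫_ℝ = 0} ∩ Metric.ball w σ) ≤ ε * σ :=
    le_trans (Metric.infDist_le_hausdorffDist_of_mem ha hfin) hhd
  refine le_of_forall_pos_le_add ?_
  intro δ hδ
  obtain ⟨q, hq, hdq⟩ := (Metric.infDist_lt_iff hne_t).1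
    (lt_of_le_of_lt hinf (show ε * σ < ε * σ + δ by linarith))
  have hq0 : ⟪ν, q - w⟫_ℝ = 0 := hq.1
  have hsplit : ⟪ν, a - w⟫_ℝ = ⟪ν, a - q⟫_ℝ + ⟪ν, q - w⟫_ℝ := by
    rw [← inner_add_right]
    congr 1
    abel
  rw [hsplit, hq0, add_zero]
  calc |⟪ν, a - q⟫_ℝ| ≤ ‖ν‖ * ‖a - q‖ := abs_real_inner_le_norm ν (a - q)
    _ = dist a q := by rw [hν, one_mul, dist_eq_norm]
    _ ≤ ε * σ + δ := le_of_lt hdq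

private lemma inner_shift (μ ν w : E) (t : ℝ) : ⟪μ, (w + t • ν) - w⟫_ℝ = t * ⟪μ, ν⟫_ℝ := by
  rw [add_sub_cancel_left, real_inner_smul_right]

private lemma dist_shift (w ν : E) (t : ℝ) : dist (w + t • ν) w = |t| * ‖ν‖ := by
  rw [dist_eq_norm, add_sub_cancel_left, norm_smul, Real.norm_eq_abs]

private lemma cap_avoids_frontier {X : Set E} {w ν : E} {ε σ : ℝ}
    (hslab : ∀ a ∈ frontier X ∩ Metric.ball w σ, |⟪ν, a - w⟫_ℝ| ≤ ε * σ)
    {μ : E} (hμ : μ = ν ∨ μ = -ν) :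
    ∀ y ∈ {y : E | ε * σ < ⟪μ, y - w⟫_ℝ} ∩ Metric.ball w σ, y ∉ frontier X := by
  intro y hy hyF
  have habs : |⟪ν, y - w⟫_ℝ| ≤ ε * σ := hslab y ⟨hyF, hy.2⟩
  have h2 : ⟪μ, y - w⟫_ℝ ≤ |⟪ν, y - w⟫_ℝ| := by
    rcases hμ with rfl | rfl
    · exact le_abs_self _
    · rw [inner_neg_left]
      exact neg_le_abs _
  have h3 : ε * σ < ⟪μ, y - w⟫_ℝ := hy.1
  linarith

/-- two-sided separation data at scale σ. -/
def ReifSep (ε : ℝ) (X : Set E) (w : E) (σ : ℝ) : Prop :=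
  ∃ ν : E, ‖ν‖ = 1 ∧
    (∀ a ∈ frontier X ∩ Metric.ball w σ, |⟪ν, a - w⟫_ℝ| ≤ ε * σ) ∧
    ({y : E | ε * σ < ⟪ν, y - w⟫_ℝ} ∩ Metric.ball w σ ⊆ X) ∧
    ({y : E | ε * σ < ⟪-ν, y - w⟫_ℝ} ∩ Metric.ball w σ ⊆ Xᶜ)

private lemma sep_base {ε r₀ : ℝ} {X : Set E}
    (hε : 0 < ε) (hε2 : ε < 1 / 2) (hr : 0 < r₀)
    (hX : IsReifenbergFlat ε r₀ X) {w : E} (hw : w ∈ frontier X) :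
    ReifSep ε X w r₀ := by
  obtain ⟨ν, hν, hhd, hcP, hcM⟩ := hX.2.2.2 w hw
  have hslab := slab_of_hd hν hr hw hhd
  have hνν : ⟪ν, ν⟫_ℝ = 1 := by
    rw [real_inner_self_eq_norm_mul_norm, hν]; norm_num
  set t : ℝ := (1 / 2 + ε) * r₀ with htdef
  have ht0 : 0 < t := by nlinarith
  have htr : t < r₀ := by nlinarith
  refine ⟨ν, hν, hslab, ?_, ?_⟩
  · -- upper cap
    have hzmem : w + t • ν ∈ {y : E | ε * r₀ < ⟪ν, y - w⟫_ℝ} ∩ Metric.ball w r₀ := by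
      constructor
      · show ε * r₀ < ⟪ν, (w + t • ν) - w⟫_ℝ
        rw [inner_shift, hνν]
        nlinarith
      · rw [Metric.mem_ball, dist_shift, hν, mul_one, abs_of_pos ht0]
        exact htr
    have hzX : w + t • ν ∈ X := by
      apply hcP
      constructor
      · show 2 * ε * r₀ ≤ ⟪ν, (w + t • ν) - w⟫_ℝ
        rw [inner_shift, hνν]
        nlinarith
      · rw [Metric.mem_ball, dist_shift, hν, mul_one, abs_of_pos ht0]
        exact htr
    exact subset_open_of_preconnected hX.2.1 (cap_convex ν w (ε * r₀) r₀).isPreconnected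
      (cap_avoids_frontier hslab (Or.inl rfl)) hzmem hzX
  · -- lower cap
    have hzmem : w + (-t) • ν ∈ {y : E | ε * r₀ < ⟪-ν, y - w⟫_ℝ} ∩ Metric.ball w r₀ := by
      constructor
      · show ε * r₀ < ⟪-ν, (w + (-t) • ν) - w⟫_ℝ
        rw [inner_shift, inner_neg_left, hνν]
        nlinarith
      · rw [Metric.mem_ball, dist_shift, hν, mul_one, abs_neg, abs_of_pos ht0]
        exact htr
    have hzX : w + (-t) • ν ∉ X := by
      apply hcM
      constructor
      · show ⟪ν, (w + (-t) • ν) - w⟫_ℝ ≤ -(2 * ε * r₀)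
        rw [inner_shift, hνν]
        nlinarith
      · rw [Metric.mem_ball, dist_shift, hν, mul_one, abs_neg, abs_of_pos ht0]
        exact htr
    exact subset_compl_of_preconnected hX.2.1 (cap_convex (-ν) w (ε * r₀) r₀).isPreconnected
      (cap_avoids_frontier hslab (Or.inr rfl)) hzmem hzX

private lemma sep_step {ε r₀ : ℝ} {X : Set E}
    (hε : 0 < ε) (hε2 : ε < 1 / 2) (hr : 0 < r₀) (hX : IsReifenbergFlat ε r₀ X)
    {w : E} (hw : w ∈ frontier X) {σ σ' : ℝ} (h0' : 0 < σ') (h1' : σ' ≤ r₀)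
    (hss : σ' ≤ σ) (hs2 : σ ≤ 5 / 4 * σ') (hsep : ReifSep ε X w σ) : ReifSep ε X w σ' := by
  obtain ⟨ν, hν, hslab, hSP, hSM⟩ := hsep
  obtain ⟨ν', hν', hhd'⟩ := hX.2.2.1 w hw σ' h0' h1'
  have hslab' := slab_of_hd hν' h0' hw hhd'
  have hσ0 : 0 < σ := lt_of_lt_of_le h0' hss
  -- orient ν' towards ν
  set μ : E := if 0 ≤ ⟪ν, ν'⟫_ℝ then ν' else -ν' with hμdef
  have hμ1 : ‖μ‖ = 1 := by
    rw [hμdef]; split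
    · exact hν'
    · rw [norm_neg]; exact hν'
  have hcnn : 0 ≤ ⟪ν, μ⟫_ℝ := by
    rw [hμdef]; split
    · assumption
    · next h => rw [inner_neg_right]; linarith [not_le.1 h]
  have hslabμ : ∀ a ∈ frontier X ∩ Metric.ball w σ', |⟪μ, a - w⟫_ℝ| ≤ ε * σ' := by
    intro a ha
    have h1 := hslab' a ha
    rw [hμdef]; split
    · exact h1
    · rw [inner_neg_left, abs_neg]; exact h1
  have hs2n : ‖ν + μ‖ ^ 2 = 2 + 2 * ⟪ν, μ⟫_ℝ := by
    rw [norm_add_sq_real, hν, hμ1]; ring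
  have hspos : 0 < ‖ν + μ‖ := by nlinarith [norm_nonneg (ν + μ)]
  have hsinner : ⟪ν, ν + μ⟫_ℝ = ‖ν + μ‖ ^ 2 / 2 := by
    rw [inner_add_right, real_inner_self_eq_norm_mul_norm, hν, hs2n]; ring
  have hsinner' : ⟪μ, ν + μ⟫_ℝ = ‖ν + μ‖ ^ 2 / 2 := by
    rw [inner_add_right, real_inner_self_eq_norm_mul_norm, hμ1, real_inner_comm, hs2n]; ring
  set c : ℝ := 15 / 16 * σ' * ‖ν + μ‖⁻¹ with hcdef
  have hc0 : 0 < c := by positivity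
  have hcnorm : c * ‖ν + μ‖ = 15 / 16 * σ' := by
    rw [hcdef]
    field_simp
  have h14 : 7 / 5 ≤ ‖ν + μ‖ := by
    nlinarith [hs2n, hcnn, norm_nonneg (ν + μ), sq_nonneg (‖ν + μ‖ - 7 / 5)]
  have hkey : ε * σ < 15 / 16 * σ' * ‖ν + μ‖⁻¹ * (‖ν + μ‖ ^ 2 / 2) := by
    have hq : 15 / 16 * σ' * ‖ν + μ‖⁻¹ * (‖ν + μ‖ ^ 2 / 2) = 15 / 32 * σ' * ‖ν + μ‖ := by
      field_simp
      ring
    rw [hq]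
    have e1 : ε * σ ≤ ε * (5 / 4 * σ') := mul_le_mul_of_nonneg_left hs2 hε.le
    have e2 : ε * (5 / 4 * σ') < 1 / 2 * (5 / 4 * σ') :=
      mul_lt_mul_of_pos_right hε2 (by linarith)
    have e3 := mul_le_mul_of_nonneg_left h14 (show (0:ℝ) ≤ 15 / 32 * σ' by positivity)
    linarith
  have hballmem : ∀ t : ℝ, |t| = c → w + t • (ν + μ) ∈ Metric.ball w σ' := by
    intro t ht
    rw [Metric.mem_ball, dist_shift, ht, hcnorm]
    linarith
  refine ⟨μ, hμ1, hslabμ, ?_, ?_⟩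
  · -- upper cap at σ'
    have hvP : w + c • (ν + μ) ∈ {y : E | ε * σ < ⟪ν, y - w⟫_ℝ} ∩ Metric.ball w σ := by
      constructor
      · show ε * σ < ⟪ν, (w + c • (ν + μ)) - w⟫_ℝ
        rw [inner_shift, hsinner]
        exact hkey
      · rw [Metric.mem_ball, dist_shift, abs_of_pos hc0, hcnorm]
        linarith
    have hvX : w + c • (ν + μ) ∈ X := hSP hvP
    have hvP' : w + c • (ν + μ) ∈ {y : E | ε * σ' < ⟪μ, y - w⟫_ℝ} ∩ Metric.ball w σ' := by
      constructor
      · show ε * σ' < ⟪μ, (w + c • (ν + μ)) - w⟫_ℝ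
        rw [inner_shift, hsinner']
        calc ε * σ' ≤ ε * σ := mul_le_mul_of_nonneg_left hss hε.le
          _ < _ := hkey
      · exact hballmem c (abs_of_pos hc0)
    exact subset_open_of_preconnected hX.2.1 (cap_convex μ w (ε * σ') σ').isPreconnected
      (cap_avoids_frontier hslabμ (Or.inl rfl)) hvP' hvX
  · -- lower cap at σ'
    have hvM : w + (-c) • (ν + μ) ∈ {y : E | ε * σ < ⟪-ν, y - w⟫_ℝ} ∩ Metric.ball w σ := by
      constructor
      · show ε * σ < ⟪-ν, (w + (-c) • (ν + μ)) - w⟫_ℝ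
        rw [inner_shift, inner_neg_left, hsinner]
        have : (-c) * -(‖ν + μ‖ ^ 2 / 2) = c * (‖ν + μ‖ ^ 2 / 2) := by ring
        rw [this]
        exact hkey
      · rw [Metric.mem_ball, dist_shift, abs_neg, abs_of_pos hc0, hcnorm]
        linarith
    have hvX : w + (-c) • (ν + μ) ∉ X := hSM hvM
    have hvM' : w + (-c) • (ν + μ) ∈ {y : E | ε * σ' < ⟪-μ, y - w⟫_ℝ} ∩ Metric.ball w σ' := by
      constructor
      · show ε * σ' < ⟪-μ, (w + (-c) • (ν + μ)) - w⟫_ℝ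
        rw [inner_shift, inner_neg_left, hsinner']
        have : (-c) * -(‖ν + μ‖ ^ 2 / 2) = c * (‖ν + μ‖ ^ 2 / 2) := by ring
        rw [this]
        calc ε * σ' ≤ ε * σ := mul_le_mul_of_nonneg_left hss hε.le
          _ < _ := hkey
      · exact hballmem (-c) (by rw [abs_neg]; exact abs_of_pos hc0)
    exact subset_compl_of_preconnected hX.2.1 (cap_convex (-μ) w (ε * σ') σ').isPreconnected
      (cap_avoids_frontier hslabμ (Or.inr rfl)) hvM' hvX

private lemma sep_all {ε r₀ : ℝ} {X : Set E}
    (hε : 0 < ε) (hε2 : ε < 1 / 2) (hr : 0 < r₀)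
    (hX : IsReifenbergFlat ε r₀ X) {w : E} (hw : w ∈ frontier X) :
    ∀ σ : ℝ, 0 < σ → σ ≤ r₀ → ReifSep ε X w σ := by
  have key : ∀ k : ℕ, ∀ σ : ℝ, 0 < σ → σ ≤ r₀ → r₀ * (4 / 5) ^ k ≤ σ → ReifSep ε X w σ := by
    intro k
    induction k with
    | zero =>
      intro σ h0 h1 h2
      simp only [pow_zero, mul_one] at h2
      have hσr : σ = r₀ := le_antisymm h1 h2
      rw [hσr]
      exact sep_base hε hε2 hr hX hw
    | succ k ih =>
      intro σ h0 h1 h2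
      by_cases hc : r₀ * (4 / 5) ^ k ≤ σ
      · exact ih σ h0 h1 hc
      · push_neg at hc
        have hσb0 : 0 < min (5 / 4 * σ) r₀ := lt_min (by linarith) hr
        have hσb1 : min (5 / 4 * σ) r₀ ≤ r₀ := min_le_right _ _
        have hlow : r₀ * (4 / 5) ^ k ≤ min (5 / 4 * σ) r₀ := by
          refine le_min ?_ ?_
          · have h2' : r₀ * (4 / 5) ^ (k + 1) ≤ σ := h2
            have heq : r₀ * (4 / 5) ^ k = 5 / 4 * (r₀ * (4 / 5) ^ (k + 1)) := by ring
            rw [heq]; linarith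
          · have hp1 : (4 / 5 : ℝ) ^ k ≤ 1 := pow_le_one₀ (by norm_num) (by norm_num)
            nlinarith
        have hsepb := ih _ hσb0 hσb1 hlow
        exact sep_step hε hε2 hr hX hw h0 h1 (le_min (by linarith) h1)
          (min_le_left _ _) hsepb
  intro σ h0 h1
  obtain ⟨k, hk⟩ := exists_pow_lt_of_lt_one (show (0 : ℝ) < σ / r₀ from div_pos h0 hr)
    (show (4 : ℝ) / 5 < 1 by norm_num)
  refine key k σ h0 h1 (le_of_lt ?_)
  have h3 : r₀ * (4 / 5) ^ k < r₀ * (σ / r₀) := by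
    exact mul_lt_mul_of_pos_left hk hr
  rwa [mul_div_cancel₀ σ (ne_of_gt hr)] at h3

private lemma core_s15 {ε r₀ : ℝ} {X Y : Set E}
    (hε : 0 < ε) (hε2 : ε < 1 / 2) (hr : 0 < r₀)
    (hX : IsReifenbergFlat ε r₀ X) (hY : IsReifenbergFlat ε r₀ Y)
    {x : E} (hx : x ∈ frontier X) {d : ℝ} (hd : 0 < d) (hd2 : d ≤ 2 * r₀)
    (hball : ∀ q ∈ frontier Y, d ≤ dist x q) :
    ENNReal.ofReal ((1 - 2 * ε) / 4 * d) ≤ EMetric.hausdorffEdist X Y ∧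
      ENNReal.ofReal ((1 - 2 * ε) / 4 * d) ≤ EMetric.hausdorffEdist Xᶜ Yᶜ := by
  have hXopen : IsOpen X := hX.2.1
  have hYopen : IsOpen Y := hY.2.1
  have hσ0 : 0 < min d r₀ := lt_min hd hr
  have hσr : min d r₀ ≤ r₀ := min_le_right _ _
  have hσd : min d r₀ ≤ d := min_le_left _ _
  have hσhalf : d / 2 ≤ min d r₀ := le_min (by linarith) (by linarith)
  set σ : ℝ := min d r₀ with hσdef
  obtain ⟨ν, hν, hslab, hSP, hSM⟩ := sep_all hε hε2 hr hX hx σ hσ0 hσr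
  have hνν : ⟪ν, ν⟫_ℝ = 1 := by
    rw [real_inner_self_eq_norm_mul_norm, hν]; norm_num
  set t : ℝ := (1 + ε) / 2 * σ with htdef
  have ht0 : 0 < t := by nlinarith
  have htσ : t < σ := by nlinarith
  set ρ : ℝ := (1 - ε) / 2 * σ with hρdef
  have hρd : (1 - 2 * ε) / 4 * d ≤ ρ := by nlinarith
  -- clearance from the frontier of X for deep points
  have hclear : ∀ cc : ℝ, |cc| = t → ∀ q ∈ frontier X, ρ ≤ dist (x + cc • ν) q := by
    intro cc hcc q hq
    by_cases hqb : q ∈ Metric.ball x σ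
    · have hqs : |⟪ν, q - x⟫_ℝ| ≤ ε * σ := hslab q ⟨hq, hqb⟩
      have hin : ⟪ν, (x + cc • ν) - q⟫_ℝ = cc - ⟪ν, q - x⟫_ℝ := by
        have hsplit : (x + cc • ν) - q = cc • ν - (q - x) := by abel
        rw [hsplit, inner_sub_right, real_inner_smul_right, hνν, mul_one]
      have habs : |cc - ⟪ν, q - x⟫_ℝ| ≤ ‖(x + cc • ν) - q‖ := by
        rw [← hin]
        calc |⟪ν, (x + cc • ν) - q⟫_ℝ| ≤ ‖ν‖ * ‖(x + cc • ν) - q‖ := abs_real_inner_le_norm _ _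
          _ = ‖(x + cc • ν) - q‖ := by rw [hν, one_mul]
      have hlow : ρ ≤ |cc - ⟪ν, q - x⟫_ℝ| := by
        have h1 : |cc| - |⟪ν, q - x⟫_ℝ| ≤ |cc - ⟪ν, q - x⟫_ℝ| := abs_sub_abs_le_abs_sub _ _
        rw [hcc] at h1
        have : ρ ≤ t - ε * σ := by nlinarith
        linarith [abs_nonneg (⟪ν, q - x⟫_ℝ)]
      rw [dist_eq_norm]
      linarith
    · have hqout : σ ≤ dist q x := le_of_not_gt (by simpa [Metric.mem_ball] using hqb)
      have htri : dist q x ≤ dist q (x + cc • ν) + dist (x + cc • ν) x := dist_triangle _ _ _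
      have hdx : dist (x + cc • ν) x = t := by
        rw [dist_shift, hcc, hν, mul_one]
      rw [dist_comm]
      have : ρ ≤ σ - t := by nlinarith
      linarith
  have hF2ball : ∀ y ∈ Metric.ball x d, y ∉ frontier Y := by
    intro y hy hyF
    have h1 := hball y hyF
    rw [Metric.mem_ball] at hy
    rw [dist_comm] at h1
    linarith
  by_cases hYb : (Metric.ball x d ∩ Y).Nonempty
  · -- ball ⊆ Y
    obtain ⟨p, hpb, hpY⟩ := hYb
    have hBY : Metric.ball x d ⊆ Y :=
      subset_open_of_preconnected hYopen (convex_ball x d).isPreconnected hF2ball hpb hpY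
    constructor
    · -- bound for d_H(X, Y) via deep exterior point in Y
      have hzmem : x + (-t) • ν ∈ {y : E | ε * σ < ⟪-ν, y - x⟫_ℝ} ∩ Metric.ball x σ := by
        constructor
        · show ε * σ < ⟪-ν, (x + (-t) • ν) - x⟫_ℝ
          rw [inner_shift, inner_neg_left, hνν]
          nlinarith
        · rw [Metric.mem_ball, dist_shift, hν, mul_one, abs_neg, abs_of_pos ht0]
          exact htσ
      have hzXc : x + (-t) • ν ∉ X := hSM hzmem
      have hzY : x + (-t) • ν ∈ Y := by
        apply hBY
        rw [Metric.mem_ball, dist_shift, hν, mul_one, abs_neg, abs_of_pos ht0]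
        linarith
      have hdistz : ∀ p' ∈ X, ρ ≤ dist (x + (-t) • ν) p' :=
        dist_ge_of_clearance_out hXopen hzXc
          (hclear (-t) (by rw [abs_neg]; exact abs_of_pos ht0))
      have hinf : ENNReal.ofReal ρ ≤ EMetric.infEdist (x + (-t) • ν) X := by
        refine EMetric.le_infEdist.2 ?_
        intro p' hp'
        rw [edist_dist]
        exact ENNReal.ofReal_le_ofReal (hdistz p' hp')
      calc ENNReal.ofReal ((1 - 2 * ε) / 4 * d) ≤ ENNReal.ofReal ρ :=
            ENNReal.ofReal_le_ofReal hρd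
        _ ≤ EMetric.infEdist (x + (-t) • ν) X := hinf
        _ ≤ EMetric.hausdorffEdist Y X := EMetric.infEdist_le_hausdorffEdist_of_mem hzY
        _ = EMetric.hausdorffEdist X Y := EMetric.hausdorffEdist_comm
    · -- bound for d_H(Xᶜ, Yᶜ): x itself is far from Yᶜ
      have hxXc : x ∈ Xᶜ := by
        rw [hXopen.frontier_eq] at hx
        exact hx.2
      have hinf : ENNReal.ofReal d ≤ EMetric.infEdist x Yᶜ := by
        refine EMetric.le_infEdist.2 ?_
        intro q hq
        rw [edist_dist]
        apply ENNReal.ofReal_le_ofReal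
        by_contra hlt
        push_neg at hlt
        exact hq (hBY (by rw [Metric.mem_ball, dist_comm]; exact hlt))
      calc ENNReal.ofReal ((1 - 2 * ε) / 4 * d) ≤ ENNReal.ofReal d :=
            ENNReal.ofReal_le_ofReal (by nlinarith)
        _ ≤ EMetric.infEdist x Yᶜ := hinf
        _ ≤ EMetric.hausdorffEdist Xᶜ Yᶜ := EMetric.infEdist_le_hausdorffEdist_of_mem hxXc
  · -- ball ∩ Y = ∅
    have hBYc : ∀ y ∈ Metric.ball x d, y ∉ Y := by
      intro y hy hyY
      exact hYb ⟨y, hy, hyY⟩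
    constructor
    · -- x ∈ closure X is far from Y
      have hxcl : x ∈ closure X := frontier_subset_closure hx
      have hinf : ENNReal.ofReal d ≤ EMetric.infEdist x Y := by
        refine EMetric.le_infEdist.2 ?_
        intro q hq
        rw [edist_dist]
        apply ENNReal.ofReal_le_ofReal
        by_contra hlt
        push_neg at hlt
        exact hBYc q (by rw [Metric.mem_ball, dist_comm]; exact hlt) hq
      have hzero : EMetric.infEdist x X = 0 := EMetric.mem_closure_iff_infEdist_zero.1 hxcl
      have hchain : EMetric.infEdist x Y ≤ EMetric.hausdorffEdist X Y := by
        calc EMetric.infEdist x Y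
            ≤ EMetric.infEdist x X + EMetric.hausdorffEdist X Y :=
              EMetric.infEdist_le_infEdist_add_hausdorffEdist
          _ = EMetric.hausdorffEdist X Y := by rw [hzero, zero_add]
      calc ENNReal.ofReal ((1 - 2 * ε) / 4 * d) ≤ ENNReal.ofReal d :=
            ENNReal.ofReal_le_ofReal (by nlinarith)
        _ ≤ EMetric.infEdist x Y := hinf
        _ ≤ EMetric.hausdorffEdist X Y := hchain
    · -- deep interior point of X lies in Yᶜ, far from Xᶜ
      have hzmem : x + t • ν ∈ {y : E | ε * σ < ⟪ν, y - x⟫_ℝ} ∩ Metric.ball x σ := by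
        constructor
        · show ε * σ < ⟪ν, (x + t • ν) - x⟫_ℝ
          rw [inner_shift, hνν]
          nlinarith
        · rw [Metric.mem_ball, dist_shift, hν, mul_one, abs_of_pos ht0]
          exact htσ
      have hzX : x + t • ν ∈ X := hSP hzmem
      have hzYc : x + t • ν ∈ Yᶜ := by
        apply hBYc
        rw [Metric.mem_ball, dist_shift, hν, mul_one, abs_of_pos ht0]
        linarith
      have hdistz : ∀ p', p' ∉ X → ρ ≤ dist (x + t • ν) p' :=
        dist_ge_of_clearance_in hXopen hzX (hclear t (abs_of_pos ht0))
      have hinf : ENNReal.ofReal ρ ≤ EMetric.infEdist (x + t • ν) Xᶜ := by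
        refine EMetric.le_infEdist.2 ?_
        intro q hq
        rw [edist_dist]
        exact ENNReal.ofReal_le_ofReal (hdistz q hq)
      calc ENNReal.ofReal ((1 - 2 * ε) / 4 * d) ≤ ENNReal.ofReal ρ :=
            ENNReal.ofReal_le_ofReal hρd
        _ ≤ EMetric.infEdist (x + t • ν) Xᶜ := hinf
        _ ≤ EMetric.hausdorffEdist Yᶜ Xᶜ := EMetric.infEdist_le_hausdorffEdist_of_mem hzYc
        _ = EMetric.hausdorffEdist Xᶜ Yᶜ := EMetric.hausdorffEdist_comm

private lemma pointwise {ε r₀ : ℝ} {X Y : Set E}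
    (hε : 0 < ε) (hε2 : ε < 1 / 2) (hr : 0 < r₀)
    (hX : IsReifenbergFlat ε r₀ X) (hY : IsReifenbergFlat ε r₀ Y)
    (hclose : EMetric.hausdorffEdist (frontier X) (frontier Y) ≤ ENNReal.ofReal (2 * r₀))
    {x : E} (hx : x ∈ frontier X) :
    EMetric.infEdist x (frontier Y) ≤ ENNReal.ofReal (4 / (1 - 2 * ε)) *
      min (EMetric.hausdorffEdist X Y) (EMetric.hausdorffEdist Xᶜ Yᶜ) := by
  have h12 : (0 : ℝ) < 1 - 2 * ε := by linarith
  have hIle : EMetric.infEdist x (frontier Y) ≤ ENNReal.ofReal (2 * r₀) :=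
    le_trans (EMetric.infEdist_le_hausdorffEdist_of_mem hx) hclose
  have hItop : EMetric.infEdist x (frontier Y) ≠ ⊤ :=
    ne_top_of_le_ne_top ENNReal.ofReal_ne_top hIle
  rcases eq_or_ne (EMetric.infEdist x (frontier Y)) 0 with h0 | h0
  · rw [h0]
    exact zero_le
  · set d : ℝ := (EMetric.infEdist x (frontier Y)).toReal with hddef
    have hd0 : 0 < d := ENNReal.toReal_pos h0 hItop
    have hd2 : d ≤ 2 * r₀ := ENNReal.toReal_le_of_le_ofReal (by linarith) hIle
    have hball : ∀ q ∈ frontier Y, d ≤ dist x q := by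
      intro q hq
      have h1 : EMetric.infEdist x (frontier Y) ≤ edist x q :=
        EMetric.infEdist_le_edist_of_mem hq
      rw [edist_dist] at h1
      exact ENNReal.toReal_le_of_le_ofReal dist_nonneg h1
    obtain ⟨hA, hB⟩ := core_s15 hε hε2 hr hX hY hx hd0 hd2 hball
    have hmin : ENNReal.ofReal ((1 - 2 * ε) / 4 * d) ≤
        min (EMetric.hausdorffEdist X Y) (EMetric.hausdorffEdist Xᶜ Yᶜ) := le_min hA hB
    have hId : EMetric.infEdist x (frontier Y) = ENNReal.ofReal d :=
      (ENNReal.ofReal_toReal hItop).symm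
    rw [hId]
    have hfact : ENNReal.ofReal d =
        ENNReal.ofReal (4 / (1 - 2 * ε)) * ENNReal.ofReal ((1 - 2 * ε) / 4 * d) := by
      rw [← ENNReal.ofReal_mul (by positivity)]
      congr 1
      field_simp
    rw [hfact]
    exact mul_le_mul_right hmin _

end ReifenbergAux

/-- **Lemma (the boundary distance is controlled by the distances of the domains and of
their complements).** Let `X`, `Y` be `(ε, r₀)`-Reifenberg-flat domains of `ℝ^N` with
`d_H(∂X, ∂Y) ≤ 2 r₀`. Then
`d_H(∂X, ∂Y) ≤ (4 / (1 - 2ε)) * min (d_H(X,Y)) (d_H(Xᶜ, Yᶜ))`. -/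
theorem hausdorff_boundary_control {N : ℕ} {ε r₀ : ℝ}
    (hε : 0 < ε) (hε2 : ε < 1 / 2) (hr₀ : 0 < r₀)
    {X Y : Set (EuclideanSpace ℝ (Fin N))}
    (hX : IsReifenbergFlat ε r₀ X) (hY : IsReifenbergFlat ε r₀ Y)
    (hclose : EMetric.hausdorffEdist (frontier X) (frontier Y) ≤ ENNReal.ofReal (2 * r₀)) :
    EMetric.hausdorffEdist (frontier X) (frontier Y) ≤
      ENNReal.ofReal (4 / (1 - 2 * ε)) *
        min (EMetric.hausdorffEdist X Y) (EMetric.hausdorffEdist Xᶜ Yᶜ) := by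
  refine EMetric.hausdorffEdist_le_of_infEdist ?_ ?_
  · intro x hx
    exact ReifenbergAux.pointwise hε hε2 hr₀ hX hY hclose hx
  · intro y hy
    have h2 := ReifenbergAux.pointwise hε hε2 hr₀ hY hX
      (by exact EMetric.hausdorffEdist_comm.trans_le hclose) hy
    rw [EMetric.hausdorffEdist, EMetric.hausdorffEdist_comm (s := Y) (t := X),
      EMetric.hausdorffEdist_comm (s := Yᶜ) (t := Xᶜ)] at h2
    exact h2
end
end

section
/- Let X and Y be two (ε, r₀)-Reifenberg-flat domains in ℝ^N satisfying d_H(X, Y) ≤ 4r₀. Then d_H(X, Y) ≤ (8/(1−2ε)) · (|X △ Y|/ω_N)^{1/N}, where |X △ Y| is the Lebesgue measure of the symmetric difference of X and Y and ω_N is the Lebesgue measure of the unit ball in ℝ^N. -/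
open Metric MeasureTheory Set Filter
open scoped ENNReal InnerProductSpace NNReal Topology

noncomputable section

variable {N : ℕ}

local notation "E" => EuclideanSpace ℝ (Fin N)

section helpers

lemma frontier_abs_inner_le {Ω : Set E} {z ν : E} {ρ b : ℝ} (hρ : 0 < ρ) (hν : ‖ν‖ = 1)
    (hH : Metric.hausdorffDist (frontier Ω ∩ Metric.ball z ρ)
      ({y | ⟪ν, y - z⟫_ℝ = 0} ∩ Metric.ball z ρ) ≤ b)
    {w : E} (hw : w ∈ frontier Ω) (hwb : w ∈ Metric.ball z ρ) :
    |⟪ν, w - z⟫_ℝ| ≤ b := by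
  have hzmem : z ∈ {y : E | ⟪ν, y - z⟫_ℝ = 0} ∩ Metric.ball z ρ :=
    ⟨by simp, mem_ball_self hρ⟩
  have hne : ({y : E | ⟪ν, y - z⟫_ℝ = 0} ∩ Metric.ball z ρ).Nonempty := ⟨z, hzmem⟩
  have hfin : EMetric.hausdorffEdist (frontier Ω ∩ Metric.ball z ρ)
      ({y : E | ⟪ν, y - z⟫_ℝ = 0} ∩ Metric.ball z ρ) ≠ ⊤ :=
    Metric.hausdorffEdist_ne_top_of_nonempty_of_bounded ⟨w, hw, hwb⟩ hne
      (Metric.isBounded_ball.subset inter_subset_right)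
      (Metric.isBounded_ball.subset inter_subset_right)
  have hinf : Metric.infDist w ({y : E | ⟪ν, y - z⟫_ℝ = 0} ∩ Metric.ball z ρ) ≤ b :=
    le_trans (Metric.infDist_le_hausdorffDist_of_mem
      (show w ∈ frontier Ω ∩ Metric.ball z ρ from ⟨hw, hwb⟩) hfin) hH
  by_contra hcon
  push_neg at hcon
  have hlt : Metric.infDist w ({y : E | ⟪ν, y - z⟫_ℝ = 0} ∩ Metric.ball z ρ)
      < |⟪ν, w - z⟫_ℝ| := lt_of_le_of_lt hinf hcon
  obtain ⟨q, hq, hqd⟩ := (Metric.infDist_lt_iff hne).1 hlt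
  have h1 : ⟪ν, w - z⟫_ℝ = ⟪ν, w - q⟫_ℝ + ⟪ν, q - z⟫_ℝ := by
    rw [← inner_add_right]; congr 1; abel
  have h2 : |⟪ν, w - z⟫_ℝ| ≤ ‖w - q‖ := by
    rw [h1, hq.1, add_zero]
    calc |⟪ν, w - q⟫_ℝ| ≤ ‖ν‖ * ‖w - q‖ := abs_real_inner_le_norm ν (w - q)
    _ = ‖w - q‖ := by rw [hν, one_mul]
  rw [← dist_eq_norm] at h2
  exact absurd (lt_of_le_of_lt h2 hqd) (lt_irrefl _)

lemma convex_subset_of_meets {Ω S : Set E} (hΩ : IsOpen Ω) (hconv : Convex ℝ S)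
    (hdisj : ∀ y ∈ S, y ∉ frontier Ω) (hmeet : (S ∩ Ω).Nonempty) : S ⊆ Ω := by
  have hsub : S ⊆ Ω ∪ interior Ωᶜ := by
    intro y hy
    by_cases hyΩ : y ∈ Ω
    · exact Or.inl hyΩ
    · right
      rw [interior_compl]
      intro hycl
      exact hdisj y hy ⟨hycl, by rwa [hΩ.interior_eq]⟩
  refine IsPreconnected.subset_left_of_subset_union hΩ isOpen_interior ?_ hsub hmeet
    hconv.isPreconnected
  rw [disjoint_left]
  intro a ha ha'
  exact (interior_subset ha' : a ∈ Ωᶜ) ha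

lemma ball_subset_cap {z ν : E} (hν : ‖ν‖ = 1) {t s ρ a : ℝ} (ht : 0 ≤ t)
    (hts : a ≤ t - s) (htρ : t + s ≤ ρ) :
    Metric.ball (z + t • ν) s ⊆ {y : E | a < ⟪ν, y - z⟫_ℝ} ∩ Metric.ball z ρ := by
  intro q hq
  rw [mem_ball, dist_eq_norm] at hq
  set p := z + t • ν with hp
  have hqz : q - z = (q - p) + t • ν := by rw [hp]; abel
  have hip : ⟪ν, q - z⟫_ℝ = ⟪ν, q - p⟫_ℝ + t := by
    rw [hqz, inner_add_right, real_inner_smul_right, real_inner_self_eq_norm_sq, hν]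
    ring
  have habs : |⟪ν, q - p⟫_ℝ| ≤ ‖q - p‖ := by
    calc |⟪ν, q - p⟫_ℝ| ≤ ‖ν‖ * ‖q - p‖ := abs_real_inner_le_norm ν (q - p)
    _ = ‖q - p‖ := by rw [hν, one_mul]
  constructor
  · have hlow : -(‖q - p‖) ≤ ⟪ν, q - p⟫_ℝ := neg_le_of_abs_le habs
    simp only [Set.mem_setOf_eq]
    linarith
  · rw [mem_ball, dist_eq_norm]
    calc ‖q - z‖ = ‖(q - p) + t • ν‖ := by rw [hqz]
    _ ≤ ‖q - p‖ + ‖t • ν‖ := norm_add_le _ _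
    _ = ‖q - p‖ + t := by rw [norm_smul, hν, mul_one, Real.norm_eq_abs, abs_of_nonneg ht]
    _ < s + t := by linarith
    _ ≤ ρ := by linarith

lemma convex_inner_gt (ν z : E) (a : ℝ) : Convex ℝ {y : E | a < ⟪ν, y - z⟫_ℝ} := by
  have hlin : IsLinearMap ℝ (fun y : E => ⟪ν, y⟫_ℝ) :=
    ⟨fun x y => inner_add_right ν x y, fun c x => real_inner_smul_right ν x c⟩
  have hset : {y : E | a < ⟪ν, y - z⟫_ℝ} = {y : E | a + ⟪ν, z⟫_ℝ < ⟪ν, y⟫_ℝ} := by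
    ext y
    simp only [Set.mem_setOf_eq, inner_sub_right]
    constructor <;> intro h <;> linarith
  rw [hset]
  exact convex_halfSpace_gt hlin _

lemma norm_smul_sq (t : ℝ) (u : E) : ‖t • u‖ ^ 2 = t ^ 2 * ‖u‖ ^ 2 := by
  rw [norm_smul, mul_pow, Real.norm_eq_abs, sq_abs]

lemma inner_base_pt (ν z : E) (t : ℝ) (hν : ‖ν‖ = 1) :
    ⟪ν, (z + t • ν) - z⟫_ℝ = t := by
  rw [add_sub_cancel_left, real_inner_smul_right, real_inner_self_eq_norm_sq, hν]
  ring

end helpers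

set_option maxHeartbeats 1000000 in
/-- Half-space containment propagates down through scales `(5/6)^k * r₀`. -/
lemma reif_halfspace {ε r₀ : ℝ} (hε : 0 < ε) (hε2 : ε < 1 / 2) (hr₀ : 0 < r₀)
    {Ω : Set E} (hΩ : IsReifenbergFlat ε r₀ Ω) {z : E} (hz : z ∈ frontier Ω) (k : ℕ) :
    ∃ ν : E, ‖ν‖ = 1 ∧
      {y : E | ε * ((5/6) ^ k * r₀) < ⟪ν, y - z⟫_ℝ} ∩ Metric.ball z ((5/6) ^ k * r₀) ⊆ Ω := by
  obtain ⟨hne, hopen, hflat, hsep⟩ := hΩ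
  induction k with
  | zero =>
    obtain ⟨ν₀, hν₀, hH, hplus, _hminus⟩ := hsep z hz
    refine ⟨ν₀, hν₀, ?_⟩
    simp only [pow_zero, one_mul]
    apply convex_subset_of_meets hopen ((convex_inner_gt ν₀ z _).inter (convex_ball z r₀))
    · intro y hy hyf
      have h1 := frontier_abs_inner_le hr₀ hν₀ hH hyf hy.2
      have h2 : ε * r₀ < ⟪ν₀, y - z⟫_ℝ := hy.1
      have h3 : ⟪ν₀, y - z⟫_ℝ ≤ |⟪ν₀, y - z⟫_ℝ| := le_abs_self _
      linarith
    · refine ⟨z + ((1 + 2*ε)/2 * r₀) • ν₀, ⟨?_, ?_⟩, ?_⟩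
      · show ε * r₀ < ⟪ν₀, (z + ((1 + 2*ε)/2 * r₀) • ν₀) - z⟫_ℝ
        rw [inner_base_pt ν₀ z _ hν₀]
        nlinarith
      · rw [mem_ball, dist_eq_norm, add_sub_cancel_left, norm_smul, hν₀, mul_one,
          Real.norm_eq_abs, abs_of_pos (by nlinarith : (0:ℝ) < (1 + 2*ε)/2 * r₀)]
        nlinarith
      · apply hplus
        constructor
        · show 2 * ε * r₀ ≤ ⟪ν₀, (z + ((1 + 2*ε)/2 * r₀) • ν₀) - z⟫_ℝ
          rw [inner_base_pt ν₀ z _ hν₀]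
          nlinarith
        · rw [mem_ball, dist_eq_norm, add_sub_cancel_left, norm_smul, hν₀, mul_one,
            Real.norm_eq_abs, abs_of_pos (by nlinarith : (0:ℝ) < (1 + 2*ε)/2 * r₀)]
          nlinarith
  | succ k ih =>
    obtain ⟨ν', hν', hsub'⟩ := ih
    set ρ' : ℝ := (5/6) ^ k * r₀ with hρ'def
    have hρ'pos : 0 < ρ' := by positivity
    set ρ : ℝ := (5/6) ^ (k+1) * r₀ with hρdef
    have hρρ' : ρ = (5/6) * ρ' := by rw [hρdef, hρ'def, pow_succ]; ring
    have hρpos : 0 < ρ := by positivity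
    have hρle : ρ ≤ r₀ := by
      rw [hρdef]
      nlinarith [pow_le_one₀ (by norm_num : (0:ℝ) ≤ 5/6) (by norm_num : (5:ℝ)/6 ≤ 1) (n := k+1)]
    obtain ⟨ν, hν, hH⟩ := hflat z hz ρ hρpos hρle
    have key : ∃ y : E, y ∈ Ω ∧ y ∈ Metric.ball z ρ ∧ ε * ρ < |⟪ν, y - z⟫_ℝ| := by
      set c : ℝ := ⟪ν', ν⟫_ℝ with hcdef
      have hcle : |c| ≤ 1 := by
        calc |c| ≤ ‖ν'‖ * ‖ν‖ := abs_real_inner_le_norm _ _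
        _ = 1 := by rw [hν', hν, one_mul]
      by_cases hv : ν - c • ν' = 0
      · -- ν = c • ν' with |c| = 1
        have hc1 : |c| = 1 := by
          have hν'' : ν = c • ν' := by rwa [sub_eq_zero] at hv
          have : ‖ν‖ = |c| * ‖ν'‖ := by rw [hν'', norm_smul, Real.norm_eq_abs]
          rw [hν, hν', mul_one] at this
          exact this.symm
        refine ⟨z + ((3/5) * ρ) • ν', ?_, ?_, ?_⟩
        · apply hsub'
          refine ⟨?_, ?_⟩
          · show ε * ρ' < ⟪ν', (z + ((3/5) * ρ) • ν') - z⟫_ℝ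
            rw [inner_base_pt ν' z _ hν']
            rw [hρρ']
            nlinarith
          · rw [mem_ball, dist_eq_norm, add_sub_cancel_left, norm_smul, hν', mul_one,
              Real.norm_eq_abs, abs_of_pos (by nlinarith : (0:ℝ) < (3/5) * ρ)]
            rw [hρρ']
            nlinarith
        · rw [mem_ball, dist_eq_norm, add_sub_cancel_left, norm_smul, hν', mul_one,
            Real.norm_eq_abs, abs_of_pos (by nlinarith : (0:ℝ) < (3/5) * ρ)]
          nlinarith
        · have hinner : ⟪ν, (z + ((3/5) * ρ) • ν') - z⟫_ℝ = (3/5) * ρ * c := by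
            rw [add_sub_cancel_left, real_inner_smul_right]
            have : ⟪ν, ν'⟫_ℝ = c := by rw [hcdef, real_inner_comm]
            rw [this]
          rw [hinner, abs_mul, abs_of_pos (by nlinarith : (0:ℝ) < (3/5) * ρ), hc1, mul_one]
          nlinarith
      · -- generic case
        set v : E := ν - c • ν' with hvdef
        have hν'v : ⟪ν', v⟫_ℝ = 0 := by
          rw [hvdef, inner_sub_right, real_inner_smul_right, real_inner_self_eq_norm_sq, hν']
          ring
        have hνν' : ⟪ν, ν'⟫_ℝ = c := by rw [hcdef, real_inner_comm]
        have hνv : ⟪ν, v⟫_ℝ = 1 - c ^ 2 := by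
          rw [hvdef, inner_sub_right, real_inner_smul_right, hνν',
            real_inner_self_eq_norm_sq, hν]
          ring
        have hs2 : ‖v‖ ^ 2 = 1 - c ^ 2 := by
          rw [← real_inner_self_eq_norm_sq]
          nth_rewrite 1 [hvdef]
          rw [inner_sub_left, real_inner_smul_left, hν'v, hνv]
          ring
        set s : ℝ := ‖v‖ with hsdef
        have hspos : 0 < s := norm_pos_iff.2 hv
        have hsle : s ≤ 1 := by nlinarith
        set w : E := s⁻¹ • v with hwdef
        have hνw : ⟪ν, w⟫_ℝ = s := by
          rw [hwdef, real_inner_smul_right, hνv, ← hs2, hsdef]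
          field_simp
        have hν'w : ⟪ν', w⟫_ℝ = 0 := by rw [hwdef, real_inner_smul_right, hν'v, mul_zero]
        have hw1 : ‖w‖ = 1 := by
          rw [hwdef, norm_smul, Real.norm_eq_abs, abs_of_pos (inv_pos.2 hspos), ← hsdef]
          field_simp
        have hσex : ∃ σ : ℝ, σ ^ 2 = 1 ∧ 1 ≤ |c + σ * s| := by
          have hcc : c ^ 2 ≤ |c| := by nlinarith [sq_abs c, abs_nonneg c]
          have hss : s ^ 2 ≤ s := by nlinarith
          have hsum : 1 ≤ |c| + s := by nlinarith
          rcases le_or_gt 0 c with h | h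
          · refine ⟨1, by norm_num, ?_⟩
            rw [one_mul, abs_of_nonneg (by linarith : (0:ℝ) ≤ c + s)]
            rw [abs_of_nonneg h] at hsum
            linarith
          · refine ⟨-1, by norm_num, ?_⟩
            rw [neg_one_mul, ← sub_eq_add_neg, abs_of_neg (by linarith : c - s < 0)]
            rw [abs_of_neg h] at hsum
            linarith
        obtain ⟨σ, hσsq, habs1⟩ := hσex
        set u : E := ν' + σ • w with hudef
        have hu2 : ‖u‖ ^ 2 = 2 := by
          rw [hudef, norm_add_sq_real, real_inner_smul_right, hν'w, norm_smul,
            Real.norm_eq_abs, hν', mul_pow, sq_abs, hσsq, hw1]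
          norm_num
        have hν'u : ⟪ν', u⟫_ℝ = 1 := by
          rw [hudef, inner_add_right, real_inner_smul_right, hν'w,
            real_inner_self_eq_norm_sq, hν']
          ring
        have hνu : ⟪ν, u⟫_ℝ = c + σ * s := by
          rw [hudef, inner_add_right, real_inner_smul_right, hνw, hνν']
        set y : E := z + ((3/5) * ρ) • u with hydef
        have hyz : y - z = ((3/5) * ρ) • u := by rw [hydef, add_sub_cancel_left]
        have hynorm2 : ‖y - z‖ ^ 2 = (3/5 * ρ) ^ 2 * 2 := by
          rw [hyz, norm_smul_sq, hu2]
        have hyρ : ‖y - z‖ < ρ := by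
          have h2 : ‖y - z‖ ^ 2 < ρ ^ 2 := by rw [hynorm2]; nlinarith
          exact lt_of_pow_lt_pow_left₀ 2 hρpos.le h2
        have hν'y : ⟪ν', y - z⟫_ℝ = (3/5) * ρ := by
          rw [hyz, real_inner_smul_right, hν'u, mul_one]
        have hνy : ⟪ν, y - z⟫_ℝ = (3/5) * ρ * (c + σ * s) := by
          rw [hyz, real_inner_smul_right, hνu]
        refine ⟨y, ?_, ?_, ?_⟩
        · apply hsub'
          refine ⟨?_, ?_⟩
          · show ε * ρ' < ⟪ν', y - z⟫_ℝ
            rw [hν'y, hρρ']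
            nlinarith
          · rw [mem_ball, dist_eq_norm]
            calc ‖y - z‖ < ρ := hyρ
            _ ≤ ρ' := by rw [hρρ']; nlinarith
        · rw [mem_ball, dist_eq_norm]; exact hyρ
        · rw [hνy, abs_mul]
          have h35 : |(3:ℝ)/5 * ρ| = 3/5 * ρ := abs_of_pos (by linarith)
          rw [h35]
          have hstep : 3/5 * ρ * 1 ≤ 3/5 * ρ * |c + σ * s| := by
            apply mul_le_mul_of_nonneg_left habs1 (by linarith)
          rw [mul_one] at hstep
          have hερ : ε * ρ < 3/5 * ρ := by nlinarith
          linarith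
    obtain ⟨y, hyΩ, hyb, hyin⟩ := key
    have main : ∀ νf : E, ‖νf‖ = 1 → ε * ρ < ⟪νf, y - z⟫_ℝ →
        (∀ w' ∈ frontier Ω, w' ∈ Metric.ball z ρ → |⟪νf, w' - z⟫_ℝ| ≤ ε * ρ) →
        ∃ ν'' : E, ‖ν''‖ = 1 ∧
          {y' : E | ε * ((5/6) ^ (k+1) * r₀) < ⟪ν'', y' - z⟫_ℝ} ∩
            Metric.ball z ((5/6) ^ (k+1) * r₀) ⊆ Ω := by
      intro νf h1 h2 h3
      refine ⟨νf, h1, ?_⟩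
      rw [← hρdef]
      apply convex_subset_of_meets hopen ((convex_inner_gt νf z _).inter (convex_ball z ρ))
      · intro w' hw' hwf'
        have ha := h3 w' hwf' hw'.2
        have hb : ε * ρ < ⟪νf, w' - z⟫_ℝ := hw'.1
        have hc : ⟪νf, w' - z⟫_ℝ ≤ |⟪νf, w' - z⟫_ℝ| := le_abs_self _
        linarith
      · exact ⟨y, ⟨h2, hyb⟩, hyΩ⟩
    rcases le_or_gt 0 ⟪ν, y - z⟫_ℝ with h | h
    · exact main ν hν (by rwa [abs_of_nonneg h] at hyin)
        (fun w' hw' hwb' => frontier_abs_inner_le hρpos hν hH hw' hwb')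
    · refine main (-ν) (by simp [hν]) ?_ ?_
      · rw [abs_of_neg h] at hyin
        rw [inner_neg_left]
        linarith
      · intro w' hw' hwb'
        rw [inner_neg_left, abs_neg]
        exact frontier_abs_inner_le hρpos hν hH hw' hwb'

/-- At every boundary point and every scale `ρ ≤ r₀`, the domain contains a
definite ball inside `B(z, ρ)`. -/
lemma reif_ball {ε r₀ : ℝ} (hε : 0 < ε) (hε2 : ε < 1 / 2) (hr₀ : 0 < r₀)
    {Ω : Set E} (hΩ : IsReifenbergFlat ε r₀ Ω) {z : E} (hz : z ∈ frontier Ω)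
    {ρ : ℝ} (h0 : 0 < ρ) (hρ : ρ ≤ r₀) :
    ∃ p : E, Metric.ball p (5 * (1 - ε) / 12 * ρ) ⊆ Ω ∩ Metric.ball z ρ := by
  classical
  have hex : ∃ k : ℕ, (5/6 : ℝ) ^ k * r₀ ≤ ρ := by
    obtain ⟨k, hk⟩ := exists_pow_lt_of_lt_one (show (0:ℝ) < ρ / r₀ by positivity)
      (by norm_num : (5:ℝ)/6 < 1)
    exact ⟨k, le_of_lt ((lt_div_iff₀ hr₀).1 hk)⟩
  set k := Nat.find hex with hkdef
  have hk : (5/6:ℝ) ^ k * r₀ ≤ ρ := Nat.find_spec hex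
  set ρk : ℝ := (5/6:ℝ) ^ k * r₀ with hρkdef
  have hρkpos : 0 < ρk := by positivity
  have hklow : (5/6:ℝ) * ρ ≤ ρk := by
    rcases Nat.eq_zero_or_pos k with h0k | h0k
    · rw [hρkdef, h0k, pow_zero, one_mul]
      linarith
    · obtain ⟨j, hj⟩ := Nat.exists_eq_succ_of_ne_zero h0k.ne'
      have hnot : ¬ ((5/6:ℝ) ^ j * r₀ ≤ ρ) := Nat.find_min hex (by omega)
      push_neg at hnot
      rw [hρkdef, hj, pow_succ]
      nlinarith
  obtain ⟨ν, hν, hsub⟩ := reif_halfspace hε hε2 hr₀ hΩ hz k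
  rw [← hρkdef] at hsub
  refine ⟨z + ((1 + ε)/2 * ρk) • ν, ?_⟩
  have hball : Metric.ball (z + ((1 + ε)/2 * ρk) • ν) ((1 - ε)/2 * ρk) ⊆
      {y : E | ε * ρk < ⟪ν, y - z⟫_ℝ} ∩ Metric.ball z ρk := by
    apply ball_subset_cap hν (by nlinarith) (by nlinarith) (by nlinarith)
  intro q hq
  have hq1 : q ∈ Metric.ball (z + ((1 + ε)/2 * ρk) • ν) ((1 - ε)/2 * ρk) :=
    Metric.ball_subset_ball (by nlinarith) hq
  have hq2 := hball hq1
  exact ⟨hsub ⟨hq2.1, hq2.2⟩, Metric.ball_subset_ball hk hq2.2⟩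

/-- One-sided estimate: if a point of `X` is at distance `≥ D` from `Y`,
then `D` is controlled by the volume of the symmetric difference. -/
lemma main_est {ε r₀ : ℝ} (hε : 0 < ε) (hε2 : ε < 1 / 2) (hr₀ : 0 < r₀) (hN : N ≠ 0)
    {X Y : Set E} (hX : IsReifenbergFlat ε r₀ X)
    {x : E} (hx : x ∈ X) {D : ℝ} (hD0 : 0 < D) (hD4 : D ≤ 4 * r₀)
    (hdisj : ∀ y ∈ Y, ¬ dist x y < D) :
    ENNReal.ofReal D ≤ ENNReal.ofReal (8 / (1 - 2 * ε)) *
      ((volume (X \ Y ∪ Y \ X) / volume (Metric.ball (0:E) 1)) ^ (1 / (N:ℝ))) := by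
  have h2ε : 0 < 1 - 2 * ε := by linarith
  have key : ∃ (p : E) (ρs : ℝ), 0 < ρs ∧ Metric.ball p ρs ⊆ X \ Y ∧
      D * (1 - 2 * ε) ≤ 8 * ρs := by
    set ρ₀ : ℝ := min (D/2) r₀ with hρ₀def
    have hρ₀pos : 0 < ρ₀ := lt_min (by linarith) hr₀
    have hρ₀D : ρ₀ ≤ D / 2 := min_le_left _ _
    have hρ₀r : ρ₀ ≤ r₀ := min_le_right _ _
    by_cases hbx : Metric.ball x ρ₀ ⊆ X
    · refine ⟨x, ρ₀, hρ₀pos, ?_, ?_⟩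
      · intro q hq
        refine ⟨hbx hq, fun hqY => hdisj q hqY ?_⟩
        rw [mem_ball] at hq
        rw [dist_comm]
        linarith
      · rcases le_total (D/2) r₀ with h | h
        · rw [hρ₀def, min_eq_left h]; nlinarith
        · rw [hρ₀def, min_eq_right h]; nlinarith
    · obtain ⟨y, hyb, hyX⟩ := not_subset.1 hbx
      have hseg : ∃ z ∈ frontier X, dist z x < ρ₀ := by
        by_contra hno
        push_neg at hno
        have hsub2 : segment ℝ x y ⊆ X := by
          apply convex_subset_of_meets hX.2.1 (convex_segment x y) ?_
            ⟨x, left_mem_segment ℝ x y, hx⟩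
          intro q hq hqf
          have hqcb : q ∈ Metric.closedBall x (dist y x) :=
            (convex_closedBall x (dist y x)).segment_subset
              (Metric.mem_closedBall_self dist_nonneg) (Metric.mem_closedBall.2 le_rfl) hq
          rw [Metric.mem_closedBall] at hqcb
          rw [mem_ball] at hyb
          exact absurd (lt_of_le_of_lt hqcb hyb) (not_lt.2 (hno q hqf))
        exact hyX (hsub2 (right_mem_segment ℝ x y))
      obtain ⟨z, hzf, hzx⟩ := hseg
      by_cases hDr : D < 2 * r₀
      · have hρ₀eq : ρ₀ = D / 2 := min_eq_left (by linarith)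
        obtain ⟨p, hp⟩ := reif_ball hε hε2 hr₀ hX hzf (show (0:ℝ) < D/2 by linarith)
          (by linarith)
        refine ⟨p, 5 * (1 - ε) / 12 * (D/2), by nlinarith, ?_, by nlinarith⟩
        intro q hq
        have hq2 := hp hq
        refine ⟨hq2.1, fun hqY => hdisj q hqY ?_⟩
        have hqz : dist q z < D / 2 := hq2.2
        calc dist x q ≤ dist x z + dist z q := dist_triangle x z q
        _ = dist z x + dist q z := by rw [dist_comm x z, dist_comm z q]
        _ < ρ₀ + D/2 := by linarith
        _ ≤ D := by rw [hρ₀eq]; linarith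
      · push_neg at hDr
        have hρ₀eq : ρ₀ = r₀ := min_eq_right (by linarith)
        obtain ⟨ν₀, hν₀, hH, hplus, _hminus⟩ := hX.2.2.2 z hzf
        have hcap : Metric.ball (z + ((1 + 2*ε)/2 * r₀) • ν₀) ((1 - 2*ε)/2 * r₀) ⊆
            {y' : E | 2 * ε * r₀ < ⟪ν₀, y' - z⟫_ℝ} ∩ Metric.ball z r₀ :=
          ball_subset_cap hν₀ (by nlinarith) (by nlinarith) (by nlinarith)
        refine ⟨z + ((1 + 2*ε)/2 * r₀) • ν₀, (1 - 2*ε)/2 * r₀, by nlinarith, ?_, by nlinarith⟩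
        intro q hq
        have hq2 := hcap hq
        refine ⟨hplus ⟨show 2 * ε * r₀ ≤ ⟪ν₀, q - z⟫_ℝ from le_of_lt hq2.1, hq2.2⟩,
          fun hqY => hdisj q hqY ?_⟩
        have hqz : dist q z < r₀ := hq2.2
        calc dist x q ≤ dist x z + dist z q := dist_triangle x z q
        _ = dist z x + dist q z := by rw [dist_comm x z, dist_comm z q]
        _ < ρ₀ + r₀ := by linarith
        _ ≤ D := by rw [hρ₀eq]; linarith
  obtain ⟨p, ρs, hρs, hsub, hineq⟩ := key
  set volB := volume (Metric.ball (0:E) 1) with hvolBdef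
  have hvolB0 : volB ≠ 0 := (measure_ball_pos volume 0 one_pos).ne'
  have hvolBtop : volB ≠ ⊤ := measure_ball_lt_top.ne
  have hballvol : volume (Metric.ball p ρs) = ENNReal.ofReal (ρs ^ N) * volB := by
    rw [Measure.addHaar_ball_of_pos volume p hρs, finrank_euclideanSpace_fin]
  have h1 : ENNReal.ofReal (ρs ^ N) ≤ volume (X \ Y ∪ Y \ X) / volB := by
    rw [ENNReal.le_div_iff_mul_le (Or.inl hvolB0) (Or.inl hvolBtop)]
    calc ENNReal.ofReal (ρs ^ N) * volB = volume (Metric.ball p ρs) := hballvol.symm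
    _ ≤ volume (X \ Y ∪ Y \ X) := measure_mono (hsub.trans subset_union_left)
  have h2 : ENNReal.ofReal ρs ≤ (volume (X \ Y ∪ Y \ X) / volB) ^ (1/(N:ℝ)) := by
    have heq : ENNReal.ofReal ρs = (ENNReal.ofReal (ρs ^ N)) ^ (1/(N:ℝ)) := by
      rw [ENNReal.ofReal_pow hρs.le]
      rw [← ENNReal.rpow_natCast (ENNReal.ofReal ρs) N, ← ENNReal.rpow_mul]
      rw [mul_one_div_cancel (by exact_mod_cast hN : (N:ℝ) ≠ 0), ENNReal.rpow_one]
    rw [heq]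
    exact ENNReal.rpow_le_rpow h1 (by positivity)
  calc ENNReal.ofReal D ≤ ENNReal.ofReal (8 / (1 - 2*ε) * ρs) := by
        apply ENNReal.ofReal_le_ofReal
        rw [div_mul_eq_mul_div, le_div_iff₀ h2ε]
        linarith
  _ = ENNReal.ofReal (8 / (1 - 2*ε)) * ENNReal.ofReal ρs :=
        ENNReal.ofReal_mul (by positivity)
  _ ≤ _ := mul_le_mul_right h2 _

/-- **Lemma (the Hausdorff distance is controlled by the measure of the symmetric
difference).** Let `X`, `Y` be `(ε, r₀)`-Reifenberg-flat domains of `ℝ^N` with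
`d_H(X, Y) ≤ 4 r₀`. Then `d_H(X, Y) ≤ (8 / (1 - 2ε)) * (|X △ Y| / ω_N)^{1/N}`. -/
theorem hausdorff_controlled_by_symmDiff {N : ℕ} {ε r₀ : ℝ}
    (hε : 0 < ε) (hε2 : ε < 1 / 2) (hr₀ : 0 < r₀)
    {X Y : Set (EuclideanSpace ℝ (Fin N))}
    (hX : IsReifenbergFlat ε r₀ X) (hY : IsReifenbergFlat ε r₀ Y)
    (hclose : EMetric.hausdorffEdist X Y ≤ ENNReal.ofReal (4 * r₀)) :
    EMetric.hausdorffEdist X Y ≤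
      ENNReal.ofReal (8 / (1 - 2 * ε)) *
        (volume ((X \ Y) ∪ (Y \ X)) /
            volume (Metric.ball (0 : EuclideanSpace ℝ (Fin N)) 1)) ^ (1 / (N : ℝ)) := by
  by_cases hN : N = 0
  · subst hN
    have hsing : ∀ a b : EuclideanSpace ℝ (Fin 0), a = b := fun a b =>
      PiLp.ext fun i => i.elim0
    have hXu : X = Set.univ := Set.eq_univ_iff_forall.2 fun t => by
      obtain ⟨a, ha⟩ := hX.1
      rwa [hsing t a]
    have hYu : Y = Set.univ := Set.eq_univ_iff_forall.2 fun t => by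
      obtain ⟨a, ha⟩ := hY.1
      rwa [hsing t a]
    rw [hXu, hYu, EMetric.hausdorffEdist, Metric.hausdorffEDist_self]
    exact zero_le'
  · by_contra hcon
    push_neg at hcon
    obtain ⟨D, _hD0', h1, h2⟩ := ENNReal.lt_iff_exists_real_btwn.1 hcon
    have hD0 : 0 < D := by
      by_contra hD
      push_neg at hD
      rw [ENNReal.ofReal_eq_zero.2 hD] at h1
      exact absurd h1 (not_lt.2 zero_le')
    have hD4 : D ≤ 4 * r₀ := by
      have hlt := lt_of_lt_of_le h2 hclose
      rw [ENNReal.ofReal_lt_ofReal_iff (by positivity)] at hlt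
      linarith
    rw [EMetric.hausdorffEdist, Metric.hausdorffEDist_def, lt_sup_iff] at h2
    rcases h2 with h2 | h2
    · rw [lt_iSup_iff] at h2
      obtain ⟨x, hx2⟩ := h2
      rw [lt_iSup_iff] at hx2
      obtain ⟨hxX, hlt⟩ := hx2
      have hdisj : ∀ y ∈ Y, ¬ dist x y < D := by
        intro y hy hd
        have hle := EMetric.infEdist_le_edist_of_mem (x := x) hy
        have h3 : ENNReal.ofReal D < edist x y := lt_of_lt_of_le hlt hle
        rw [edist_dist, ENNReal.ofReal_lt_ofReal_iff_of_nonneg hD0.le] at h3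
        linarith
      exact absurd (main_est hε hε2 hr₀ hN hX hxX hD0 hD4 hdisj) (not_le.2 h1)
    · rw [lt_iSup_iff] at h2
      obtain ⟨y, hy2⟩ := h2
      rw [lt_iSup_iff] at hy2
      obtain ⟨hyY, hlt⟩ := hy2
      have hdisj : ∀ x' ∈ X, ¬ dist y x' < D := by
        intro x' hx' hd
        have hle := EMetric.infEdist_le_edist_of_mem (x := y) hx'
        have h3 : ENNReal.ofReal D < edist y x' := lt_of_lt_of_le hlt hle
        rw [edist_dist, ENNReal.ofReal_lt_ofReal_iff_of_nonneg hD0.le] at h3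
        linarith
      have hest := main_est hε hε2 hr₀ hN hY hyY hD0 hD4 hdisj
      rw [Set.union_comm (Y \ X) (X \ Y)] at hest
      exact absurd hest (not_le.2 h1)
end
end
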